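/- arXiv:2403.00583 — 11 statements merged into one kernel-verified Lean document; each statement's English description precedes it below -/
import Mathlib

section
/- (Frobenius) If n is a positive divisor of the order of a finite group G, then the number of elements x ∈ G satisfying x^n = 1 is a multiple of n. -/
open Finset MulAction

section Helpers

variable {G : Type*} [Group G]

/-- exponent arithmetic modulo `q` when `x ^ q = 1`. -/
lemma pow_eq_pow_of_modEq' {x : G} {q m m' : ℕ} (hx : x ^ q = 1) (h : m ≡ m' [MOD q]) :
    x ^ m = x ^ m' := by
  have key : ∀ k : ℕ, x ^ k = x ^ (k % q) := by
    intro k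
    conv_lhs => rw [← Nat.div_add_mod k q]
    rw [pow_add, pow_mul, hx, one_pow, one_mul]
  rw [key m, key m']
  exact congrArg (x ^ ·) h

lemma conj_pow'' (a x : G) (n : ℕ) : (a * x * a⁻¹) ^ n = a * x ^ n * a⁻¹ := by
  induction n with
  | zero => simp
  | succ k ih => rw [pow_succ, pow_succ, ih]; group

lemma pow_dvd_of_pow_eq_one {x : G} {q k : ℕ} (hx : x ^ q = 1) (h : q ∣ k) : x ^ k = 1 := by
  obtain ⟨c, rfl⟩ := h
  rw [pow_mul, hx, one_pow]

end Helpers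

section OrbitSum

/-- Summing an invariant function over an invariant finset is divisible by `c`
provided each orbit contributes a multiple of `c`. -/
lemma orbitsum {α M : Type*} [Group M] [Finite M] [MulAction M α] [DecidableEq α]
    (c : ℕ) (φ : α → ℕ) (hφ : ∀ (m : M) (x : α), φ (m • x) = φ x) (T : Finset α)
    (hT : ∀ (m : M) (x : α), x ∈ T → m • x ∈ T)
    (hc : ∀ x ∈ T, c ∣ Nat.card (orbit M x) * φ x) : c ∣ ∑ x ∈ T, φ x := by
  classical
  induction T using Finset.strongInduction with
  | _ T ih =>
    rcases T.eq_empty_or_nonempty with rfl | ⟨x₀, hx₀⟩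
    · simp
    · have hfin : (orbit M x₀).Finite := Set.finite_range _
      set O : Finset α := hfin.toFinset with hO
      have hOmem : ∀ y, y ∈ O ↔ ∃ m : M, m • x₀ = y := by
        intro y; rw [hO, Set.Finite.mem_toFinset]; exact MulAction.mem_orbit_iff
      have hOsub : O ⊆ T := by
        intro y hy
        obtain ⟨m, rfl⟩ := (hOmem y).1 hy
        exact hT m x₀ hx₀
      have hx₀O : x₀ ∈ O := (hOmem x₀).2 ⟨1, one_smul _ _⟩
      have hcard : O.card = Nat.card (orbit M x₀) := by
        letI := hfin.fintype
        rw [hO, Set.Finite.card_toFinset, Nat.card_eq_fintype_card]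
      have hOsum : ∑ y ∈ O, φ y = Nat.card (orbit M x₀) * φ x₀ := by
        rw [← hcard]
        rw [Finset.sum_congr rfl (fun y hy => ?_), Finset.sum_const, smul_eq_mul]
        obtain ⟨m, rfl⟩ := (hOmem y).1 hy
        exact hφ m x₀
      have h1 : c ∣ ∑ y ∈ O, φ y := by rw [hOsum]; exact hc x₀ hx₀
      have hsplit : ∑ y ∈ T \ O, φ y + ∑ y ∈ O, φ y = ∑ y ∈ T, φ y :=
        Finset.sum_sdiff hOsub
      have hss : T \ O ⊂ T :=
        Finset.sdiff_ssubset hOsub ⟨x₀, hx₀O⟩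
      have h2 : c ∣ ∑ y ∈ T \ O, φ y := by
        refine ih _ hss (fun m x hx => ?_) (fun x hx => hc x (Finset.mem_sdiff.1 hx).1)
        rcases Finset.mem_sdiff.1 hx with ⟨hxT, hxO⟩
        refine Finset.mem_sdiff.2 ⟨hT m x hxT, fun hmem => hxO ?_⟩
        obtain ⟨k, hk⟩ := (hOmem _).1 hmem
        refine (hOmem x).2 ⟨m⁻¹ * k, ?_⟩
        rw [mul_smul, hk, inv_smul_smul]
      rw [← hsplit]
      exact Nat.dvd_add h2 h1

end OrbitSum


section Split
variable {G : Type*} [Group G] [Fintype G] [DecidableEq G]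

open scoped Classical in
/-- CRT fibration: solutions of `x^(s*t) = 1` fibered over `w = x^N` with `w^t = 1`. -/
lemma key_split {x : G} (s t : ℕ) (hst : Nat.Coprime s t) :
    (univ.filter fun x : G => x ^ (s * t) = 1).card
      = ∑ w ∈ univ.filter (fun w : G => w ^ t = 1),
          (univ.filter fun u : G => u ∈ Subgroup.centralizer {w} ∧ u ^ s = 1).card := by
  obtain ⟨N, hNs, hNt⟩ := Nat.chineseRemainder hst 0 1
  obtain ⟨M, hMs, hMt⟩ := Nat.chineseRemainder hst 1 0
  have hsN : s ∣ N := (Nat.modEq_zero_iff_dvd).1 hNs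
  have htM : t ∣ M := (Nat.modEq_zero_iff_dvd).1 hMt
  have hMN : M + N ≡ 1 [MOD s * t] := by
    refine (Nat.modEq_and_modEq_iff_modEq_mul hst).1 ⟨?_, ?_⟩
    · simpa using hMs.add hNs
    · simpa using hMt.add hNt
  refine Finset.card_eq_sum_card_fiberwise (f := fun x : G => x ^ N) (fun x hx => ?_) |>.trans
    (Finset.sum_congr rfl (fun w hw => ?_))
  · simp only [Finset.mem_coe, mem_filter] at hx
    simp only [Finset.mem_coe, mem_filter]
    refine ⟨mem_univ _, ?_⟩
    rw [← pow_mul]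
    exact pow_dvd_of_pow_eq_one hx.2 (mul_dvd_mul_right hsN t)
  · rw [mem_filter] at hw
    have hwt : w ^ t = 1 := hw.2
    refine Finset.card_bij' (fun x _ => x ^ M) (fun u _ => u * w) ?_ ?_ ?_ ?_
    · -- i maps into target
      intro x hx
      rw [mem_filter, mem_filter] at hx
      obtain ⟨⟨-, hx1⟩, hx2⟩ := hx
      rw [mem_filter]
      refine ⟨mem_univ _, ?_, ?_⟩
      · rw [Subgroup.mem_centralizer_iff]
        intro h hh
        rw [Set.mem_singleton_iff] at hh
        subst hh
        rw [← hx2, pow_mul_comm]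
      · rw [← pow_mul]
        obtain ⟨c, hc⟩ := htM
        have : s * t ∣ M * s := ⟨c, by rw [hc]; ring⟩
        exact pow_dvd_of_pow_eq_one hx1 this
    · -- j maps into fiber
      intro u hu
      rw [mem_filter] at hu
      obtain ⟨-, hu1, hu2⟩ := hu
      have hcw : Commute w u := Subgroup.mem_centralizer_iff.1 hu1 w rfl
      have hcuw : Commute u w := hcw.symm
      rw [mem_filter, mem_filter]
      refine ⟨⟨mem_univ _, ?_⟩, ?_⟩
      · rw [hcuw.mul_pow, pow_mul, hu2, one_pow, one_mul, mul_comm s t, pow_mul, hwt, one_pow]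
      · rw [hcuw.mul_pow, pow_dvd_of_pow_eq_one hu2 hsN, one_mul,
          pow_eq_pow_of_modEq' hwt hNt, pow_one]
    · -- left inverse
      intro x hx
      rw [mem_filter, mem_filter] at hx
      obtain ⟨⟨-, hx1⟩, hx2⟩ := hx
      rw [← hx2, ← pow_add, pow_eq_pow_of_modEq' hx1 hMN, pow_one]
    · -- right inverse
      intro u hu
      rw [mem_filter] at hu
      obtain ⟨-, hu1, hu2⟩ := hu
      have hcw : Commute w u := Subgroup.mem_centralizer_iff.1 hu1 w rfl
      rw [hcw.symm.mul_pow, pow_eq_pow_of_modEq' hu2 hMs, pow_one,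
        pow_dvd_of_pow_eq_one hwt htM, mul_one]

open scoped Classical in
lemma cntC_eq (w : G) (s : ℕ) :
    (univ.filter fun u : G => u ∈ Subgroup.centralizer {w} ∧ u ^ s = 1).card
      = Nat.card {u : ↥(Subgroup.centralizer {w}) // u ^ s = 1} := by
  rw [Nat.card_eq_fintype_card, ← Fintype.card_subtype]
  refine Fintype.card_congr ?_ |>.symm
  refine ⟨fun u => ⟨u.1.1, u.1.2, ?_⟩, fun u => ⟨⟨u.1, u.2.1⟩, ?_⟩, fun u => ?_, fun u => ?_⟩
  · have := congrArg (Subtype.val) u.2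
    simpa using this
  · ext
    simpa using u.2.2
  · ext; rfl
  · ext; rfl

open scoped Classical in
lemma sol_conj (g w : G) (s : ℕ) :
    (univ.filter fun u : G => u ∈ Subgroup.centralizer {g * w * g⁻¹} ∧ u ^ s = 1).card
      = (univ.filter fun u : G => u ∈ Subgroup.centralizer {w} ∧ u ^ s = 1).card := by
  refine Finset.card_bij' (fun u _ => g⁻¹ * u * g) (fun u _ => g * u * g⁻¹) ?_ ?_ ?_ ?_
  · intro u hu
    rw [mem_filter] at hu
    obtain ⟨-, hu1, hu2⟩ := hu
    have h1 : (g * w * g⁻¹) * u = u * (g * w * g⁻¹) :=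
      Subgroup.mem_centralizer_iff.1 hu1 _ rfl
    rw [mem_filter]
    refine ⟨mem_univ _, ?_, ?_⟩
    · rw [Subgroup.mem_centralizer_iff]
      intro h hh
      rw [Set.mem_singleton_iff] at hh
      subst hh
      have := congrArg (fun z => g⁻¹ * z * g) h1
      simp only [mul_assoc, inv_mul_cancel_left, inv_mul_cancel, mul_one] at this ⊢
      rw [← mul_assoc] at this ⊢
      simpa [mul_assoc] using this
    · have hcp := conj_pow'' g⁻¹ u s
      rw [inv_inv] at hcp
      rw [hcp, hu2, mul_one, inv_mul_cancel]
  · intro u hu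
    rw [mem_filter] at hu
    obtain ⟨-, hu1, hu2⟩ := hu
    have h1 : w * u = u * w := Subgroup.mem_centralizer_iff.1 hu1 _ rfl
    rw [mem_filter]
    refine ⟨mem_univ _, ?_, ?_⟩
    · rw [Subgroup.mem_centralizer_iff]
      intro h hh
      rw [Set.mem_singleton_iff] at hh
      subst hh
      have := congrArg (fun z => g * z * g⁻¹) h1
      simp only [mul_assoc] at this ⊢
      simpa [mul_assoc, inv_mul_cancel_left] using this
    · rw [conj_pow'', hu2, mul_one, mul_inv_cancel]
  · intro u _
    simp [mul_assoc]
  · intro u _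
    simp [mul_assoc]

end Split

section Theta
variable {G : Type*} [Group G] [Fintype G] [DecidableEq G]

open scoped Classical in
/-- The number of solutions of `x ^ (p^v) = 1` of order `> p^b` is divisible by `p^b`. -/
lemma theta_dvd (p : ℕ) (hp : p.Prime) {v b : ℕ} (hbv : b < v) :
    p ^ b ∣ (univ.filter fun x : G => x ^ p ^ v = 1 ∧ ¬ x ^ p ^ b = 1).card := by
  set q := p ^ v with hq
  have hq1 : 1 < q := Nat.one_lt_pow (by omega) hp.one_lt
  haveI : NeZero q := ⟨by omega⟩
  haveI : Fact (1 < q) := ⟨hq1⟩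
  have hdvd' : p ^ (b + 1) ∣ q := pow_dvd_pow p (by omega)
  haveI : NeZero (p ^ (b + 1)) := ⟨pow_ne_zero _ hp.pos.ne'⟩
  letI act : MulAction (ZMod q)ˣ {x : G // x ^ q = 1} :=
    { smul := fun u x => ⟨x.1 ^ (u : ZMod q).val, by
        rw [← pow_mul, mul_comm, pow_mul, x.2, one_pow]⟩
      one_smul := fun x => by
        apply Subtype.ext
        show x.1 ^ ((1 : (ZMod q)ˣ) : ZMod q).val = x.1
        rw [Units.val_one, ZMod.val_one_eq_one_mod,
          pow_eq_pow_of_modEq' x.2 (Nat.mod_modEq 1 q), pow_one]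
      mul_smul := fun a c x => by
        apply Subtype.ext
        show x.1 ^ ((a * c : (ZMod q)ˣ) : ZMod q).val
            = (x.1 ^ (c : ZMod q).val) ^ (a : ZMod q).val
        rw [← pow_mul, Units.val_mul, ZMod.val_mul,
          pow_eq_pow_of_modEq' x.2 (Nat.mod_modEq _ q), mul_comm] }
  have hsmul_val : ∀ (u : (ZMod q)ˣ) (x : {x : G // x ^ q = 1}),
      (u • x).1 = x.1 ^ (u : ZMod q).val := fun u x => rfl
  have hcount : (univ.filter fun x : G => x ^ q = 1 ∧ ¬ x ^ p ^ b = 1).card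
      = ∑ x ∈ (univ.filter fun x : {x : G // x ^ q = 1} => ¬ x.1 ^ p ^ b = 1),
          (fun _ => 1) x := by
    rw [Finset.sum_const, smul_eq_mul, mul_one, ← Fintype.card_subtype, ← Fintype.card_subtype]
    exact Fintype.card_congr ⟨fun x => ⟨⟨x.1, x.2.1⟩, x.2.2⟩, fun x => ⟨x.1.1, x.1.2, x.2⟩,
      fun x => rfl, fun x => rfl⟩
  rw [hcount]
  refine orbitsum (M := (ZMod q)ˣ) _ _ (fun m x => rfl) _ ?_ ?_
  · -- invariance of the finset
    intro m x hx
    rw [mem_filter] at hx ⊢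
    refine ⟨mem_univ _, fun hcon => hx.2 ?_⟩
    have hcon' : (x.1 ^ (m : ZMod q).val) ^ p ^ b = 1 := by
      rw [← hsmul_val m x]; exact hcon
    have hyk : (x.1 ^ p ^ b) ^ (m : ZMod q).val = 1 := by
      rw [← pow_mul, mul_comm, pow_mul]; exact hcon'
    have hyq : (x.1 ^ p ^ b) ^ q = 1 := by
      rw [← pow_mul, mul_comm, pow_mul, x.2, one_pow]
    have hd : orderOf (x.1 ^ p ^ b) ∣ Nat.gcd (m : ZMod q).val q :=
      Nat.dvd_gcd (orderOf_dvd_of_pow_eq_one hyk) (orderOf_dvd_of_pow_eq_one hyq)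
    rw [Nat.Coprime.gcd_eq_one (ZMod.val_coe_unit_coprime m)] at hd
    rw [← orderOf_eq_one_iff]
    exact Nat.dvd_one.mp hd
  · -- each orbit has size divisible by p^b
    intro x hx
    rw [mem_filter] at hx
    rw [mul_one]
    have hos : Nat.card (MulAction.orbit (ZMod q)ˣ x)
        * Nat.card (MulAction.stabilizer (ZMod q)ˣ x) = Nat.card (ZMod q)ˣ := by
      rw [← Nat.card_prod]
      exact Nat.card_congr (MulAction.orbitProdStabilizerEquivGroup (ZMod q)ˣ x)
    set K := (ZMod.unitsMap hdvd').ker with hK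
    have hsub : MulAction.stabilizer (ZMod q)ˣ x ≤ K := by
      intro u hu
      have hux : x.1 ^ (u : ZMod q).val = x.1 := by
        rw [← hsmul_val u x, MulAction.mem_stabilizer_iff.mp hu]
      set k := (u : ZMod q).val with hk
      have hk1 : 1 ≤ k := by
        rcases Nat.eq_zero_or_pos k with h0 | h
        · exact absurd ((ZMod.val_eq_zero _).1 h0) (Units.ne_zero u)
        · exact h
      obtain ⟨j, hjv, hordj⟩ := (Nat.dvd_prime_pow hp).1 (orderOf_dvd_of_pow_eq_one x.2)
      have hbj : b + 1 ≤ j := by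
        by_contra hcon
        exact hx.2 (orderOf_dvd_iff_pow_eq_one.1 (by rw [hordj]; exact pow_dvd_pow p (by omega)))
      have hxk1 : x.1 ^ (k - 1) = 1 := by
        have h1 : x.1 ^ (k - 1) * x.1 = 1 * x.1 := by
          rw [← pow_succ, Nat.sub_add_cancel hk1, hux, one_mul]
        exact mul_right_cancel h1
      have hdvdk : p ^ (b + 1) ∣ k - 1 :=
        dvd_trans (by rw [hordj]; exact pow_dvd_pow p hbj) (orderOf_dvd_of_pow_eq_one hxk1)
      have hcast : ((k : ℕ) : ZMod (p ^ (b + 1))) = 1 := by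
        have hmod : (1 : ℕ) ≡ k [MOD p ^ (b + 1)] := (Nat.modEq_iff_dvd' hk1).2 hdvdk
        rw [(ZMod.natCast_eq_natCast_iff _ _ _).2 hmod.symm, Nat.cast_one]
      have hval : (ZMod.unitsMap hdvd' u : ZMod (p ^ (b + 1))) = 1 := by
        rw [ZMod.unitsMap_def, Units.coe_map]
        show ZMod.castHom hdvd' (ZMod (p ^ (b + 1))) (u : ZMod q) = 1
        rw [ZMod.castHom_apply, ← ZMod.natCast_val, hcast]
      rw [hK, MonoidHom.mem_ker]
      exact Units.ext (by rw [hval, Units.val_one])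
    obtain ⟨e, he⟩ := Subgroup.card_dvd_of_le hsub
    have hpos : 0 < Nat.card (MulAction.stabilizer (ZMod q)ˣ x) := Nat.card_pos
    have hquot : Nat.card ((ZMod q)ˣ ⧸ K) = Nat.card (ZMod (p ^ (b + 1)))ˣ :=
      Nat.card_congr (QuotientGroup.quotientKerEquivOfSurjective _
        (ZMod.unitsMap_surjective hdvd')).toEquiv
    have htot : Nat.card (ZMod q)ˣ = Nat.card ((ZMod q)ˣ ⧸ K) * Nat.card K :=
      Subgroup.card_eq_card_quotient_mul_card_subgroup K
    have horb : Nat.card (MulAction.orbit (ZMod q)ˣ x)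
        = Nat.card (ZMod (p ^ (b + 1)))ˣ * e := by
      refine Nat.eq_of_mul_eq_mul_right hpos ?_
      rw [hos, htot, he, hquot]; ring
    have hdvdtot : p ^ b ∣ Nat.card (ZMod (p ^ (b + 1)))ˣ := by
      rw [Nat.card_eq_fintype_card, ZMod.card_units_eq_totient,
        Nat.totient_prime_pow hp (Nat.succ_pos b)]
      exact dvd_mul_of_dvd_left (pow_dvd_pow p (by omega)) _
    rw [horb]
    exact Dvd.dvd.mul_right hdvdtot e

end Theta

section PP
universe u

open scoped Classical
open scoped IsMulCommutative

/-- order capping: solutions of `x^(p^b)=1` are the same as of `x^(p^(min b v))=1`. -/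
lemma filter_cap {G : Type u} [Group G] [Fintype G] [DecidableEq G]
    {p : ℕ} (hp : p.Prime) (b : ℕ) :
    (univ.filter fun x : G => x ^ p ^ b = 1)
      = (univ.filter fun x : G => x ^ p ^ min b ((Fintype.card G).factorization p) = 1) := by
  set v := (Fintype.card G).factorization p with hv
  ext x
  simp only [mem_filter, mem_univ, true_and]
  constructor
  · intro hxb
    obtain ⟨j, hjb, hordj⟩ := (Nat.dvd_prime_pow hp).1 (orderOf_dvd_of_pow_eq_one hxb)
    have hjv : j ≤ v := by
      refine (Nat.Prime.pow_dvd_iff_le_factorization hp Fintype.card_ne_zero).1 ?_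
      rw [← hordj]
      exact orderOf_dvd_card
    exact orderOf_dvd_iff_pow_eq_one.1 (by rw [hordj]; exact pow_dvd_pow p (le_min hjb hjv))
  · intro hxB
    exact pow_dvd_of_pow_eq_one hxB (pow_dvd_pow p (min_le_left _ _))

theorem PP : ∀ (N : ℕ), ∀ (G : Type u) [Group G] [Fintype G] [DecidableEq G],
    Fintype.card G ≤ N → ∀ (p : ℕ), p.Prime → ∀ b : ℕ,
    p ^ min b ((Fintype.card G).factorization p)
      ∣ (univ.filter fun x : G => x ^ p ^ b = 1).card := by
  intro N
  induction N using Nat.strong_induction_on with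
  | _ N ih =>
  intro G _ _ _ hcard p hp b
  haveI : Fact p.Prime := ⟨hp⟩
  set v := (Fintype.card G).factorization p with hv
  -- main case b = v
  have hmain : p ^ v ∣ (univ.filter fun x : G => x ^ p ^ v = 1).card := by
    have hcardG_ne : Fintype.card G ≠ 0 := Fintype.card_ne_zero
    have hfact : p ^ v * (Fintype.card G / p ^ v) = Fintype.card G :=
      Nat.ordProj_mul_ordCompl_eq_self _ p
    set m' := Fintype.card G / p ^ v with hm'
    have hcop : Nat.Coprime p m' := Nat.coprime_ordCompl hp hcardG_ne
    have hcopv : Nat.Coprime (p ^ v) m' := Nat.Coprime.pow_left _ hcop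
    have huniv : (univ.filter fun x : G => x ^ (p ^ v * m') = 1) = univ := by
      ext x
      simp only [mem_filter, mem_univ, true_and, iff_true]
      rw [hfact]
      exact pow_card_eq_one
    have hkey := key_split (x := (1 : G)) (p ^ v) m' hcopv
    rw [huniv, card_univ] at hkey
    set T := univ.filter (fun w : G => w ^ m' = 1) with hT
    rw [← Finset.sum_filter_add_sum_filter_not T (fun w => w ∈ Subgroup.center G)] at hkey
    -- central part
    have hcent : ∀ w ∈ T.filter (fun w => w ∈ Subgroup.center G),
        (univ.filter fun u : G => u ∈ Subgroup.centralizer {w} ∧ u ^ p ^ v = 1).card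
          = (univ.filter fun u : G => u ^ p ^ v = 1).card := by
      intro w hw
      rcases mem_filter.1 hw with ⟨-, hwc⟩
      congr 1
      ext u
      simp only [mem_filter, mem_univ, true_and]
      refine ⟨And.right, fun hu => ⟨?_, hu⟩⟩
      refine Subgroup.mem_centralizer_iff.2 (fun h hh => ?_)
      rw [Set.mem_singleton_iff] at hh
      subst hh
      exact (Subgroup.mem_center_iff.1 hwc u).symm
    have hcsum : ∑ w ∈ T.filter (fun w => w ∈ Subgroup.center G),
        (univ.filter fun u : G => u ∈ Subgroup.centralizer {w} ∧ u ^ p ^ v = 1).card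
        = (T.filter (fun w => w ∈ Subgroup.center G)).card
            * (univ.filter fun u : G => u ^ p ^ v = 1).card := by
      rw [Finset.sum_congr rfl hcent, Finset.sum_const, smul_eq_mul]
    set cz := (T.filter (fun w => w ∈ Subgroup.center G)).card with hcz
    -- p does not divide cz
    have hczp : ¬ p ∣ cz := by
      intro hpdvd
      have hcardK : cz = Fintype.card
          (MonoidHom.ker (powMonoidHom (α := ↥(Subgroup.center G)) m' : ↥(Subgroup.center G) →* ↥(Subgroup.center G))) := by
        rw [hcz, hT, Finset.filter_filter, ← Fintype.card_subtype]
        refine Fintype.card_congr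
          ⟨fun w => ⟨⟨w.1, w.2.2⟩, ?_⟩, fun z => ⟨z.1.1, ?_, z.1.2⟩, fun w => rfl, fun z => rfl⟩
        · rw [MonoidHom.mem_ker]
          apply Subtype.ext
          show (((⟨w.1, w.2.2⟩ : ↥(Subgroup.center G)) ^ m' : ↥(Subgroup.center G)) : G) = 1
          rw [SubgroupClass.coe_pow]
          exact w.2.1
        · have := z.2
          rw [MonoidHom.mem_ker] at this
          have := congrArg (Subtype.val) this
          rw [powMonoidHom_apply, SubgroupClass.coe_pow] at this
          exact this
      rw [hcardK] at hpdvd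
      obtain ⟨k, hk⟩ := exists_prime_orderOf_dvd_card p hpdvd
      have hkm : (k : ↥(MonoidHom.ker (powMonoidHom (α := ↥(Subgroup.center G)) m' : ↥(Subgroup.center G) →* ↥(Subgroup.center G)))) ^ m' = 1 := by
        apply Subtype.ext
        apply Subtype.ext
        have := k.2
        rw [MonoidHom.mem_ker] at this
        have := congrArg (Subtype.val) this
        rw [powMonoidHom_apply] at this
        calc (((k ^ m' : _) : ↥(Subgroup.center G)) : G) = ((k.1 ^ m' : ↥(Subgroup.center G)) : G) := by
              rw [SubgroupClass.coe_pow]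
        _ = 1 := by rw [this]; rfl
      have : p ∣ m' := hk ▸ orderOf_dvd_of_pow_eq_one hkm
      exact (Nat.Prime.coprime_iff_not_dvd hp).1 hcop this
    -- noncentral part
    have hnc : p ^ v ∣ ∑ w ∈ T.filter (fun w => ¬ w ∈ Subgroup.center G),
        (univ.filter fun u : G => u ∈ Subgroup.centralizer {w} ∧ u ^ p ^ v = 1).card := by
      refine orbitsum (M := ConjAct G) (p ^ v)
        (fun w => (univ.filter fun u : G => u ∈ Subgroup.centralizer {w} ∧ u ^ p ^ v = 1).card)
        ?_ _ ?_ ?_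
      · -- conjugation invariance of φ
        intro m w
        rw [ConjAct.smul_def]
        exact sol_conj (ConjAct.ofConjAct m) w (p ^ v)
      · -- invariance of the finset
        intro m w hw
        rw [mem_filter, hT, mem_filter] at hw
        obtain ⟨⟨-, hw1⟩, hw2⟩ := hw
        rw [mem_filter, hT, mem_filter]
        rw [ConjAct.smul_def]
        set g := ConjAct.ofConjAct m with hg
        refine ⟨⟨mem_univ _, ?_⟩, ?_⟩
        · rw [conj_pow'', hw1, mul_one, mul_inv_cancel]
        · intro hzin
          apply hw2
          rw [Subgroup.mem_center_iff]
          intro a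
          have h2 := Subgroup.mem_center_iff.1 hzin (g * a * g⁻¹)
          have hxz : w = g⁻¹ * (g * w * g⁻¹) * g := by group
          calc a * w = g⁻¹ * ((g * a * g⁻¹) * (g * w * g⁻¹)) * g := by group
          _ = g⁻¹ * ((g * w * g⁻¹) * (g * a * g⁻¹)) * g := by rw [h2]
          _ = w * a := by group
      · -- per-orbit divisibility
        intro w hw
        rw [mem_filter] at hw
        obtain ⟨-, hw2⟩ := hw
        set C := Subgroup.centralizer ({w} : Set G) with hC
        haveI instC : Fintype ↥C := Fintype.ofFinite ↥C
        -- centralizer is a proper subgroup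
        have hCne : C ≠ ⊤ := by
          intro htop
          apply hw2
          rw [Subgroup.mem_center_iff]
          intro a
          have : a ∈ C := htop ▸ Subgroup.mem_top a
          have := Subgroup.mem_centralizer_iff.1 this w rfl
          exact this.symm
        have hlt : Fintype.card ↥C < Fintype.card G := by
          rcases lt_or_eq_of_le (Fintype.card_le_of_injective (Subtype.val : ↥C → G) Subtype.val_injective) with h | h
          · exact h
          · exfalso
            apply hCne
            apply Subgroup.eq_top_of_card_eq
            rw [Nat.card_eq_fintype_card, Nat.card_eq_fintype_card, h]
        -- cardinality of stabilizer = cardinality of centralizer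
        have hstab : Nat.card (MulAction.stabilizer (ConjAct G) w) = Fintype.card ↥C := by
          rw [← Nat.card_eq_fintype_card]
          refine Nat.card_congr ⟨fun s => ⟨ConjAct.ofConjAct s.1, ?_⟩,
            fun u => ⟨ConjAct.toConjAct u.1, ?_⟩, fun s => rfl, fun u => rfl⟩
          · have := s.2
            rw [MulAction.mem_stabilizer_iff, ConjAct.smul_def] at this
            refine Subgroup.mem_centralizer_iff.2 (fun h hh => ?_)
            rw [Set.mem_singleton_iff] at hh
            subst hh
            have := congrArg (fun z => z * ConjAct.ofConjAct s.1) this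
            simp only [inv_mul_cancel_right] at this
            rw [this]
          · have hu := u.2
            have := Subgroup.mem_centralizer_iff.1 hu w rfl
            rw [MulAction.mem_stabilizer_iff, ConjAct.smul_def, ConjAct.ofConjAct_toConjAct]
            rw [← this]
            group
        -- orbit stabilizer
        have hos : Nat.card (MulAction.orbit (ConjAct G) w)
            * Nat.card (MulAction.stabilizer (ConjAct G) w) = Fintype.card G := by
          rw [← Nat.card_prod]
          refine (Nat.card_congr (MulAction.orbitProdStabilizerEquivGroup (ConjAct G) w)).trans ?_
          rw [Nat.card_eq_fintype_card]
          rfl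
        -- apply induction hypothesis to the centralizer
        have hih := ih (Fintype.card ↥C) (lt_of_lt_of_le hlt hcard) ↥C (le_refl _) p hp v
        set γ := (Fintype.card ↥C).factorization p with hγ
        have hγv : γ ≤ v := by
          have hdvd : Fintype.card ↥C ∣ Fintype.card G := by
            have := Subgroup.card_subgroup_dvd_card C
            rwa [Nat.card_eq_fintype_card, Nat.card_eq_fintype_card] at this
          have := (Nat.factorization_le_iff_dvd Fintype.card_ne_zero
            Fintype.card_ne_zero).2 hdvd
          exact this p
        rw [min_eq_right hγv] at hih
        -- φ w equals the count inside the subgroup C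
        have hφC : (univ.filter fun u : G => u ∈ C ∧ u ^ p ^ v = 1).card
            = (univ.filter fun u : ↥C => u ^ p ^ v = 1).card := by
          rw [cntC_eq, Nat.card_eq_fintype_card, Fintype.card_subtype]
        have hφdvd : p ^ γ ∣ (univ.filter fun u : G => u ∈ C ∧ u ^ p ^ v = 1).card := by
          rw [hφC]; exact hih
        -- φ is nonzero
        have hφne : (univ.filter fun u : G => u ∈ C ∧ u ^ p ^ v = 1).card ≠ 0 := by
          refine Finset.card_ne_zero_of_mem (a := (1 : G)) ?_
          rw [mem_filter]
          exact ⟨mem_univ _, C.one_mem, one_pow _⟩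
        have horb_ne : Nat.card (MulAction.orbit (ConjAct G) w) ≠ 0 := by
          haveI : Finite (MulAction.orbit (ConjAct G) w) := Set.Finite.to_subtype (Set.finite_range _)
          haveI : Nonempty (MulAction.orbit (ConjAct G) w) := ⟨⟨w, MulAction.mem_orbit_self w⟩⟩
          exact Nat.card_pos.ne'
        -- valuation bookkeeping
        have hCne0 : Fintype.card ↥C ≠ 0 := Fintype.card_ne_zero
        have hfactor : (Nat.card (MulAction.orbit (ConjAct G) w)).factorization p + γ = v := by
          have h := congrArg (fun n => n.factorization p) (hstab ▸ hos)
          rwa [Nat.factorization_mul horb_ne hCne0, Finsupp.add_apply] at h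
        refine (Nat.Prime.pow_dvd_iff_le_factorization hp (Nat.mul_ne_zero horb_ne hφne)).2 ?_
        rw [Nat.factorization_mul horb_ne hφne, Finsupp.add_apply]
        have hφγ : γ ≤ ((univ.filter fun u : G => u ∈ C ∧ u ^ p ^ v = 1).card).factorization p :=
          (Nat.Prime.pow_dvd_iff_le_factorization hp hφne).1 hφdvd
        omega
    -- combine
    rw [hcsum] at hkey
    have hGdvd : p ^ v ∣ Fintype.card G := Nat.ordProj_dvd _ p
    have hczdvd : p ^ v ∣ cz * (univ.filter fun u : G => u ^ p ^ v = 1).card := by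
      rw [hkey] at hGdvd
      exact (Nat.dvd_add_iff_left hnc).2 hGdvd
    have hcopcz : Nat.Coprime (p ^ v) cz :=
      Nat.Coprime.pow_left _ ((Nat.Prime.coprime_iff_not_dvd hp).2 hczp)
    exact Nat.Coprime.dvd_of_dvd_mul_left hcopcz hczdvd
  -- deduce the general case from b = v
  have hBle : min b v ≤ v := min_le_right _ _
  rw [filter_cap hp b]
  rcases eq_or_lt_of_le hBle with hBv | hBv
  · rw [← hv, hBv]
    exact hmain
  · -- split the solutions of x^(p^v) = 1
    have hsub : (univ.filter fun x : G => x ^ p ^ v = 1).filter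
          (fun x => x ^ p ^ min b v = 1)
        = (univ.filter fun x : G => x ^ p ^ min b v = 1) := by
      rw [Finset.filter_filter]
      ext x
      simp only [mem_filter, mem_univ, true_and]
      refine ⟨And.right, fun hx => ⟨?_, hx⟩⟩
      exact pow_dvd_of_pow_eq_one hx (pow_dvd_pow p hBle)
    have hsplit := Finset.card_filter_add_card_filter_not
      (s := univ.filter fun x : G => x ^ p ^ v = 1) (p := fun x => x ^ p ^ min b v = 1)
    rw [hsub, Finset.filter_filter] at hsplit
    have hθ : p ^ min b v ∣ (univ.filter fun x : G => x ^ p ^ v = 1 ∧ ¬ x ^ p ^ min b v = 1).card :=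
      theta_dvd p hp hBv
    have hv' : p ^ min b v ∣ (univ.filter fun x : G => x ^ p ^ v = 1).card :=
      dvd_trans (pow_dvd_pow p hBle) hmain
    rw [← hsplit] at hv'
    exact (Nat.dvd_add_iff_left hθ).2 hv'

end PP

section Main
open scoped Classical

/-- Frobenius: if `n` is a positive divisor of `|G|`, then `n` divides the number of
solutions of `x ^ n = 1` in `G`. -/
theorem stmt1 {G : Type*} [Group G] [Finite G] (n : ℕ) (hn : 0 < n)
    (hdvd : n ∣ Nat.card G) : n ∣ Nat.card {x : G // x ^ n = 1} := by
  letI : Fintype G := Fintype.ofFinite G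
  letI : DecidableEq G := Classical.decEq G
  rw [Nat.card_eq_fintype_card] at hdvd
  have h1 : Nat.card {x : G // x ^ n = 1} = (univ.filter fun x : G => x ^ n = 1).card := by
    rw [Nat.card_eq_fintype_card, Fintype.card_subtype]
  rw [h1]
  have hcne : (univ.filter fun x : G => x ^ n = 1).card ≠ 0 :=
    Finset.card_ne_zero_of_mem (mem_filter.2 ⟨mem_univ (1 : G), one_pow n⟩)
  rw [← Nat.factorization_le_iff_dvd hn.ne' hcne, Finsupp.le_def]
  intro p
  by_cases hp : p.Prime
  swap
  · rw [Nat.factorization_eq_zero_of_not_prime n hp]; exact Nat.zero_le _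
  set a := n.factorization p with ha
  refine (Nat.Prime.pow_dvd_iff_le_factorization hp hcne).1 ?_
  set v := (Fintype.card G).factorization p with hv
  have hav : a ≤ v := by
    have := (Nat.factorization_le_iff_dvd hn.ne' Fintype.card_ne_zero).2 hdvd
    exact this p
  have hfact : p ^ a * (n / p ^ a) = n := Nat.ordProj_mul_ordCompl_eq_self n p
  set m := n / p ^ a with hm
  have hcop : Nat.Coprime (p ^ a) m := Nat.Coprime.pow_left _ (Nat.coprime_ordCompl hp hn.ne')
  have hkey := key_split (G := G) (x := (1 : G)) (p ^ a) m hcop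
  rw [hfact] at hkey
  rw [hkey]
  refine orbitsum (M := ConjAct G) (p ^ a)
    (fun w => (univ.filter fun u : G => u ∈ Subgroup.centralizer {w} ∧ u ^ p ^ a = 1).card)
    ?_ _ ?_ ?_
  · -- conjugation invariance of φ
    intro g w
    rw [ConjAct.smul_def]
    exact sol_conj _ _ _
  · -- invariance of the index finset
    intro g w hw
    rw [mem_filter] at hw ⊢
    refine ⟨mem_univ _, ?_⟩
    rw [ConjAct.smul_def, conj_pow'', hw.2, mul_one, mul_inv_cancel]
  · -- per-orbit divisibility
    intro w hw
    set C := Subgroup.centralizer ({w} : Set G) with hC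
    haveI instC : Fintype ↥C := Fintype.ofFinite ↥C
    have hstab : Nat.card (MulAction.stabilizer (ConjAct G) w) = Fintype.card ↥C := by
      rw [← Nat.card_eq_fintype_card]
      refine Nat.card_congr ⟨fun s => ⟨ConjAct.ofConjAct s.1, ?_⟩,
        fun u => ⟨ConjAct.toConjAct u.1, ?_⟩, fun s => rfl, fun u => rfl⟩
      · have hs := s.2
        rw [MulAction.mem_stabilizer_iff, ConjAct.smul_def] at hs
        refine Subgroup.mem_centralizer_iff.2 (fun h hh => ?_)
        rw [Set.mem_singleton_iff] at hh
        subst hh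
        have := congrArg (fun z => z * ConjAct.ofConjAct s.1) hs
        simp only [inv_mul_cancel_right] at this
        rw [this]
      · have hu := u.2
        have := Subgroup.mem_centralizer_iff.1 hu w rfl
        rw [MulAction.mem_stabilizer_iff, ConjAct.smul_def, ConjAct.ofConjAct_toConjAct]
        rw [← this]
        group
    have hos : Nat.card (MulAction.orbit (ConjAct G) w)
        * Nat.card (MulAction.stabilizer (ConjAct G) w) = Fintype.card G := by
      rw [← Nat.card_prod]
      refine (Nat.card_congr (MulAction.orbitProdStabilizerEquivGroup (ConjAct G) w)).trans ?_
      rw [Nat.card_eq_fintype_card]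
      rfl
    have hPP := PP (Fintype.card ↥C) ↥C le_rfl p hp a
    set γ := (Fintype.card ↥C).factorization p with hγ
    have hγv : γ ≤ v := by
      have hdvd' : Fintype.card ↥C ∣ Fintype.card G := by
        have := Subgroup.card_subgroup_dvd_card C
        rwa [Nat.card_eq_fintype_card, Nat.card_eq_fintype_card] at this
      have := (Nat.factorization_le_iff_dvd Fintype.card_ne_zero
        Fintype.card_ne_zero).2 hdvd'
      exact this p
    have hφC : (univ.filter fun u : G => u ∈ C ∧ u ^ p ^ a = 1).card
        = (univ.filter fun u : ↥C => u ^ p ^ a = 1).card := by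
      rw [cntC_eq, Nat.card_eq_fintype_card, Fintype.card_subtype]
    have hφdvd : p ^ min a γ ∣ (univ.filter fun u : G => u ∈ C ∧ u ^ p ^ a = 1).card := by
      rw [hφC]; exact hPP
    have hφne : (univ.filter fun u : G => u ∈ C ∧ u ^ p ^ a = 1).card ≠ 0 := by
      refine Finset.card_ne_zero_of_mem (a := (1 : G)) ?_
      rw [mem_filter]
      exact ⟨mem_univ _, C.one_mem, one_pow _⟩
    have horb_ne : Nat.card (MulAction.orbit (ConjAct G) w) ≠ 0 := by
      haveI : Finite (MulAction.orbit (ConjAct G) w) := Set.Finite.to_subtype (Set.finite_range _)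
      haveI : Nonempty (MulAction.orbit (ConjAct G) w) := ⟨⟨w, MulAction.mem_orbit_self w⟩⟩
      exact Nat.card_pos.ne'
    have hCne0 : Fintype.card ↥C ≠ 0 := Fintype.card_ne_zero
    have hfactor : (Nat.card (MulAction.orbit (ConjAct G) w)).factorization p + γ = v := by
      have h := congrArg (fun k => k.factorization p) (hstab ▸ hos)
      rwa [Nat.factorization_mul horb_ne hCne0, Finsupp.add_apply] at h
    refine (Nat.Prime.pow_dvd_iff_le_factorization hp (Nat.mul_ne_zero horb_ne hφne)).2 ?_
    rw [Nat.factorization_mul horb_ne hφne, Finsupp.add_apply]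
    have hφγ : min a γ ≤ ((univ.filter fun u : G => u ∈ C ∧ u ^ p ^ a = 1).card).factorization p :=
      (Nat.Prime.pow_dvd_iff_le_factorization hp hφne).1 hφdvd
    omega

end Main
end

section
/- Let G be a finite group, π a set of primes, and q ∈ π. Let S_q(G_π) denote the union of conjugacy classes of π-elements of G whose size is a power of q. Then the cardinality of S_q(G_π) is congruent to the number of π-elements of Z(G) modulo q. -/
/-- A π-element: every prime dividing its order lies in π. -/
def IsPiElement {G : Type*} [Group G] (π : Set ℕ) (g : G) : Prop :=
  ∀ p : ℕ, p.Prime → p ∣ orderOf g → p ∈ π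

lemma orderOf_conj' {G : Type*} [Group G] (x g : G) : orderOf (x * g * x⁻¹) = orderOf g := by
  have := orderOf_injective (MulAut.conj x).toMonoidHom (MulEquiv.injective _) g
  simpa [MulAut.conj_apply] using this

lemma centralizer_conj_index {G : Type*} [Group G] (x g : G) :
    (Subgroup.centralizer {x * g * x⁻¹}).index = (Subgroup.centralizer {g}).index := by
  have h : Subgroup.centralizer {x * g * x⁻¹} =
      (Subgroup.centralizer {g}).comap (MulAut.conj x⁻¹).toMonoidHom := by
    ext k
    simp only [Subgroup.mem_comap, Subgroup.mem_centralizer_singleton_iff,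
      MulEquiv.coe_toMonoidHom, MulAut.conj_apply, inv_inv]
    constructor
    · intro hk
      have : x⁻¹ * (k * (x * g * x⁻¹)) * x = x⁻¹ * ((x * g * x⁻¹) * k) * x := by rw [hk]
      group at this ⊢
      convert this using 1 <;> group
    · intro hk
      have : x * (x⁻¹ * k * x * g) * x⁻¹ * (x * x⁻¹) = x * (g * (x⁻¹ * k * x)) * x⁻¹ * (x * x⁻¹) := by
        rw [hk]
      group at this ⊢
      convert this using 1 <;> group
  rw [h, Subgroup.index_comap_of_surjective _ (MulEquiv.surjective _)]

def conjAction {G : Type*} [Group G] (π : Set ℕ) (q : ℕ) (Q : Subgroup G) :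
    MulAction Q {g : G // IsPiElement π g ∧ ∃ k : ℕ, (Subgroup.centralizer {g}).index = q ^ k} where
  smul x g := ⟨(x : G) * g * (x : G)⁻¹,
    fun p pp pd => g.2.1 p pp (by rwa [orderOf_conj'] at pd),
    by obtain ⟨k, hk⟩ := g.2.2; exact ⟨k, by rw [centralizer_conj_index]; exact hk⟩⟩
  one_smul g := Subtype.ext (by
    show ((1 : Q) : G) * g * ((1 : Q) : G)⁻¹ = g
    simp)
  mul_smul x y g := Subtype.ext (by
    show ((x * y : Q) : G) * g * ((x * y : Q) : G)⁻¹
        = (x : G) * ((y : G) * g * (y : G)⁻¹) * (x : G)⁻¹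
    push_cast
    group)

/-- `|S_q(G_π)| ≡ |Z(G)_π| (mod q)`: the number of π-elements of `G` whose conjugacy
class size is a power of `q` is congruent mod `q` to the number of central π-elements. -/
theorem stmt2 {G : Type*} [Group G] [Finite G] (π : Set ℕ) (q : ℕ)
    (hq : q.Prime) (hqπ : q ∈ π) :
    Nat.card {g : G // IsPiElement π g ∧ ∃ k : ℕ, (Subgroup.centralizer {g}).index = q ^ k}
      ≡ Nat.card {z : Subgroup.center G // IsPiElement π (z : G)} [MOD q] := by
  haveI : Fact q.Prime := ⟨hq⟩
  obtain ⟨Q⟩ := Sylow.nonempty (p := q) (G := G)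
  letI := conjAction π q (Q : Subgroup G)
  let S := {g : G // IsPiElement π g ∧ ∃ k : ℕ, (Subgroup.centralizer {g}).index = q ^ k}
  have hsmul : ∀ (x : (Q : Subgroup G)) (g : S), ((x • g : S) : G) = x * g * x⁻¹ :=
    fun _ _ => rfl
  have key := (Q.isPGroup').card_modEq_card_fixedPoints (G := (Q : Subgroup G)) S
  have he : Nat.card (MulAction.fixedPoints (Q : Subgroup G) S)
      = Nat.card {z : Subgroup.center G // IsPiElement π (z : G)} := by
    apply Nat.card_congr
    refine ⟨fun g => ⟨⟨(g.1 : G), ?_⟩, g.1.2.1⟩, fun z => ⟨⟨(z.1 : G), z.2, 0, ?_⟩, ?_⟩, ?_, ?_⟩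
    · -- fixed point is central
      obtain ⟨⟨g, hπg, k, hk⟩, hfix⟩ := g
      have hQle : (Q : Subgroup G) ≤ Subgroup.centralizer {g} := by
        intro x hx
        have h1 := hfix (⟨x, hx⟩ : (Q : Subgroup G))
        rw [Subtype.ext_iff] at h1
        rw [hsmul] at h1
        have this : x * g * x⁻¹ = g := h1
        rw [Subgroup.mem_centralizer_singleton_iff]
        calc x * g = x * g * x⁻¹ * x := by group
          _ = g * x := by rw [this]
      have hdvd : (Subgroup.centralizer {g}).index ∣ (Q : Subgroup G).index :=
        Subgroup.index_dvd_of_le hQle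
      have hk0 : k = 0 := by
        by_contra hk0
        exact Q.not_dvd_index (dvd_trans (dvd_pow_self q hk0) (hk ▸ hdvd))
      rw [hk0, pow_zero] at hk
      have := Subgroup.index_eq_one.mp hk
      rw [Subgroup.mem_center_iff]
      intro h
      have : h ∈ Subgroup.centralizer {g} := this ▸ Subgroup.mem_top h
      exact Subgroup.mem_centralizer_singleton_iff.mp this
    · -- central element has trivial class
      have : Subgroup.centralizer {(z.1 : G)} = ⊤ := by
        rw [eq_top_iff]
        intro h _
        rw [Subgroup.mem_centralizer_singleton_iff]
        exact Subgroup.mem_center_iff.mp z.1.2 h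
      rw [this, pow_zero, Subgroup.index_top]
    · -- central element is fixed
      intro x
      apply Subtype.ext
      rw [hsmul]
      show (x : G) * (z.1 : G) * (x : G)⁻¹ = (z.1 : G)
      rw [Subgroup.mem_center_iff.mp z.1.2 (x : G)]
      group
    · intro g; apply Subtype.ext; apply Subtype.ext; rfl
    · intro z; apply Subtype.ext; apply Subtype.ext; rfl
  exact key.trans (he ▸ Nat.ModEq.refl _)
end

section
/- Let G be a finite group, N a central subgroup of G, and g ∈ G. Define α : C → N on C = {x ∈ G : [g,x] ∈ N} by α(x) = [g,x] = g⁻¹x⁻¹gx. Then α is a group homomorphism with kernel C_G(g); in particular, the index |C : C_G(g)| divides |N|. -/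
/-- For `N ≤ Z(G)`, `g ∈ G`, and `C = {x : [g,x] ∈ N}`, the map `x ↦ [g,x] = g⁻¹x⁻¹gx`
is a homomorphism `C → N` with kernel `C_G(g)`; in particular `|C : C_G(g)|` divides `|N|`. -/
theorem stmt4 {G : Type*} [Group G] [Finite G] (N : Subgroup G)
    (hN : N ≤ Subgroup.center G) (g : G) (C : Subgroup G)
    (hC : ∀ x : G, x ∈ C ↔ g⁻¹ * x⁻¹ * g * x ∈ N) :
    (∀ x ∈ C, ∀ y ∈ C,
      g⁻¹ * (x * y)⁻¹ * g * (x * y) = (g⁻¹ * x⁻¹ * g * x) * (g⁻¹ * y⁻¹ * g * y)) ∧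
    (∀ x ∈ C, (g⁻¹ * x⁻¹ * g * x = 1 ↔ x ∈ Subgroup.centralizer {g})) ∧
    (Subgroup.centralizer {g}).relIndex C ∣ Nat.card N := by
  have key : ∀ x ∈ C, ∀ y ∈ C,
      g⁻¹ * (x * y)⁻¹ * g * (x * y) = (g⁻¹ * x⁻¹ * g * x) * (g⁻¹ * y⁻¹ * g * y) := by
    intro x hx y hy
    have hc := hN ((hC x).mp hx)
    rw [Subgroup.mem_center_iff] at hc
    calc g⁻¹ * (x * y)⁻¹ * g * (x * y)
        = ((g⁻¹ * y⁻¹ * g) * (g⁻¹ * x⁻¹ * g * x)) * y := by group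
      _ = ((g⁻¹ * x⁻¹ * g * x) * (g⁻¹ * y⁻¹ * g)) * y := by rw [hc (g⁻¹ * y⁻¹ * g)]
      _ = (g⁻¹ * x⁻¹ * g * x) * (g⁻¹ * y⁻¹ * g * y) := by group
  have key2 : ∀ x ∈ C, (g⁻¹ * x⁻¹ * g * x = 1 ↔ x ∈ Subgroup.centralizer {g}) := by
    intro x _
    rw [Subgroup.mem_centralizer_singleton_iff,
      show g⁻¹ * x⁻¹ * g * x = (x * g)⁻¹ * (g * x) by group, inv_mul_eq_one, eq_comm]
  refine ⟨key, key2, ?_⟩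
  let α : C →* N :=
    { toFun := fun x => ⟨g⁻¹ * (x : G)⁻¹ * g * x, (hC x).mp x.2⟩
      map_one' := by ext; simp
      map_mul' := fun x y => by ext; exact key x x.2 y y.2 }
  have hker : α.ker = (Subgroup.centralizer {g}).subgroupOf C := by
    ext x
    simp only [MonoidHom.mem_ker, Subgroup.mem_subgroupOf, Subtype.ext_iff, α]
    exact key2 x x.2
  rw [Subgroup.relIndex, ← hker, Subgroup.index_ker]
  exact Subgroup.card_subgroup_dvd_card α.range
end

section
/- Let G be a finite group, N a central subgroup of G of prime order q, and write Ḡ = G/N. Suppose π is a set of primes with q ∈ π. Let ḡ ∈ Ḡ be a π-element with conjugacy class size a power of q, and let g be a π-element preimage of ḡ. If C_G(g) equals the full preimage C of C_Ḡ(ḡ), then the q distinct elements g, gz, ..., gz^{q-1} (where N = ⟨z⟩) are π-elements lying in q pairwise distinct conjugacy classes of G, all of size |ḡ^Ḡ|. -/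
/-- If `N = ⟨z⟩ ≤ Z(G)` has prime order `q ∈ π`, `g` is a π-element whose image in `G/N`
has class size a power of `q`, and `C_G(g)` is the full preimage of `C_{G/N}(gN)`, then
`g, gz, …, gz^{q-1}` are π-elements lying in `q` pairwise distinct conjugacy classes,
all of size `|ḡ^{G/N}|`. -/
theorem stmt5 {G : Type*} [Group G] [Finite G] (π : Set ℕ) (q : ℕ)
    (hq : q.Prime) (hqπ : q ∈ π) (N : Subgroup G) [N.Normal]
    (hN : N ≤ Subgroup.center G) (hcard : Nat.card N = q)
    (z : G) (hz : N = Subgroup.zpowers z)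
    (g : G) (hg : IsPiElement π g)
    (hclass : ∃ k : ℕ, (Subgroup.centralizer {(g : G ⧸ N)}).index = q ^ k)
    (hC : Subgroup.comap (QuotientGroup.mk' N)
        (Subgroup.centralizer {(g : G ⧸ N)}) = Subgroup.centralizer {g}) :
    (∀ i < q, IsPiElement π (g * z ^ i)) ∧
    (∀ i < q, ∀ j < q, IsConj (g * z ^ i) (g * z ^ j) → i = j) ∧
    (∀ i < q, (Subgroup.centralizer {g * z ^ i}).index
        = (Subgroup.centralizer {(g : G ⧸ N)}).index) := by
  have hzN : z ∈ N := hz ▸ Subgroup.mem_zpowers z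
  have hzc : z ∈ Subgroup.center G := hN hzN
  have hzcomm : ∀ a : G, a * z = z * a := Subgroup.mem_center_iff.mp hzc
  have hzi : ∀ (i : ℕ) (a : G), Commute a (z ^ i) :=
    fun i a => (show Commute a z from hzcomm a).pow_right i
  have hoz : orderOf z = q := by
    rw [← Nat.card_zpowers, ← hz, hcard]
  refine ⟨?_, ?_, ?_⟩
  · intro i _ p hp hpd
    have h1 : orderOf (g * z ^ i) ∣ Nat.lcm (orderOf g) (orderOf (z ^ i)) :=
      (hzi i g).orderOf_mul_dvd_lcm
    have h2 : p ∣ orderOf g * orderOf (z ^ i) :=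
      (hpd.trans h1).trans (Nat.lcm_dvd_mul _ _)
    rcases hp.dvd_mul.mp h2 with h | h
    · exact hg p hp h
    · have : p ∣ q := h.trans (hoz ▸ orderOf_pow_dvd i)
      rwa [(Nat.prime_dvd_prime_iff_eq hp hq).mp this]
  · intro i hi j hj hconj
    obtain ⟨c, hc⟩ := isConj_iff.mp hconj
    have hc' : c * (g * z ^ i) = (g * z ^ j) * c := by
      rw [← hc]; group
    -- c centralizes gN in the quotient
    have hcmem : c ∈ Subgroup.comap (QuotientGroup.mk' N)
        (Subgroup.centralizer {(g : G ⧸ N)}) := by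
      rw [Subgroup.mem_comap, Subgroup.mem_centralizer_singleton_iff]
      have hzi' : ∀ n : ℕ, ((z ^ n : G) : G ⧸ N) = 1 := fun n =>
        (QuotientGroup.eq_one_iff _).mpr (N.pow_mem hzN n)
      have := congrArg (QuotientGroup.mk (s := N)) hc'
      simp only [QuotientGroup.mk_mul, hzi', mul_one] at this
      simpa using this
    rw [hC, Subgroup.mem_centralizer_singleton_iff] at hcmem
    have e1 : c * (g * z ^ i) = g * z ^ i * c := by
      rw [← mul_assoc, hcmem, mul_assoc, hzi i c, ← mul_assoc]
    have e2 : g * (z ^ i * c) = g * (z ^ j * c) := by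
      rw [← mul_assoc, ← mul_assoc, ← e1, hc']
    have hzij : z ^ i = z ^ j := mul_right_cancel (mul_left_cancel e2)
    have : i % q = j % q := by rwa [pow_inj_mod, hoz] at hzij
    rwa [Nat.mod_eq_of_lt hi, Nat.mod_eq_of_lt hj] at this
  · intro i _
    have hcent : Subgroup.centralizer {g * z ^ i} = Subgroup.centralizer {g} := by
      ext x
      simp only [Subgroup.mem_centralizer_singleton_iff]
      constructor
      · intro h
        have h' : Commute x (g * z ^ i) := h
        have := h'.mul_right (hzi i x).inv_right
        exact (show Commute x g by simpa [mul_assoc] using this)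
      · intro h
        exact (show Commute x g from h).mul_right (hzi i x)
    rw [hcent, ← hC]
    exact Subgroup.index_comap_of_surjective _ (QuotientGroup.mk'_surjective N)
end

section
/- Let G be a finite group, N a central subgroup of prime order q, q ∈ π for a set of primes π. Then the number of π-elements of G whose conjugacy class size is a power of q equals q times the number of π-elements of G/N whose conjugacy class size (in G/N) is a power of q. That is, |S_q(G_π)| = q · |S_q((G/N)_π)|. -/
/-- Counting: preimage of a predicate on the quotient has `|N|` times the cardinality. -/
lemma card_preimage_pred {G : Type*} [Group G] [Finite G] (N : Subgroup G) [N.Normal]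
    (p : G ⧸ N → Prop) :
    Nat.card {g : G // p (g : G ⧸ N)} = Nat.card N * Nat.card {x : G ⧸ N // p x} := by
  have e1 : {g : G // p (g : G ⧸ N)} ≃ (QuotientGroup.mk ⁻¹' {x : G ⧸ N | p x} : Set G) :=
    Equiv.subtypeEquivRight (fun g => Iff.rfl)
  have e2 := QuotientGroup.preimageMkEquivSubgroupProdSet N {x : G ⧸ N | p x}
  rw [Nat.card_congr (e1.trans e2), Nat.card_prod]
  rfl

/-- Key equivalence: membership in `S_q(G_π)` is determined by the image in `G ⧸ N`. -/
lemma key_iff {G : Type*} [Group G] [Finite G] (π : Set ℕ) (q : ℕ)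
    (hq : q.Prime) (hqπ : q ∈ π) (N : Subgroup G) [N.Normal]
    (hN : N ≤ Subgroup.center G) (hcard : Nat.card N = q) (g : G) :
    (IsPiElement π g ∧ ∃ k : ℕ, (Subgroup.centralizer {g}).index = q ^ k) ↔
    (IsPiElement π ((g : G ⧸ N)) ∧
      ∃ k : ℕ, (Subgroup.centralizer {((g : G ⧸ N))}).index = q ^ k) := by
  constructor
  · rintro ⟨hpi, k, hk⟩
    constructor
    · intro p hp hdvd
      exact hpi p hp (hdvd.trans (orderOf_map_dvd (QuotientGroup.mk' N) g))
    · have h1 : (Subgroup.centralizer {g}).map (QuotientGroup.mk' N) ≤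
          Subgroup.centralizer {((g : G ⧸ N))} := by
        rintro _ ⟨h, hh, rfl⟩
        have hh' : h * g = g * h := Subgroup.mem_centralizer_singleton_iff.mp hh
        rw [Subgroup.mem_centralizer_singleton_iff]
        show ((h * g : G) : G ⧸ N) = ((g * h : G) : G ⧸ N)
        rw [hh']
      have h2 : (Subgroup.centralizer {((g : G ⧸ N))}).index ∣ q ^ k := by
        calc (Subgroup.centralizer {((g : G ⧸ N))}).index
            ∣ ((Subgroup.centralizer {g}).map (QuotientGroup.mk' N)).index :=
              Subgroup.index_dvd_of_le h1
          _ ∣ (Subgroup.centralizer {g}).index :=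
              Subgroup.index_map_dvd _ (QuotientGroup.mk'_surjective N)
          _ = q ^ k := hk
      obtain ⟨i, _, hi⟩ := (Nat.dvd_prime_pow hq).mp h2
      exact ⟨i, hi⟩
  · rintro ⟨hpi, k, hk⟩
    constructor
    · intro p hp hdvd
      have h2 : g ^ orderOf ((g : G ⧸ N)) ∈ N := by
        rw [← QuotientGroup.eq_one_iff, QuotientGroup.mk_pow]
        exact pow_orderOf_eq_one _
      have h3 : g ^ (orderOf ((g : G ⧸ N)) * q) = 1 := by
        rw [pow_mul]
        have h4 : (⟨g ^ orderOf ((g : G ⧸ N)), h2⟩ : N) ^ q = 1 := by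
          rw [← hcard]; exact pow_card_eq_one'
        simpa using congrArg (Subtype.val) h4
      rcases (Nat.Prime.dvd_mul hp).mp (hdvd.trans (orderOf_dvd_of_pow_eq_one h3)) with h | h
      · exact hpi p hp h
      · rwa [(Nat.prime_dvd_prime_iff_eq hp hq).mp h]
    · set C := Subgroup.centralizer {g} with hC
      set H := (Subgroup.centralizer {((g : G ⧸ N))}).comap (QuotientGroup.mk' N) with hHdef
      have hH : H.index = q ^ k := by
        rw [hHdef, Subgroup.index_comap_of_surjective _ (QuotientGroup.mk'_surjective N), hk]
      have hmem : ∀ h : G, h ∈ H → (h⁻¹ * g⁻¹ * h * g) ∈ N := by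
        intro h hh
        rw [hHdef, Subgroup.mem_comap, Subgroup.mem_centralizer_singleton_iff] at hh
        have h5 : ((g * h : G) : G ⧸ N) = ((h * g : G) : G ⧸ N) := hh.symm
        have := (QuotientGroup.eq (s := N)).mp h5
        have heq : (g * h)⁻¹ * (h * g) = h⁻¹ * g⁻¹ * h * g := by group
        rwa [heq] at this
      have hcen : ∀ h : G, h ∈ H → ∀ b : G, b * (h⁻¹ * g⁻¹ * h * g) = (h⁻¹ * g⁻¹ * h * g) * b :=
        fun h hh b => (Subgroup.mem_center_iff.mp (hN (hmem h hh)) b)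
      let φ : H →* N :=
        { toFun := fun h => ⟨(h : G)⁻¹ * g⁻¹ * h * g, hmem h h.2⟩
          map_one' := by
            ext
            simp
          map_mul' := by
            intro h₁ h₂
            ext
            show ((h₁ : G) * h₂)⁻¹ * g⁻¹ * ((h₁ : G) * h₂) * g =
              ((h₁ : G)⁻¹ * g⁻¹ * h₁ * g) * ((h₂ : G)⁻¹ * g⁻¹ * h₂ * g)
            have step1 : ((h₁ : G) * h₂)⁻¹ * g⁻¹ * ((h₁ : G) * h₂) * g =
                (h₂ : G)⁻¹ * ((h₁ : G)⁻¹ * g⁻¹ * h₁ * g) * (g⁻¹ * h₂ * g) := by group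
            rw [step1, hcen h₁ h₁.2 ((h₂ : G)⁻¹)]
            group }
      have hker : φ.ker = C.subgroupOf H := by
        ext h
        rw [MonoidHom.mem_ker, Subgroup.mem_subgroupOf, hC,
          Subgroup.mem_centralizer_singleton_iff]
        constructor
        · intro hh
          have : (h : G)⁻¹ * g⁻¹ * h * g = 1 := congrArg Subtype.val hh
          have h2 : g * (h : G) * ((h : G)⁻¹ * g⁻¹ * h * g) = g * h * 1 := by rw [this]
          calc (h : G) * g = g * (h : G) * ((h : G)⁻¹ * g⁻¹ * h * g) := by group
            _ = g * h := by rw [this]; group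
        · intro hh
          ext
          show (h : G)⁻¹ * g⁻¹ * h * g = 1
          have h6 : (h : G)⁻¹ * g⁻¹ * ((h : G) * g) = 1 := by rw [hh]; group
          calc (h : G)⁻¹ * g⁻¹ * (h : G) * g = (h : G)⁻¹ * g⁻¹ * ((h : G) * g) := by group
            _ = 1 := h6
      have hCH : C ≤ H := by
        intro h hh
        rw [hC, Subgroup.mem_centralizer_singleton_iff] at hh
        rw [hHdef, Subgroup.mem_comap, Subgroup.mem_centralizer_singleton_iff]
        show ((h * g : G) : G ⧸ N) = ((g * h : G) : G ⧸ N)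
        rw [hh]
      have hrel : C.relIndex H ∣ q := by
        rw [Subgroup.relIndex, ← hker, Subgroup.index_ker, ← hcard]
        exact Subgroup.card_subgroup_dvd_card φ.range
      have hdvd : C.index ∣ q ^ (k + 1) := by
        rw [← Subgroup.relIndex_mul_index hCH, hH, pow_succ']
        exact Nat.mul_dvd_mul hrel dvd_rfl
      obtain ⟨i, _, hi⟩ := (Nat.dvd_prime_pow hq).mp hdvd
      exact ⟨i, hi⟩

/-- If `N ≤ Z(G)` has prime order `q ∈ π`, then `|S_q(G_π)| = q · |S_q((G/N)_π)|`. -/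
theorem stmt6 {G : Type*} [Group G] [Finite G] (π : Set ℕ) (q : ℕ)
    (hq : q.Prime) (hqπ : q ∈ π) (N : Subgroup G) [N.Normal]
    (hN : N ≤ Subgroup.center G) (hcard : Nat.card N = q) :
    Nat.card {g : G // IsPiElement π g ∧
        ∃ k : ℕ, (Subgroup.centralizer {g}).index = q ^ k}
      = q * Nat.card {x : G ⧸ N // IsPiElement π x ∧
        ∃ k : ℕ, (Subgroup.centralizer {x}).index = q ^ k} := by
  have h1 : Nat.card {g : G // IsPiElement π g ∧
      ∃ k : ℕ, (Subgroup.centralizer {g}).index = q ^ k}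
      = Nat.card {g : G // IsPiElement π ((g : G ⧸ N)) ∧
      ∃ k : ℕ, (Subgroup.centralizer {((g : G ⧸ N))}).index = q ^ k} :=
    Nat.card_congr (Equiv.subtypeEquivRight
      (fun g => key_iff π q hq hqπ N hN hcard g))
  rw [h1, card_preimage_pred N
    (fun x => IsPiElement π x ∧ ∃ k : ℕ, (Subgroup.centralizer {x}).index = q ^ k), hcard]
end

section
/- Let G be a finite group, π a set of primes, and q ∈ π a prime. Then the q-part of |S_q(G_π)| equals the q-part of the order of the hypercentre of G, where S_q(G_π) is the set of π-elements of G whose conjugacy class size is a power of q. -/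
open Subgroup hiding upperCentralSeries upperCentralSeries_mono upperCentralSeries_zero upperCentralSeries_one mem_upperCentralSeries_succ_iff upperCentralSeries.map
open Function

section Helpers

variable {G : Type*} [Group G]

lemma ucs_directed : Directed (· ≤ ·) (Subgroup.upperCentralSeries G) :=
  (upperCentralSeries_mono G).directed_le

lemma mem_hyp_iff {x : G} :
    x ∈ (⨆ n, Subgroup.upperCentralSeries G n : Subgroup G) ↔ ∃ n, x ∈ Subgroup.upperCentralSeries G n :=
  mem_iSup_of_directed ucs_directed

lemma hyp_eq_bot (h : center G = ⊥) :
    (⨆ n, Subgroup.upperCentralSeries G n : Subgroup G) = ⊥ := by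
  have hall : ∀ n, Subgroup.upperCentralSeries G n = ⊥ := by
    intro n; induction n with
    | zero => rfl
    | succ n ih =>
      rw [eq_bot_iff]; intro x hx
      rw [mem_upperCentralSeries_succ_iff] at hx
      have hxc : x ∈ center G := by
        rw [Subgroup.mem_center_iff]
        intro g
        have h1 := hx g
        rw [ih, Subgroup.mem_bot] at h1
        have h2 : x * g * x⁻¹ = g := by
          rw [commutatorElement_def, mul_inv_eq_one] at h1; exact h1
        calc g * x = (x * g * x⁻¹) * x := by rw [h2]
          _ = x * g := by group
      rw [h, Subgroup.mem_bot] at hxc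
      simp [hxc]
  simp [hall]

lemma telescopeB {g h c : G} (hc : ∀ a : G, Commute c a)
    (hcomm : h⁻¹ * g * h = g * c) : ∀ m : ℕ, (h ^ m)⁻¹ * g * h ^ m = g * c ^ m := by
  intro m; induction m with
  | zero => simp
  | succ m ih =>
    have hcm : Commute (c ^ m) h := ((hc h).pow_left m)
    calc (h ^ (m+1))⁻¹ * g * h ^ (m+1) = h⁻¹ * ((h ^ m)⁻¹ * g * h ^ m) * h := by
          rw [pow_succ]; group
      _ = h⁻¹ * (g * c ^ m) * h := by rw [ih]
      _ = (h⁻¹ * g * h) * c ^ m := by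
          rw [mul_assoc, mul_assoc, hcm.eq]; group
      _ = g * c * c ^ m := by rw [hcomm]
      _ = g * c ^ (m + 1) := by rw [mul_assoc, ← pow_succ']

lemma comm_eq_one_of_coprime {g h c : G} (hc : ∀ a : G, Commute c a)
    (hcomm : h⁻¹ * g * h = g * c) (hcop : Nat.Coprime (orderOf c) (orderOf h)) : c = 1 := by
  have h1 := telescopeB hc hcomm (orderOf h)
  rw [pow_orderOf_eq_one] at h1
  simp only [inv_one, one_mul, mul_one] at h1
  have h2 : c ^ orderOf h = 1 := by
    have := h1.symm
    rwa [mul_eq_left] at this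
  have h3 : orderOf c ∣ orderOf h := orderOf_dvd_of_pow_eq_one h2
  have : orderOf c = 1 := Nat.eq_one_of_dvd_coprimes hcop (dvd_refl _) h3
  exact orderOf_eq_one_iff.mp this

lemma eq_pow_of_primes {q n : ℕ} (hn : n ≠ 0)
    (h : ∀ r, r.Prime → r ∣ n → r = q) : ∃ k, n = q ^ k :=
  ⟨_, Nat.eq_prime_pow_of_unique_prime_dvd hn (fun hd hdvd => h _ hd hdvd)⟩

end Helpers

section Quot

variable {G : Type*} [Group G] (N : Subgroup G) [N.Normal]

lemma card_preimage_mk (T : Set (G ⧸ N)) :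
    Nat.card ((QuotientGroup.mk' N) ⁻¹' T) = Nat.card T * Nat.card N := by
  set f := QuotientGroup.mk' N with hfdef
  have hf : Surjective f := QuotientGroup.mk'_surjective N
  set s : (G ⧸ N) → G := surjInv hf with hsdef
  have hs : ∀ x, f (s x) = x := fun x => surjInv_eq hf x
  have hmem : ∀ a : G, f a = 1 → a ∈ N := by
    intro a ha
    have : a ∈ MonoidHom.ker f := ha
    rwa [hfdef, QuotientGroup.ker_mk'] at this
  have e : (f ⁻¹' T) ≃ T × N :=
    { toFun := fun a => (⟨f a, a.2⟩, ⟨(s (f a))⁻¹ * a, by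
        apply hmem; rw [map_mul, map_inv, hs]; simp⟩)
      invFun := fun p => ⟨s p.1 * p.2, by
        have h2 : f (p.2 : G) = 1 := (QuotientGroup.eq_one_iff _).mpr p.2.2
        have : f ((s p.1) * p.2) = p.1 := by rw [map_mul, hs, h2, mul_one]
        show f _ ∈ T
        rw [this]; exact p.1.2⟩
      left_inv := fun a => by
        ext; simp
      right_inv := fun p => by
        have h2 : f (p.2 : G) = 1 := (QuotientGroup.eq_one_iff _).mpr p.2.2
        have h3 : f ((s p.1) * p.2) = p.1 := by rw [map_mul, hs, h2, mul_one]
        ext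
        · show f _ = _; rw [h3]
        · show (s (f ((s p.1) * p.2)))⁻¹ * ((s p.1) * p.2) = p.2
          rw [h3]; group }
  rw [Nat.card_congr e, Nat.card_prod]

lemma comap_ucs (hN : N ≤ center G) (i : ℕ) :
    (Subgroup.upperCentralSeries (G ⧸ N) i).comap (QuotientGroup.mk' N) ≤ Subgroup.upperCentralSeries G (i + 1) := by
  induction i with
  | zero =>
    intro x hx
    simp only [upperCentralSeries_zero, mem_comap, Subgroup.mem_bot] at hx
    have : x ∈ N := by
      rw [← QuotientGroup.ker_mk' N]; exact hx
    rw [upperCentralSeries_one]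
    exact hN this
  | succ i ih =>
    intro x hx
    rw [mem_comap, mem_upperCentralSeries_succ_iff] at hx
    rw [mem_upperCentralSeries_succ_iff]
    intro y
    apply ih
    rw [mem_comap]
    have := hx (QuotientGroup.mk' N y)
    simpa using this

lemma comap_hyp (hN : N ≤ center G) :
    (⨆ n, Subgroup.upperCentralSeries (G ⧸ N) n : Subgroup (G ⧸ N)).comap (QuotientGroup.mk' N)
      = (⨆ n, Subgroup.upperCentralSeries G n : Subgroup G) := by
  apply le_antisymm
  · intro x hx
    rw [mem_comap, mem_hyp_iff] at hx
    obtain ⟨i, hi⟩ := hx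
    rw [mem_hyp_iff]
    exact ⟨i + 1, comap_ucs N hN i (by rwa [mem_comap])⟩
  · intro x hx
    rw [mem_hyp_iff] at hx
    obtain ⟨i, hi⟩ := hx
    rw [mem_comap, mem_hyp_iff]
    exact ⟨i, upperCentralSeries.map (QuotientGroup.mk'_surjective N) i (mem_map_of_mem _ hi)⟩

end Quot

section LemmaE

universe u

theorem dvd_center_aux : ∀ (n : ℕ) (G : Type u) [Group G] [Finite G],
    Nat.card G ≤ n → ∀ q : ℕ, q.Prime →
    q ∣ Nat.card (⨆ m, Subgroup.upperCentralSeries G m : Subgroup G) → q ∣ Nat.card (Subgroup.center G) := by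
  intro n
  induction n with
  | zero =>
    intro G _ _ hle
    have := Nat.card_pos (α := G)
    omega
  | succ n ih =>
    intro G _ _ hle q hq hdvd
    by_cases hqZ : q ∣ Nat.card (center G)
    · exact hqZ
    -- center is nontrivial
    have hcne : center G ≠ ⊥ := by
      intro hbot
      rw [hyp_eq_bot hbot] at hdvd
      rw [Subgroup.card_bot] at hdvd
      exact hq.ne_one (Nat.dvd_one.mp hdvd)
    have hc1 : Nat.card (center G) ≠ 1 := by
      intro h1
      exact hcne (Subgroup.card_eq_one.mp h1)
    obtain ⟨p, hp, hpdvd⟩ := Nat.exists_prime_and_dvd hc1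
    have hpq : p ≠ q := fun h => hqZ (h ▸ hpdvd)
    haveI : Fact p.Prime := ⟨hp⟩
    haveI : Fact q.Prime := ⟨hq⟩
    obtain ⟨zc, hzc⟩ := exists_prime_orderOf_dvd_card' (G := center G) p hpdvd
    set z : G := (zc : G) with hzdef
    have hz : orderOf z = p := by rw [orderOf_coe]; exact hzc
    have hzcen : z ∈ center G := zc.2
    set N : Subgroup G := zpowers z with hNdef
    have hNle : N ≤ center G := by
      rw [hNdef, zpowers_le]; exact hzcen
    haveI : N.Normal := by
      constructor
      intro a ha g
      have hc := Subgroup.mem_center_iff.mp (hNle ha)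
      have : g * a * g⁻¹ = a := by rw [hc g]; group
      rw [this]; exact ha
    have cardN : Nat.card N = p := by rw [hNdef, Nat.card_zpowers, hz]
    set f := QuotientGroup.mk' N with hfdef
    have hfsurj : Surjective f := QuotientGroup.mk'_surjective N
    have cardQ : Nat.card G = Nat.card (G ⧸ N) * p := by
      rw [← cardN]; exact Subgroup.card_eq_card_quotient_mul_card_subgroup N
    have hposQ : 0 < Nat.card (G ⧸ N) := Nat.card_pos
    have hlt : Nat.card (G ⧸ N) ≤ n := by
      have h2 : Nat.card (G ⧸ N) < Nat.card G := by
        rw [cardQ]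
        exact (Nat.lt_mul_iff_one_lt_right hposQ).mpr hp.one_lt
      omega
    -- push the hypercentre forward
    set W : Subgroup G := ⨆ m, Subgroup.upperCentralSeries G m with hWdef
    set W' : Subgroup (G ⧸ N) := Subgroup.map f W with hW'def
    have hW'le : W' ≤ ⨆ m, Subgroup.upperCentralSeries (G ⧸ N) m := by
      intro xx hxx
      rw [hW'def, mem_map] at hxx
      obtain ⟨w, hw, rfl⟩ := hxx
      rw [hWdef, mem_hyp_iff] at hw
      obtain ⟨i, hi⟩ := hw
      rw [mem_hyp_iff]
      exact ⟨i, upperCentralSeries.map hfsurj i (mem_map_of_mem f hi)⟩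
    have hqW' : q ∣ Nat.card W' := by
      have hsurj2 : Surjective (f.subgroupMap W) := f.subgroupMap_surjective W
      have hcard1 : Nat.card W =
          Nat.card (↥W ⧸ MonoidHom.ker (f.subgroupMap W)) * Nat.card (MonoidHom.ker (f.subgroupMap W)) :=
        Subgroup.card_eq_card_quotient_mul_card_subgroup _
      have hcard2 : Nat.card (↥W ⧸ MonoidHom.ker (f.subgroupMap W)) = Nat.card W' :=
        Nat.card_congr (QuotientGroup.quotientKerEquivOfSurjective _ hsurj2).toEquiv
      have hker : Nat.card (MonoidHom.ker (f.subgroupMap W)) ∣ p := by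
        rw [← cardN]
        let ψ : MonoidHom.ker (f.subgroupMap W) →* N :=
          { toFun := fun x => ⟨((x : ↥W) : G), by
              have hx := x.2
              rw [MonoidHom.mem_ker] at hx
              have h1 : f ((x : ↥W) : G) = 1 := congrArg Subtype.val hx
              exact (QuotientGroup.eq_one_iff _).mp h1⟩
            map_one' := rfl
            map_mul' := fun a b => rfl }
        have : Function.Injective ψ := by
          intro a b hab
          have hv : ((ψ a : ↥N) : G) = ((ψ b : ↥N) : G) := congrArg Subtype.val hab
          exact Subtype.ext (Subtype.ext hv)
        exact card_dvd_of_injective ψ this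
      rw [hcard2] at hcard1
      have hdW : q ∣ Nat.card W' * Nat.card (MonoidHom.ker (f.subgroupMap W)) := by
        rw [← hcard1]; exact hdvd
      rcases (Nat.Prime.dvd_mul hq).mp hdW with h | h
      · exact h
      · exfalso
        have : q ∣ p := h.trans hker
        exact hpq ((Nat.prime_dvd_prime_iff_eq hq hp).mp this).symm
    have hqhyp : q ∣ Nat.card (⨆ m, Subgroup.upperCentralSeries (G ⧸ N) m : Subgroup (G ⧸ N)) :=
      hqW'.trans (Subgroup.card_dvd_of_le hW'le)
    have hqZQ := ih (G ⧸ N) hlt q hq hqhyp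
    -- Cauchy in the centre of the quotient
    obtain ⟨xc, hxc⟩ := exists_prime_orderOf_dvd_card' (G := center (G ⧸ N)) q hqZQ
    have hxord : orderOf ((xc : G ⧸ N)) = q := by rw [orderOf_coe]; exact hxc
    obtain ⟨x, hx⟩ := hfsurj (xc : G ⧸ N)
    set y : G := x ^ p with hydef
    have hfy : f y = (xc : G ⧸ N) ^ p := by rw [hydef, map_pow, hx]
    have hfyc : f y ∈ center (G ⧸ N) := by
      rw [hfy]; exact Subgroup.pow_mem _ xc.2 p
    have hcop : Nat.Coprime q p := (Nat.coprime_primes hq hp).mpr (Ne.symm hpq)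
    have hoq : orderOf (f y) = q := by
      rw [hfy, orderOf_pow, hxord, Nat.Coprime.gcd_eq_one hcop, Nat.div_one]
    have hyq : y ^ q = 1 := by
      have hxqN : x ^ q ∈ N := by
        have : f (x ^ q) = 1 := by
          rw [map_pow, hx, ← hxord, pow_orderOf_eq_one]
        exact (QuotientGroup.eq_one_iff _).mp this
      have hord : orderOf (x ^ q) ∣ p := by
        rw [← cardN, ← orderOf_mk (x ^ q) hxqN]
        exact orderOf_dvd_natCard _
      have : (x ^ q) ^ p = 1 := orderOf_dvd_iff_pow_eq_one.mp hord
      rw [hydef, ← pow_mul, mul_comm, pow_mul, this]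
    have hycen : y ∈ center G := by
      rw [Subgroup.mem_center_iff]
      intro g
      set c : G := y⁻¹ * g⁻¹ * y * g with hcdef
      have hfc : f c = 1 := by
        have hcen := Subgroup.mem_center_iff.mp hfyc (f g)⁻¹
        rw [hcdef]
        simp only [map_mul, map_inv]
        rw [mul_assoc ((f y)⁻¹) ((f g)⁻¹) (f y), hcen]
        group
      have hcN : c ∈ N := (QuotientGroup.eq_one_iff _).mp hfc
      have hccen : ∀ a : G, Commute c a := fun a =>
        (Subgroup.mem_center_iff.mp (hNle hcN) a).symm
      have hconj : g⁻¹ * y * g = y * c := by rw [hcdef]; group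
      have hcq : c ^ q = 1 := by
        have h1 : (g⁻¹ * y * g) ^ q = y ^ q * c ^ q := by
          rw [hconj]
          exact (hccen y).symm.mul_pow q
        have h2 : (g⁻¹ * y * g) ^ q = g⁻¹ * y ^ q * g := by
          have := (map_pow (MulAut.conj g⁻¹) y q).symm
          simpa using this
        rw [h2, hyq] at h1
        simp at h1
        rw [← h1]
      have hcp : c ^ p = 1 := by
        have hord : orderOf c ∣ p := by
          rw [← cardN, ← orderOf_mk c hcN]
          exact orderOf_dvd_natCard _
        exact orderOf_dvd_iff_pow_eq_one.mp hord
      have hc1 : c = 1 := by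
        have h1 : orderOf c ∣ q := orderOf_dvd_of_pow_eq_one hcq
        have h2 : orderOf c ∣ p := orderOf_dvd_of_pow_eq_one hcp
        have : orderOf c ∣ 1 := by
          have := Nat.dvd_gcd h1 h2
          rwa [Nat.Coprime.gcd_eq_one hcop] at this
        rw [Nat.dvd_one] at this
        exact orderOf_eq_one_iff.mp this
      have hfix : g⁻¹ * y * g = y := by rw [hconj, hc1, mul_one]
      have h3 : y * g = g * (g⁻¹ * y * g) := by group
      rw [hfix] at h3
      exact h3.symm
    have hfin : q ∣ orderOf y := by
      rw [← hoq]
      exact orderOf_map_dvd f y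
    have : orderOf y ∣ Nat.card (center G) := by
      rw [← orderOf_mk y hycen]
      exact orderOf_dvd_natCard _
    exact hfin.trans this

end LemmaE

section Main

universe u

variable {G : Type*} [Group G]

lemma centralizer_one_top : Subgroup.centralizer ({1} : Set G) = ⊤ := by
  rw [eq_top_iff]
  intro x _
  rw [Subgroup.mem_centralizer_iff]
  intro m hm
  rw [Set.mem_singleton_iff] at hm
  rw [hm, one_mul, mul_one]

lemma one_mem_S (π : Set ℕ) (q : ℕ) :
    IsPiElement π (1 : G) ∧ ∃ k : ℕ, (Subgroup.centralizer {(1 : G)}).index = q ^ k := by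
  constructor
  · intro p hp hdvd
    rw [orderOf_one, Nat.dvd_one] at hdvd
    exact absurd hdvd hp.ne_one
  · exact ⟨0, by rw [pow_zero, index_eq_one, centralizer_one_top]⟩

lemma conj_cancel {u a b : G} (h : u * a * u⁻¹ = u * b * u⁻¹) : a = b := by
  have h1 : u * a = u * b := mul_right_cancel h
  exact mul_left_cancel h1

lemma conj_mem_S (π : Set ℕ) (q : ℕ) (u g : G)
    (hg : IsPiElement π g ∧ ∃ k : ℕ, (Subgroup.centralizer {g}).index = q ^ k) :
    IsPiElement π (u * g * u⁻¹) ∧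
      ∃ k : ℕ, (Subgroup.centralizer {u * g * u⁻¹}).index = q ^ k := by
  have horder : orderOf (u * g * u⁻¹) = orderOf g := by
    have := orderOf_injective (MulAut.conj u).toMonoidHom (MulAut.conj u).injective g
    simpa using this
  constructor
  · intro p hp hdvd
    rw [horder] at hdvd
    exact hg.1 p hp hdvd
  · obtain ⟨k, hk⟩ := hg.2
    refine ⟨k, ?_⟩
    have hcomap : (Subgroup.centralizer {u * g * u⁻¹}).comap (MulAut.conj u).toMonoidHom
        = Subgroup.centralizer {g} := by
      ext x
      simp only [mem_comap, Subgroup.mem_centralizer_iff, Set.mem_singleton_iff, forall_eq]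
      constructor
      · intro h
        have h2 : u * (g * x) * u⁻¹ = u * (x * g) * u⁻¹ := by
          calc u * (g * x) * u⁻¹ = (u * g * u⁻¹) * (MulAut.conj u x) := by
                rw [MulAut.conj_apply]; group
            _ = (MulAut.conj u x) * (u * g * u⁻¹) := h
            _ = u * (x * g) * u⁻¹ := by rw [MulAut.conj_apply]; group
        exact conj_cancel h2
      · intro h
        have h2 : u * (g * x) * u⁻¹ = u * (x * g) * u⁻¹ := by rw [h]
        calc (u * g * u⁻¹) * (MulAut.conj u x) = u * (g * x) * u⁻¹ := by
              rw [MulAut.conj_apply]; group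
          _ = u * (x * g) * u⁻¹ := h2
          _ = (MulAut.conj u x) * (u * g * u⁻¹) := by rw [MulAut.conj_apply]; group
    rw [← hk, ← hcomap]
    exact (index_comap_of_surjective _ (MulAut.conj u).surjective).symm

theorem main_aux : ∀ (n : ℕ) (G : Type u) [Group G] [Finite G], Nat.card G ≤ n →
    ∀ (π : Set ℕ) (q : ℕ), q.Prime → q ∈ π →
    (Nat.card {g : G // IsPiElement π g ∧
        ∃ k : ℕ, (Subgroup.centralizer {g}).index = q ^ k}).factorization q
      = (Nat.card (⨆ n : ℕ, Subgroup.upperCentralSeries G n : Subgroup G)).factorization q := by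
  intro n
  induction n with
  | zero =>
    intro G _ _ hle
    have := Nat.card_pos (α := G)
    omega
  | succ n ih =>
    intro G _ _ hle π q hq hqπ
    haveI : Fact q.Prime := ⟨hq⟩
    by_cases hqZ : q ∣ Nat.card (center G)
    · -- inductive case: quotient by a central subgroup of order q
      obtain ⟨zc, hzc⟩ := exists_prime_orderOf_dvd_card' (G := center G) q hqZ
      set z : G := (zc : G) with hzdef
      have hz : orderOf z = q := by rw [orderOf_coe]; exact hzc
      have hzcen : z ∈ center G := zc.2
      set N : Subgroup G := zpowers z with hNdef
      have hNle : N ≤ center G := by rw [hNdef, zpowers_le]; exact hzcen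
      haveI : N.Normal := by
        constructor
        intro a ha g
        have hc := Subgroup.mem_center_iff.mp (hNle ha)
        have : g * a * g⁻¹ = a := by rw [hc g]; group
        rw [this]; exact ha
      have cardN : Nat.card N = q := by rw [hNdef, Nat.card_zpowers, hz]
      set f := QuotientGroup.mk' N with hfdef
      have hfsurj : Surjective f := QuotientGroup.mk'_surjective N
      have cardQ : Nat.card G = Nat.card (G ⧸ N) * q := by
        rw [← cardN]; exact Subgroup.card_eq_card_quotient_mul_card_subgroup N
      have hposQ : 0 < Nat.card (G ⧸ N) := Nat.card_pos
      have hlt : Nat.card (G ⧸ N) ≤ n := by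
        have h2 : Nat.card (G ⧸ N) < Nat.card G := by
          rw [cardQ]
          exact (Nat.lt_mul_iff_one_lt_right hposQ).mpr hq.one_lt
        omega
      have IH := ih (G ⧸ N) hlt π q hq hqπ
      -- the key equivalence
      have hkey : ∀ g : G, (IsPiElement π g ∧
          ∃ k : ℕ, (Subgroup.centralizer {g}).index = q ^ k) ↔
          (IsPiElement π (f g) ∧
          ∃ k : ℕ, (Subgroup.centralizer {f g}).index = q ^ k) := by
        intro g
        have hle2 : Subgroup.centralizer {g} ≤ (Subgroup.centralizer {f g}).comap f := by
          intro x hx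
          rw [mem_comap, Subgroup.mem_centralizer_iff]
          intro m hm
          rw [Set.mem_singleton_iff] at hm
          have hx2 := Subgroup.mem_centralizer_iff.mp hx g (Set.mem_singleton g)
          rw [hm, ← map_mul, hx2, map_mul]
        constructor
        · rintro ⟨hpi, k, hk⟩
          constructor
          · intro p hp hdvd
            exact hpi p hp (hdvd.trans (orderOf_map_dvd f g))
          · have hdvd2 : (Subgroup.centralizer {f g}).index ∣ q ^ k := by
              rw [← hk, ← index_comap_of_surjective _ hfsurj]
              exact index_dvd_of_le hle2
            obtain ⟨m, _, hm⟩ := (Nat.dvd_prime_pow hq).mp hdvd2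
            exact ⟨m, hm⟩
        · rintro ⟨hpi, k, hk⟩
          have hNpow : ∀ w : G, w ∈ N → w ^ q = 1 := by
            intro w hw
            have hord : orderOf w ∣ q := by
              rw [← cardN, ← orderOf_mk w hw]
              exact orderOf_dvd_natCard _
            exact orderOf_dvd_iff_pow_eq_one.mp hord
          constructor
          · intro p hp hdvd
            have h1 : f (g ^ orderOf (f g)) = 1 := by
              rw [map_pow, pow_orderOf_eq_one]
            have h2 : g ^ orderOf (f g) ∈ N := (QuotientGroup.eq_one_iff _).mp h1
            have h3 : g ^ (orderOf (f g) * q) = 1 := by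
              rw [pow_mul]; exact hNpow _ h2
            have h4 : orderOf g ∣ orderOf (f g) * q := orderOf_dvd_of_pow_eq_one h3
            rcases (Nat.Prime.dvd_mul hp).mp (hdvd.trans h4) with h | h
            · exact hpi p hp h
            · rw [(Nat.prime_dvd_prime_iff_eq hp hq).mp h]; exact hqπ
          · set K := (Subgroup.centralizer {f g}).comap f with hKdef
            have hKi : K.index = q ^ k := by
              rw [hKdef, index_comap_of_surjective _ hfsurj, hk]
            have hcent : ∀ h : G, h ∈ K → Nat.Coprime (orderOf h) q →
                h ∈ Subgroup.centralizer {g} := by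
              intro h hh hcop
              set c : G := g⁻¹ * h⁻¹ * g * h with hcdef
              have hcm : f g * f h = f h * f g := by
                have := Subgroup.mem_centralizer_iff.mp ((mem_comap).mp hh)
                  (f g) (Set.mem_singleton _)
                exact this
              have hfc : f c = 1 := by
                rw [hcdef]
                simp only [map_mul, map_inv]
                have hcm2 : Commute (f g) (f h) := hcm
                have hcen : (f h)⁻¹ * f g = f g * (f h)⁻¹ := (hcm2.symm.inv_left).eq
                rw [mul_assoc ((f g)⁻¹) ((f h)⁻¹) (f g), hcen]
                group
              have hcN : c ∈ N := (QuotientGroup.eq_one_iff _).mp hfc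
              have hccen : ∀ a : G, Commute c a := fun a =>
                (Subgroup.mem_center_iff.mp (hNle hcN) a).symm
              have hconj : h⁻¹ * g * h = g * c := by rw [hcdef]; group
              have hcq : orderOf c ∣ q := by
                rw [← cardN, ← orderOf_mk c hcN]
                exact orderOf_dvd_natCard _
              have hc1 : c = 1 := comm_eq_one_of_coprime hccen hconj
                (Nat.Coprime.coprime_dvd_left hcq hcop.symm)
              rw [Subgroup.mem_centralizer_iff]
              intro m hm
              rw [Set.mem_singleton_iff] at hm
              rw [hm]
              have hfix : h⁻¹ * g * h = g := by rw [hconj, hc1, mul_one]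
              have h3 : g * h = h * (h⁻¹ * g * h) := by group
              rw [hfix] at h3
              exact h3
            have hCK : Subgroup.centralizer {g} ≤ K := hle2
            have hd0 : (Subgroup.centralizer {g}).relIndex K ≠ 0 :=
              Subgroup.index_ne_zero_of_finite
            have hdq : ∀ r, r.Prime → r ∣ (Subgroup.centralizer {g}).relIndex K → r = q := by
              intro r hr hrd
              by_contra hrq
              haveI : Fact r.Prime := ⟨hr⟩
              obtain ⟨R⟩ : Nonempty (Sylow r ↥K) := Sylow.nonempty
              have hRle : (R : Subgroup ↥K) ≤ (Subgroup.centralizer {g}).subgroupOf K := by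
                intro x hx
                obtain ⟨i, hxi⟩ := R.isPGroup' ⟨x, hx⟩
                have hxi2 : (x : ↥K) ^ r ^ i = 1 := congrArg Subtype.val hxi
                have hxi3 : ((x : ↥K) : G) ^ r ^ i = 1 := by
                  have := congrArg (Subtype.val) hxi2
                  simpa using this
                have hordx : orderOf ((x : ↥K) : G) ∣ r ^ i := orderOf_dvd_of_pow_eq_one hxi3
                have hcop : Nat.Coprime (orderOf ((x : ↥K) : G)) q := by
                  rw [Nat.coprime_comm, hq.coprime_iff_not_dvd]
                  intro hqd
                  exact hrq (((Nat.prime_dvd_prime_iff_eq hq hr).mp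
                    (hq.dvd_of_dvd_pow (hqd.trans hordx)))).symm
                rw [mem_subgroupOf]
                exact hcent _ (x.2) hcop
              have hdvd3 : ((Subgroup.centralizer {g}).subgroupOf K).index
                  ∣ (R : Subgroup ↥K).index := index_dvd_of_le hRle
              exact R.not_dvd_index (hrd.trans hdvd3)
            obtain ⟨m, hm⟩ := eq_pow_of_primes hd0 hdq
            refine ⟨m + k, ?_⟩
            rw [← relIndex_mul_index hCK, hm, hKi, pow_add]
      -- counting
      set TT : Set (G ⧸ N) := {h | IsPiElement π h ∧
          ∃ k : ℕ, (Subgroup.centralizer {h}).index = q ^ k} with hTTdef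
      have hpre : (f ⁻¹' TT) = {g : G | IsPiElement π g ∧
          ∃ k : ℕ, (Subgroup.centralizer {g}).index = q ^ k} :=
        Set.ext fun g => (hkey g).symm
      have cardS : Nat.card {g : G // IsPiElement π g ∧
          ∃ k : ℕ, (Subgroup.centralizer {g}).index = q ^ k} = Nat.card TT * q := by
        have e1 : Nat.card {g : G // IsPiElement π g ∧
            ∃ k : ℕ, (Subgroup.centralizer {g}).index = q ^ k} = Nat.card (f ⁻¹' TT) :=
          Nat.card_congr (Equiv.setCongr hpre).symm
        rw [e1, card_preimage_mk N TT, cardN]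
      have cardH : Nat.card (⨆ m : ℕ, Subgroup.upperCentralSeries G m : Subgroup G)
          = Nat.card (⨆ m : ℕ, Subgroup.upperCentralSeries (G ⧸ N) m : Subgroup (G ⧸ N)) * q := by
        rw [← comap_hyp N hNle]
        have e2 : Nat.card ((⨆ m : ℕ, Subgroup.upperCentralSeries (G ⧸ N) m : Subgroup (G ⧸ N)).comap f)
            = Nat.card (f ⁻¹' ((⨆ m : ℕ, Subgroup.upperCentralSeries (G ⧸ N) m : Subgroup (G ⧸ N)) : Set (G ⧸ N))) :=
          Nat.card_congr (Equiv.setCongr (Subgroup.coe_comap _ _))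
        rw [e2, card_preimage_mk, cardN]
        rfl
      have hTT0 : Nat.card TT ≠ 0 := by
        have : Nonempty TT := ⟨⟨1, one_mem_S π q⟩⟩
        exact Nat.card_pos.ne'
      have hH0 : Nat.card (⨆ m : ℕ, Subgroup.upperCentralSeries (G ⧸ N) m : Subgroup (G ⧸ N)) ≠ 0 :=
        Nat.card_pos.ne'
      rw [cardS, cardH]
      rw [Nat.factorization_mul hTT0 hq.ne_zero, Nat.factorization_mul hH0 hq.ne_zero]
      simp only [Finsupp.add_apply]
      have IH' : (Nat.card TT).factorization q
          = (Nat.card (⨆ m : ℕ, Subgroup.upperCentralSeries (G ⧸ N) m : Subgroup (G ⧸ N))).factorization q := IH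
      rw [IH']
    · -- base case: q does not divide the centre
      have hqhyp : ¬ q ∣ Nat.card (⨆ m : ℕ, Subgroup.upperCentralSeries G m : Subgroup G) := by
        intro hd
        exact hqZ (dvd_center_aux (Nat.card G) G le_rfl q hq hd)
      rw [Nat.factorization_eq_zero_of_not_dvd hqhyp]
      -- Sylow fixed point counting
      obtain ⟨Q⟩ : Nonempty (Sylow q G) := Sylow.nonempty
      set SS := {g : G // IsPiElement π g ∧
          ∃ k : ℕ, (Subgroup.centralizer {g}).index = q ^ k} with hSSdef
      letI act : MulAction ↥(Q : Subgroup G) SS :=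
        { smul := fun u a => ⟨(u : G) * (a : G) * (u : G)⁻¹, conj_mem_S π q _ _ a.2⟩
          one_smul := fun a => by
            apply Subtype.ext
            show ((1 : ↥(Q : Subgroup G)) : G) * (a : G) * ((1 : ↥(Q : Subgroup G)) : G)⁻¹ = a
            simp
          mul_smul := fun u v a => by
            apply Subtype.ext
            show ((u * v : ↥(Q : Subgroup G)) : G) * (a : G) * ((u * v : ↥(Q : Subgroup G)) : G)⁻¹
              = (u : G) * ((v : G) * (a : G) * (v : G)⁻¹) * (u : G)⁻¹
            push_cast
            group }
      have hmod : Nat.card SS ≡ Nat.card (MulAction.fixedPoints ↥(Q : Subgroup G) SS) [MOD q] :=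
        Q.isPGroup'.card_modEq_card_fixedPoints SS
      -- the fixed points are the central π-elements
      set Cπ : Subgroup G :=
        { carrier := {g : G | g ∈ center G ∧ IsPiElement π g}
          one_mem' := ⟨Subgroup.one_mem _, (one_mem_S π q).1⟩
          mul_mem' := by
            rintro a b ⟨ha1, ha2⟩ ⟨hb1, hb2⟩
            refine ⟨Subgroup.mul_mem _ ha1 hb1, ?_⟩
            intro p hp hdvd
            have hcomm : Commute a b := (Subgroup.mem_center_iff.mp ha1 b).symm
            have hlcm := hcomm.orderOf_mul_dvd_lcm
            have : p ∣ orderOf a * orderOf b :=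
              (hdvd.trans hlcm).trans (Nat.lcm_dvd_mul _ _)
            rcases (Nat.Prime.dvd_mul hp).mp this with h | h
            · exact ha2 p hp h
            · exact hb2 p hp h
          inv_mem' := by
            rintro a ⟨ha1, ha2⟩
            refine ⟨Subgroup.inv_mem _ ha1, ?_⟩
            intro p hp hdvd
            rw [orderOf_inv] at hdvd
            exact ha2 p hp hdvd } with hCπdef
      have eFix : MulAction.fixedPoints ↥(Q : Subgroup G) SS ≃ ↥Cπ :=
        { toFun := fun a => ⟨((a : SS) : G), by
            have hfix : ∀ u : ↥(Q : Subgroup G), (u : G) * ((a : SS) : G) * (u : G)⁻¹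
                = ((a : SS) : G) := fun u => congrArg Subtype.val (a.2 u)
            have hQle : (Q : Subgroup G) ≤ Subgroup.centralizer {((a : SS) : G)} := by
              intro u hu
              rw [Subgroup.mem_centralizer_iff]
              intro m hm
              rw [Set.mem_singleton_iff] at hm
              subst hm
              have := hfix ⟨u, hu⟩
              calc ((a : SS) : G) * u = (u * ((a : SS) : G) * u⁻¹) * u := by rw [this]
                _ = u * ((a : SS) : G) := by group
            have hcen : ((a : SS) : G) ∈ center G := by
              obtain ⟨k, hk⟩ := (a : SS).2.2
              have hdvd2 : (Subgroup.centralizer {((a : SS) : G)}).index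
                  ∣ (Q : Subgroup G).index := index_dvd_of_le hQle
              have hk0 : k = 0 := by
                by_contra hk0
                have : q ∣ q ^ k := dvd_pow_self q hk0
                rw [← hk] at this
                exact Q.not_dvd_index (this.trans hdvd2)
              rw [hk0, pow_zero, index_eq_one] at hk
              rw [Subgroup.mem_center_iff]
              intro g
              have : g ∈ Subgroup.centralizer {((a : SS) : G)} := hk ▸ Subgroup.mem_top g
              exact (Subgroup.mem_centralizer_iff.mp this _ (Set.mem_singleton _)).symm
            exact ⟨hcen, (a : SS).2.1⟩⟩
          invFun := fun z => ⟨⟨(z : G), (z : ↥Cπ).2.2, ⟨0, by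
              rw [pow_zero, index_eq_one, eq_top_iff]
              intro x _
              rw [Subgroup.mem_centralizer_iff]
              intro m hm
              rw [Set.mem_singleton_iff] at hm
              subst hm
              exact (Subgroup.mem_center_iff.mp (z : ↥Cπ).2.1 x).symm⟩⟩, by
            intro u
            apply Subtype.ext
            show (u : G) * (z : G) * (u : G)⁻¹ = (z : G)
            have hcz := Subgroup.mem_center_iff.mp (z : ↥Cπ).2.1 (u : G)
            rw [hcz]; group⟩
          left_inv := fun a => by
            apply Subtype.ext; apply Subtype.ext; rfl
          right_inv := fun z => by
            apply Subtype.ext; rfl }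
      have hCle : Cπ ≤ center G := fun x hx => hx.1
      have hCdvd : Nat.card Cπ ∣ Nat.card (center G) := Subgroup.card_dvd_of_le hCle
      have hqC : ¬ q ∣ Nat.card Cπ := fun h => hqZ (h.trans hCdvd)
      have hqS : ¬ q ∣ Nat.card SS := by
        intro hdS
        apply hqC
        have h1 : Nat.card SS ≡ 0 [MOD q] := (Nat.modEq_zero_iff_dvd).mpr hdS
        have h2 := (hmod.symm.trans h1)
        rw [Nat.card_congr eFix] at h2
        exact (Nat.modEq_zero_iff_dvd).mp h2
      exact Nat.factorization_eq_zero_of_not_dvd hqS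

end Main

/-- The q-part of `|S_q(G_π)|` equals the q-part of the order of the hypercentre of `G`,
for any prime `q ∈ π`. -/
theorem stmt8 {G : Type*} [Group G] [Finite G] (π : Set ℕ) (q : ℕ)
    (hq : q.Prime) (hqπ : q ∈ π) :
    (Nat.card {g : G // IsPiElement π g ∧
        ∃ k : ℕ, (Subgroup.centralizer {g}).index = q ^ k}).factorization q
      = (Nat.card (⨆ n : ℕ, upperCentralSeries G n : Subgroup G)).factorization q :=
  main_aux (Nat.card G) G le_rfl π q hq hqπ
end

section
/- Let G be a finite group, π a set of primes, and q ∈ π. A Sylow q-subgroup of G is contained in the hypercentre Z_∞(G) if and only if the q-part of |S_q(G_π)| equals |G|_q. -/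
namespace Stmt9Aux

open Subgroup hiding upperCentralSeries upperCentralSeries_zero upperCentralSeries_one mem_upperCentralSeries_succ_iff upperCentralSeries_mono comap_upperCentralSeries_quotient_center upperCentralSeries.map
open QuotientGroup

universe u

variable {G : Type u} [Group G]

/-- The defining predicate of `S_q(G_π)`. -/
def Sq (π : Set ℕ) (q : ℕ) (g : G) : Prop :=
  IsPiElement π g ∧ ∃ k : ℕ, (Subgroup.centralizer {g}).index = q ^ k

theorem isPiElement_one {π : Set ℕ} : IsPiElement π (1 : G) := by
  intro p pp hp
  simp [orderOf_one, Nat.dvd_one] at hp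
  exact absurd hp pp.ne_one

/-- The subgroup of central π-elements. -/
def piCenter (π : Set ℕ) (G : Type u) [Group G] : Subgroup G where
  carrier := {g | g ∈ center G ∧ IsPiElement π g}
  one_mem' := ⟨one_mem _, isPiElement_one⟩
  mul_mem' := by
    rintro a b ⟨ha, hpa⟩ ⟨hb, hpb⟩
    refine ⟨mul_mem ha hb, fun p pp hp => ?_⟩
    have hc : Commute a b := (Subgroup.mem_center_iff.mp ha b).symm
    have := hp.trans (hc.orderOf_mul_dvd_lcm.trans (Nat.lcm_dvd_mul _ _))
    rcases (pp.dvd_mul).mp this with h | h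
    · exact hpa p pp h
    · exact hpb p pp h
  inv_mem' := by
    rintro a ⟨ha, hpa⟩
    exact ⟨inv_mem ha, by rwa [IsPiElement, orderOf_inv]⟩

theorem mem_piCenter {π : Set ℕ} {g : G} :
    g ∈ piCenter π G ↔ g ∈ center G ∧ IsPiElement π g := Iff.rfl

theorem sq_of_central {π : Set ℕ} {q : ℕ} {g : G} (hg : g ∈ piCenter π G) :
    Sq π q g := by
  refine ⟨hg.2, 0, ?_⟩
  rw [pow_zero, Subgroup.index_eq_one, eq_top_iff]
  intro x _
  rw [Subgroup.mem_centralizer_singleton_iff]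
  exact Subgroup.mem_center_iff.mp hg.1 x

theorem central_of_sq_of_not_dvd {π : Set ℕ} {q : ℕ} [Fact q.Prime] [Finite G] {g : G}
    (hq : ¬ q ∣ (Subgroup.centralizer {g} : Subgroup G).index) (hg : Sq π q g) :
    g ∈ piCenter π G := by
  obtain ⟨hpi, k, hk⟩ := hg
  rcases Nat.eq_zero_or_pos k with rfl | hk1
  · rw [pow_zero, Subgroup.index_eq_one] at hk
    refine ⟨Subgroup.mem_center_iff.mpr fun x => ?_, hpi⟩
    have : x ∈ centralizer {g} := hk ▸ Subgroup.mem_top x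
    exact Subgroup.mem_centralizer_singleton_iff.mp this
  · exact absurd (hk ▸ dvd_pow_self q hk1.ne') hq

theorem index_centralizer_conj (x g : G) :
    (centralizer {x * g * x⁻¹} : Subgroup G).index = (centralizer {g} : Subgroup G).index := by
  have h : comap (MulAut.conj x).toMonoidHom (centralizer {x * g * x⁻¹}) = centralizer {g} := by
    ext h
    simp only [mem_comap, MulAut.conj_apply, mem_centralizer_singleton_iff,
      MulEquiv.coe_toMonoidHom]
    constructor
    · intro hh
      have := congrArg (fun t => x⁻¹ * t * x) hh
      simpa [mul_assoc] using this
    · intro hh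
      have := congrArg (fun t => x * t * x⁻¹) hh
      simpa [mul_assoc] using this
  rw [← h, Subgroup.index_comap_of_surjective _ (MulAut.conj x).surjective]

theorem sq_conj {π : Set ℕ} {q : ℕ} (x : G) {g : G} (hg : Sq π q g) :
    Sq π q (x * g * x⁻¹) := by
  obtain ⟨hpi, k, hk⟩ := hg
  constructor
  · have : orderOf (x * g * x⁻¹) = orderOf g := by
      simpa [MulAut.conj_apply] using
        orderOf_injective (MulAut.conj x).toMonoidHom (MulAut.conj x).injective g
    rw [IsPiElement, this]; exact hpi
  · exact ⟨k, by rw [index_centralizer_conj]; exact hk⟩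

theorem sylow_index_not_dvd {q : ℕ} [Finite G] [Fact q.Prime] (Q : Sylow q G) :
    ¬ q ∣ (Q : Subgroup G).index := by
  intro h
  have h1 : Nat.card (Q : Subgroup G) * (Q : Subgroup G).index = Nat.card G :=
    Subgroup.card_mul_index _
  have h2 := Q.card_eq_multiplicity
  refine Nat.pow_succ_factorization_not_dvd (Nat.card_pos (α := G)).ne'
    (Fact.out : q.Prime) ?_
  have hd : q ^ (Nat.card G).factorization q * q ∣ Nat.card G := by
    conv_rhs => rw [← h1, h2]
    exact mul_dvd_mul_left _ h
  rwa [pow_succ]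

/-- The conjugation action of a Sylow `q`-subgroup on `S_q(G_π)`. -/
def sqAction (π : Set ℕ) (q : ℕ) [Fact q.Prime] (Q : Sylow q G) :
    MulAction Q {g : G // Sq π q g} where
  smul u s := ⟨(u : G) * s.1 * (u : G)⁻¹, sq_conj _ s.2⟩
  one_smul s := by
    ext
    show ((1 : Q) : G) * s.1 * ((1 : Q) : G)⁻¹ = s.1
    simp
  mul_smul u v s := by
    ext
    show ((u : G) * (v : G)) * s.1 * ((u : G) * (v : G))⁻¹ =
      (u : G) * ((v : G) * s.1 * (v : G)⁻¹) * (u : G)⁻¹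
    group

theorem card_sq_modEq (π : Set ℕ) (q : ℕ) [Finite G] [Fact q.Prime] (Q : Sylow q G) :
    Nat.card {g : G // Sq π q g} ≡ Nat.card (piCenter π G) [MOD q] := by
  letI := sqAction π q Q
  refine (IsPGroup.card_modEq_card_fixedPoints (p := q) Q.isPGroup'
    {g : G // Sq π q g}).trans ?_
  have e : MulAction.fixedPoints Q {g : G // Sq π q g} ≃ (piCenter π G) := by
    refine ⟨fun s => ⟨s.1.1, ?_⟩, fun w => ⟨⟨w.1, sq_of_central w.2⟩, ?_⟩, ?_, ?_⟩
    · obtain ⟨⟨g, hpi, k, hk⟩, hfix⟩ := s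
      have hQle : (Q : Subgroup G) ≤ centralizer {g} := by
        intro u hu
        have := hfix (⟨u, hu⟩ : Q)
        rw [Subtype.ext_iff] at this
        change u * g * u⁻¹ = g at this
        rw [mem_centralizer_singleton_iff]
        conv_rhs => rw [← this]
        group
      have hnd : ¬ q ∣ (centralizer {g} : Subgroup G).index := fun hdvd =>
        sylow_index_not_dvd Q (hdvd.trans (Subgroup.index_dvd_of_le hQle))
      exact central_of_sq_of_not_dvd hnd ⟨hpi, k, hk⟩
    · intro u
      ext
      change (u : G) * w.1 * (u : G)⁻¹ = w.1
      have := Subgroup.mem_center_iff.mp (mem_piCenter.mp w.2).1 (u : G)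
      rw [this]; simp
    · intro s; rfl
    · intro w; rfl
  exact (Nat.card_congr e) ▸ Nat.ModEq.refl _

theorem normal_of_le_center {H : Subgroup G} (h : H ≤ center G) : H.Normal := by
  refine ⟨fun n hn g => ?_⟩
  have hc : g * n = n * g := Subgroup.mem_center_iff.mp (h hn) g
  have e : g * n * g⁻¹ = n := by rw [hc]; simp
  rwa [e]

section Quot

variable {π : Set ℕ} {q : ℕ} [Fact q.Prime]

theorem sq_mk_of_sq (N : Subgroup G) [N.Normal] {g : G} (hg : Sq π q g) :
    Sq π q (QuotientGroup.mk' N g) := by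
  obtain ⟨hpi, k, hk⟩ := hg
  constructor
  · exact fun p pp hp => hpi p pp (hp.trans (orderOf_map_dvd _ _))
  · have hle : map (mk' N) (centralizer {g}) ≤ centralizer {(mk' N) g} := by
      rintro y ⟨x, hx, rfl⟩
      rw [mem_centralizer_singleton_iff]
      rw [← map_mul, ← map_mul, mem_centralizer_singleton_iff.mp hx]
    have h1 : (centralizer {(mk' N) g}).index ∣ q ^ k :=
      hk ▸ (Subgroup.index_dvd_of_le hle).trans
        (Subgroup.index_map_dvd _ (QuotientGroup.mk'_surjective N))
    exact (Nat.dvd_prime_pow Fact.out).mp h1 |>.imp fun j hj => hj.2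

theorem sq_of_sq_mk (hqπ : q ∈ π) (N : Subgroup G) [N.Normal] [Finite G]
    (hNc : N ≤ center G) (hNq : Nat.card N = q) {g : G}
    (hg : Sq π q ((mk' N) g)) : Sq π q g := by
  obtain ⟨hpi, k, hk⟩ := hg
  constructor
  · -- π-element
    set n := orderOf ((mk' N) g) with hn
    have h1 : g ^ n ∈ N := by
      rw [← QuotientGroup.eq_one_iff (N := N), ← mk'_apply, map_pow, pow_orderOf_eq_one]
    have h2 : orderOf (g ^ n) ∣ q := hNq ▸ N.orderOf_dvd_natCard h1
    have h3 : orderOf g ∣ n * q := orderOf_dvd_of_pow_eq_one (by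
      rw [pow_mul]; exact orderOf_dvd_iff_pow_eq_one.mp h2)
    intro p pp hp
    rcases pp.dvd_mul.mp (hp.trans h3) with h | h
    · exact hpi p pp h
    · rwa [(Nat.prime_dvd_prime_iff_eq pp Fact.out).mp h]
  · -- class size
    set D := comap (mk' N) (centralizer {(mk' N) g}) with hD
    have hDi : D.index = q ^ k := by
      rw [hD, Subgroup.index_comap_of_surjective _ (mk'_surjective N), hk]
    have hCD : centralizer {g} ≤ D := by
      intro x hx
      rw [hD, mem_comap, mem_centralizer_singleton_iff, ← map_mul, ← map_mul,
        mem_centralizer_singleton_iff.mp hx]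
    have hmem0 : ∀ x : G, ((x : G ⧸ N) * (g : G ⧸ N) = (g : G ⧸ N) * (x : G ⧸ N)) →
        x * g * x⁻¹ * g⁻¹ ∈ N := by
      intro x hx
      rw [← QuotientGroup.eq_one_iff (N := N)]
      have he : ((x * g * x⁻¹ * g⁻¹ : G) : G ⧸ N)
          = (x : G ⧸ N) * (g : G ⧸ N) * (x : G ⧸ N)⁻¹ * (g : G ⧸ N)⁻¹ := by
        simp
      rw [he, hx]
      group
    have hmem : ∀ x : D, (x : G) * g * (x : G)⁻¹ * g⁻¹ ∈ N := fun x =>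
      hmem0 x (by
        have h := mem_centralizer_singleton_iff.mp (mem_comap.mp x.2)
        simpa using h)
    let φ : D →* N := {
      toFun := fun x => ⟨(x : G) * g * (x : G)⁻¹ * g⁻¹, hmem x⟩
      map_one' := by ext; simp
      map_mul' := by
        intro x y
        ext
        push_cast
        set c := (y : G) * g * (y : G)⁻¹ * g⁻¹ with hc
        have hcN : c ∈ N := hmem y
        have key : ∀ a : G, a * c = c * a := fun a =>
          Subgroup.mem_center_iff.mp (hNc hcN) a
        have h1 : ((x : G) * (y : G)) * g * ((x : G) * (y : G))⁻¹ * g⁻¹ =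
            (x : G) * c * (g * (x : G)⁻¹ * g⁻¹) := by rw [hc]; group
        have h2 : (x : G) * c * (g * (x : G)⁻¹ * g⁻¹) =
            c * ((x : G) * g * (x : G)⁻¹ * g⁻¹) := by rw [key (x : G)]; group
        rw [h1, h2, ← key] }
    have hker : (centralizer {g}).subgroupOf D = φ.ker := by
      ext x
      simp only [mem_subgroupOf, MonoidHom.mem_ker]
      rw [mem_centralizer_singleton_iff]
      constructor
      · intro h
        ext
        show (x : G) * g * (x : G)⁻¹ * g⁻¹ = 1
        rw [h]; group
      · intro h
        have h0 := congrArg (Subtype.val) h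
        change (x : G) * g * (x : G)⁻¹ * g⁻¹ = 1 at h0
        have h1 : (x : G) * g * (x : G)⁻¹ = g := by
          rw [← mul_one ((x : G) * g * (x : G)⁻¹), ← inv_mul_cancel g, ← mul_assoc, h0, one_mul]
        calc (x : G) * g = (x : G) * g * (x : G)⁻¹ * (x : G) := by group
          _ = g * (x : G) := by rw [h1]
    have hrel : (centralizer {g}).relIndex D ∣ q := by
      rw [Subgroup.relIndex, hker, Subgroup.index_ker]
      exact hNq ▸ (φ.range.card_subgroup_dvd_card)
    have : (centralizer {g}).index ∣ q ^ (k + 1) := by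
      rw [← Subgroup.relIndex_mul_index hCD, hDi, pow_succ, mul_comm]
      exact Nat.mul_dvd_mul_left _ hrel
    exact (Nat.dvd_prime_pow Fact.out).mp this |>.imp fun j hj => hj.2

/-- A choice-based splitting of a subtype over a quotient. -/
noncomputable def subtypeQuotEquiv (N : Subgroup G) [N.Normal] (p : G ⧸ N → Prop) :
    {g : G // p ((g : G) : G ⧸ N)} ≃ {h : G ⧸ N // p h} × N where
  toFun g := (⟨(g.1 : G ⧸ N), g.2⟩,
    ⟨((g.1 : G ⧸ N)).out⁻¹ * g.1, by
      rw [← QuotientGroup.eq (s := N)]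
      exact QuotientGroup.out_eq' _⟩)
  invFun x := ⟨x.1.1.out * x.2.1, by
    have : ((x.1.1.out * x.2.1 : G) : G ⧸ N) = x.1.1 := by
      rw [QuotientGroup.mk_mul, (QuotientGroup.eq_one_iff (N := N) _).mpr x.2.2, mul_one,
        QuotientGroup.out_eq']
    rw [this]; exact x.1.2⟩
  left_inv g := by
    ext
    simp [mul_assoc]
  right_inv x := by
    have hmk : ((x.1.1.out * x.2.1 : G) : G ⧸ N) = x.1.1 := by
      rw [QuotientGroup.mk_mul, (QuotientGroup.eq_one_iff (N := N) _).mpr x.2.2, mul_one,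
        QuotientGroup.out_eq']
    refine Prod.ext (Subtype.ext hmk) (Subtype.ext ?_)
    show (((x.1.1.out * x.2.1 : G) : G ⧸ N)).out⁻¹ * (x.1.1.out * x.2.1) = x.2.1
    rw [hmk, ← mul_assoc, inv_mul_cancel, one_mul]

theorem card_sq_quot [Finite G] (hqπ : q ∈ π)
    (N : Subgroup G) [N.Normal] (hNc : N ≤ center G) (hNq : Nat.card N = q) :
    Nat.card {g : G // Sq π q g} = q * Nat.card {h : G ⧸ N // Sq π q h} := by
  have hiff : ∀ g : G, Sq π q g ↔ Sq π q ((g : G ⧸ N)) := by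
    intro g
    constructor
    · intro hg
      have := sq_mk_of_sq N hg
      simpa using this
    · intro hg
      exact sq_of_sq_mk hqπ N hNc hNq (by simpa using hg)
  have e1 : {g : G // Sq π q g} ≃ {g : G // Sq π q ((g : G) : G ⧸ N)} :=
    Equiv.subtypeEquivRight hiff
  rw [Nat.card_congr (e1.trans (subtypeQuotEquiv N (Sq π q))), Nat.card_prod, hNq, mul_comm]

theorem comap_ucs (N : Subgroup G) [N.Normal] (hNc : N ≤ center G) :
    ∀ k, comap (mk' N) (Subgroup.upperCentralSeries (G ⧸ N) k) ≤ Subgroup.upperCentralSeries G (k + 1)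
  | 0 => by
    intro x hx
    rw [mem_comap] at hx
    simp only [upperCentralSeries_zero, mem_bot, mk'_apply] at hx
    rw [upperCentralSeries_one]
    exact hNc ((QuotientGroup.eq_one_iff x).mp hx)
  | k + 1 => by
    intro x hx
    rw [mem_comap, mem_upperCentralSeries_succ_iff] at hx
    rw [mem_upperCentralSeries_succ_iff]
    intro y
    apply comap_ucs N hNc k
    rw [mem_comap]
    have h := hx ((mk' N) y)
    simpa [map_mul] using h

end Quot

theorem le_ucs_iSup_iff [Finite G] (H : Subgroup G) :
    H ≤ (⨆ n : ℕ, Subgroup.upperCentralSeries G n) ↔ ∃ m, H ≤ Subgroup.upperCentralSeries G m := by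
  constructor
  · intro h
    classical
    have := Fintype.ofFinite H
    have hdir : Directed (· ≤ ·) (Subgroup.upperCentralSeries G) :=
      (upperCentralSeries_mono (G := G)).directed_le
    have hx : ∀ x : H, ∃ n, (x : G) ∈ Subgroup.upperCentralSeries G n := fun x =>
      (Subgroup.mem_iSup_of_directed hdir).mp (h x.2)
    choose f hf using hx
    refine ⟨Finset.univ.sup f, fun x hxH => ?_⟩
    exact upperCentralSeries_mono (G := G) (Finset.le_sup (Finset.mem_univ ⟨x, hxH⟩))
      (hf ⟨x, hxH⟩)
  · rintro ⟨m, hm⟩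
    exact hm.trans (le_iSup _ m)

theorem exists_central_of_le_ucs :
    ∀ (m : ℕ) (N : Subgroup G), N.Normal → N ≤ Subgroup.upperCentralSeries G m → N ≠ ⊥ →
      ∃ x : G, x ∈ N ∧ x ∈ center G ∧ x ≠ 1
  | 0 => fun N _ hle hne => absurd (le_bot_iff.mp (by simpa using hle)) hne
  | m + 1 => fun N hN hle hne => by
    by_cases hb : N ⊓ Subgroup.upperCentralSeries G m = ⊥
    · have hcen : ∀ x ∈ N, x ∈ center G := by
        intro x hx
        rw [Subgroup.mem_center_iff]
        intro y
        have h1 : x * y * x⁻¹ * y⁻¹ ∈ Subgroup.upperCentralSeries G m :=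
          (mem_upperCentralSeries_succ_iff).mp (hle hx) y
        have h2 : x * y * x⁻¹ * y⁻¹ ∈ N := by
          have h3 := hN.conj_mem x⁻¹ (inv_mem hx) y
          have h4 : x * (y * x⁻¹ * y⁻¹) ∈ N := mul_mem hx h3
          have h5 : x * y * x⁻¹ * y⁻¹ = x * (y * x⁻¹ * y⁻¹) := by group
          rwa [h5]
        have heq : x * y * x⁻¹ * y⁻¹ = 1 := by
          have h6 : x * y * x⁻¹ * y⁻¹ ∈ N ⊓ Subgroup.upperCentralSeries G m := ⟨h2, h1⟩
          rw [hb] at h6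
          exact (Subgroup.mem_bot).mp h6
        have h4 : x * y * x⁻¹ = y := by rwa [mul_inv_eq_one] at heq
        have h5 : x * y = y * x := by rwa [mul_inv_eq_iff_eq_mul] at h4
        exact h5.symm
      obtain ⟨⟨x, hxN⟩, hx1⟩ := Subgroup.ne_bot_iff_exists_ne_one.mp hne
      refine ⟨x, hxN, hcen x hxN, ?_⟩
      simpa [Subtype.ext_iff] using hx1
    · have hNormal : (N ⊓ Subgroup.upperCentralSeries G m).Normal :=
        ⟨fun n hn g => ⟨hN.conj_mem n hn.1 g, (inferInstance : (Subgroup.upperCentralSeries G m).Normal).conj_mem n hn.2 g⟩⟩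
      obtain ⟨x, hx, hc, h1⟩ :=
        exists_central_of_le_ucs m (N ⊓ Subgroup.upperCentralSeries G m) hNormal inf_le_right hb
      exact ⟨x, hx.1, hc, h1⟩

theorem card_of_pgroup_not_dvd_index [Finite G] {q : ℕ} (hq : q.Prime) {K : Subgroup G}
    (h1 : IsPGroup q K) (h2 : ¬ q ∣ K.index) :
    Nat.card K = q ^ ((Nat.card G).factorization q) := by
  haveI := Fact.mk hq
  exact Sylow.card_eq_multiplicity (h1.toSylow h2)

theorem normal_of_pgroup_le_ucs {q : ℕ} (hq : q.Prime) :
    ∀ (m : ℕ) {G : Type u} [Group G] [Finite G] (P : Subgroup G),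
      IsPGroup q P → ¬ q ∣ P.index → P ≤ Subgroup.upperCentralSeries G m → P.Normal := by
  intro m
  induction m with
  | zero =>
    intro G _ _ P _ _ hle
    have hP : P = ⊥ := le_bot_iff.mp (by simpa using hle)
    rw [hP]
    infer_instance
  | succ m ih =>
    intro G _ _ P hP hPi hle
    set f := QuotientGroup.mk' (center G) with hf
    have hsurj := QuotientGroup.mk'_surjective (center G)
    have h1 : P ≤ comap f (Subgroup.upperCentralSeries (G ⧸ center G) m) := by
      rw [hf, comap_upperCentralSeries_quotient_center]; exact hle
    have h2 : map f P ≤ Subgroup.upperCentralSeries (G ⧸ center G) m := map_le_iff_le_comap.mpr h1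
    have h3 : IsPGroup q (map f P) := hP.map f
    have h4 : ¬ q ∣ (map f P).index := fun hd =>
      hPi (hd.trans (Subgroup.index_map_dvd _ hsurj))
    have h5 : (map f P).Normal := ih (map f P) h3 h4 h2
    have hR : (comap f (map f P)).Normal := h5.comap f
    have hcent : ∀ w : G, w ∈ center G → (∃ s, w ^ q ^ s = 1) → w ∈ P := by
      rintro w hw ⟨s, hs⟩
      haveI : (zpowers w).Normal := normal_of_le_center (zpowers_le.mpr hw)
      have how : orderOf w ∣ q ^ s := orderOf_dvd_of_pow_eq_one hs
      obtain ⟨t, -, ht⟩ := (Nat.dvd_prime_pow hq).mp how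
      have hzp : IsPGroup q ↥(zpowers w) :=
        IsPGroup.of_card (by rw [Nat.card_zpowers, ht])
      have hsup : IsPGroup q ↥(P ⊔ zpowers w) := IsPGroup.to_sup_of_normal_right hP hzp
      have hidx : ¬ q ∣ (P ⊔ zpowers w).index := fun hd =>
        hPi (hd.trans (Subgroup.index_dvd_of_le le_sup_left))
      have hcard : Nat.card ↥(P ⊔ zpowers w) ≤ Nat.card P := by
        rw [card_of_pgroup_not_dvd_index hq hP hPi,
          card_of_pgroup_not_dvd_index hq hsup hidx]
      have hEq : P = P ⊔ zpowers w := Subgroup.eq_of_le_of_card_ge le_sup_left hcard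
      have : w ∈ P ⊔ zpowers w := (le_sup_right : zpowers w ≤ P ⊔ zpowers w) (mem_zpowers w)
      rwa [← hEq] at this
    have hqR : ∀ x : G, x ∈ comap f (map f P) → (∃ s, x ^ q ^ s = 1) → x ∈ P := by
      rintro x hxR ⟨s, hs⟩
      rw [mem_comap] at hxR
      obtain ⟨p, hp, hfp⟩ := hxR
      have hw : p⁻¹ * x ∈ center G := by
        have hone : f (p⁻¹ * x) = 1 := by rw [map_mul, map_inv, hfp]; simp
        exact (QuotientGroup.eq_one_iff _).mp hone
      have hxw : x = p * (p⁻¹ * x) := by group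
      obtain ⟨t, hpt⟩ := hP ⟨p, hp⟩
      have hp' : p ^ q ^ t = 1 := by
        have := congrArg Subtype.val hpt
        simpa using this
      have hcomm : Commute p (p⁻¹ * x) := (Subgroup.mem_center_iff.mp hw p)
      have hx1 : x ^ q ^ (s + t) = 1 := by
        rw [pow_add, pow_mul, hs, one_pow]
      have hp1 : p ^ q ^ (s + t) = 1 := by
        rw [pow_add, mul_comm (q ^ s), pow_mul, hp', one_pow]
      have hwpow : (p⁻¹ * x) ^ q ^ (s + t) = 1 := by
        have hmul := hcomm.mul_pow (q ^ (s + t))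
        rw [← hxw, hx1, hp1, one_mul] at hmul
        exact hmul.symm
      have hwP : p⁻¹ * x ∈ P := hcent _ hw ⟨s + t, hwpow⟩
      rw [hxw]
      exact mul_mem hp hwP
    refine ⟨fun x hx g => ?_⟩
    have hxR : x ∈ comap f (map f P) := mem_comap.mpr (mem_map_of_mem f hx)
    have hgR : g * x * g⁻¹ ∈ comap f (map f P) := hR.conj_mem x hxR g
    obtain ⟨t, ht⟩ := hP ⟨x, hx⟩
    have hxq : x ^ q ^ t = 1 := by
      have := congrArg Subtype.val ht
      simpa using this
    exact hqR _ hgR ⟨t, by rw [conj_pow, hxq]; simp⟩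

end Stmt9Aux

section Main

open Subgroup hiding upperCentralSeries upperCentralSeries_zero upperCentralSeries_one mem_upperCentralSeries_succ_iff upperCentralSeries_mono comap_upperCentralSeries_quotient_center upperCentralSeries.map
open QuotientGroup Stmt9Aux

universe u

theorem Stmt9Aux.main : ∀ (n : ℕ) (G : Type u) [Group G] [Finite G], Nat.card G = n →
    ∀ (π : Set ℕ) (q : ℕ) [Fact q.Prime], q ∈ π →
    ((∃ Q : Sylow q G, (Q : Subgroup G) ≤ ⨆ n : ℕ, Subgroup.upperCentralSeries G n) ↔
      (Nat.card {g : G // Sq π q g}).factorization q = (Nat.card G).factorization q) := by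
  intro n
  induction n using Nat.strong_induction_on with
  | _ n ih =>
  intro G _ _ hcard π q hFq hqπ
  have hq : q.Prime := Fact.out
  by_cases hq0 : q ∣ Nat.card G
  · -- q divides |G|
    have ha1 : 0 < (Nat.card G).factorization q :=
      hq.factorization_pos_of_dvd (Nat.card_pos (α := G)).ne' hq0
    -- For any central element z of order q, quotient by ⟨z⟩ and use induction.
    constructor
    · rintro ⟨Q, hQ⟩
      obtain ⟨m, hm⟩ := (le_ucs_iSup_iff _).mp hQ
      have hPi : ¬ q ∣ (Q : Subgroup G).index := sylow_index_not_dvd Q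
      have hnormal : (Q : Subgroup G).Normal :=
        normal_of_pgroup_le_ucs hq m _ Q.isPGroup' hPi hm
      have hQbot : (Q : Subgroup G) ≠ ⊥ := by
        intro hb
        have h1 := Q.card_eq_multiplicity
        rw [hb, Subgroup.card_bot] at h1
        have : q ∣ 1 := h1 ▸ dvd_pow_self q ha1.ne'
        exact hq.one_lt.ne' (Nat.dvd_one.mp this)
      obtain ⟨z0, hz0Q, hz0c, hz0ne⟩ := exists_central_of_le_ucs m _ hnormal hm hQbot
      obtain ⟨t, hto⟩ := Q.isPGroup' ⟨z0, hz0Q⟩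
      have hz0pow : z0 ^ q ^ t = 1 := by
        have := congrArg Subtype.val hto
        simpa using this
      obtain ⟨u, -, huo⟩ := (Nat.dvd_prime_pow hq).mp (orderOf_dvd_of_pow_eq_one hz0pow)
      have hu1 : u ≠ 0 := by
        intro h
        rw [h, pow_zero] at huo
        exact hz0ne (orderOf_eq_one_iff.mp huo)
      set z := z0 ^ (q ^ (u - 1)) with hzdef
      have hzq1 : z ^ q = 1 := by
        rw [hzdef, ← pow_mul, ← pow_succ, Nat.sub_add_cancel (Nat.one_le_iff_ne_zero.mpr hu1),
          ← huo, pow_orderOf_eq_one]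
      have hzne : z ≠ 1 := by
        intro h
        have : orderOf z0 ∣ q ^ (u - 1) := orderOf_dvd_of_pow_eq_one h
        rw [huo] at this
        have := (Nat.pow_dvd_pow_iff_le_right hq.one_lt).mp this
        omega
      have hzo : orderOf z = q := by
        have hdvd : orderOf z ∣ q := orderOf_dvd_of_pow_eq_one hzq1
        rcases (Nat.Prime.eq_one_or_self_of_dvd hq _ hdvd) with h | h
        · exact absurd (orderOf_eq_one_iff.mp h) hzne
        · exact h
      have hzc : z ∈ center G := pow_mem hz0c _
      have hzQ : z ∈ (Q : Subgroup G) := pow_mem hz0Q _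
      haveI : (zpowers z).Normal := normal_of_le_center (zpowers_le.mpr hzc)
      have hNq : Nat.card (zpowers z) = q := by rw [Nat.card_zpowers, hzo]
      have hGq : Nat.card G = Nat.card (G ⧸ zpowers z) * q := by
        rw [Subgroup.card_eq_card_quotient_mul_card_subgroup (zpowers z), hNq]
      have hlt : Nat.card (G ⧸ zpowers z) < n := by
        rw [← hcard, hGq]
        exact (Nat.lt_mul_iff_one_lt_right Nat.card_pos).mpr hq.one_lt
      have hquot := ih _ hlt (G ⧸ zpowers z) rfl π q hqπ
      have hfact : ((Nat.card {g : G // Sq π q g}).factorization q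
            = (Nat.card G).factorization q) ↔
          ((Nat.card {h : G ⧸ zpowers z // Sq π q h}).factorization q
            = (Nat.card (G ⧸ zpowers z)).factorization q) := by
        have hSq : Nat.card {g : G // Sq π q g}
            = q * Nat.card {h : G ⧸ zpowers z // Sq π q h} :=
          card_sq_quot hqπ (zpowers z) (zpowers_le.mpr hzc) hNq
        haveI : Nonempty {h : G ⧸ zpowers z // Sq π q h} :=
          ⟨⟨1, sq_of_central ((piCenter π _).one_mem)⟩⟩
        have hs0 : Nat.card {h : G ⧸ zpowers z // Sq π q h} ≠ 0 := Nat.card_pos.ne'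
        have hg0 : Nat.card (G ⧸ zpowers z) ≠ 0 := Nat.card_pos.ne'
        rw [hSq, hGq, Nat.factorization_mul hq.ne_zero hs0,
          Nat.factorization_mul hg0 hq.ne_zero, Finsupp.add_apply, Finsupp.add_apply,
          Nat.Prime.factorization_self hq]
        constructor <;> intro h <;> omega
      -- the image of Q in the quotient is a Sylow subgroup contained in the hypercentre
      set f := QuotientGroup.mk' (zpowers z) with hfdef
      have hsurj := QuotientGroup.mk'_surjective (zpowers z)
      have hk : comap f (map f (Q : Subgroup G)) = (Q : Subgroup G) := by
        rw [Subgroup.comap_map_eq, QuotientGroup.ker_mk']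
        exact sup_eq_left.mpr (zpowers_le.mpr hzQ)
      have hmapP : IsPGroup q (map f (Q : Subgroup G)) := Q.isPGroup'.map f
      have hmapIdx : ¬ q ∣ (map f (Q : Subgroup G)).index := by
        intro hd
        refine sylow_index_not_dvd Q ?_
        have he : (map f (Q : Subgroup G)).index = (Q : Subgroup G).index :=
          (Subgroup.index_comap_of_surjective (map f (Q : Subgroup G)) hsurj).symm.trans
            (congrArg Subgroup.index hk)
        rwa [he] at hd
      have hmaple : map f (Q : Subgroup G) ≤ Subgroup.upperCentralSeries (G ⧸ zpowers z) m :=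
        le_trans (Subgroup.map_mono hm) (upperCentralSeries.map hsurj m)
      have hLHSquot : ∃ Qb : Sylow q (G ⧸ zpowers z),
          (Qb : Subgroup (G ⧸ zpowers z)) ≤ ⨆ n : ℕ, Subgroup.upperCentralSeries (G ⧸ zpowers z) n := by
        refine ⟨hmapP.toSylow hmapIdx, ?_⟩
        exact (le_ucs_iSup_iff _).mpr ⟨m, hmaple⟩
      exact hfact.mpr (hquot.mp hLHSquot)
    · intro hR
      have hSdvd : q ∣ Nat.card {g : G // Sq π q g} := by
        refine Nat.dvd_of_factorization_pos ?_
        rw [hR]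
        exact ha1.ne'
      obtain ⟨Q⟩ := (Sylow.nonempty : Nonempty (Sylow q G))
      have hmod := card_sq_modEq π q Q
      have hWdvd : q ∣ Nat.card (piCenter π G) :=
        Nat.modEq_zero_iff_dvd.mp
          ((hmod.symm).trans (Nat.modEq_zero_iff_dvd.mpr hSdvd))
      obtain ⟨w, hw⟩ := exists_prime_orderOf_dvd_card' (G := piCenter π G) q hWdvd
      set z := (w : G) with hzdef
      have hzc : z ∈ center G := (mem_piCenter.mp w.2).1
      have hzo : orderOf z = q := by
        rw [hzdef, Subgroup.orderOf_coe, hw]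
      haveI : (zpowers z).Normal := normal_of_le_center (zpowers_le.mpr hzc)
      have hNq : Nat.card (zpowers z) = q := by rw [Nat.card_zpowers, hzo]
      have hGq : Nat.card G = Nat.card (G ⧸ zpowers z) * q := by
        rw [Subgroup.card_eq_card_quotient_mul_card_subgroup (zpowers z), hNq]
      have hlt : Nat.card (G ⧸ zpowers z) < n := by
        rw [← hcard, hGq]
        exact (Nat.lt_mul_iff_one_lt_right Nat.card_pos).mpr hq.one_lt
      have hquot := ih _ hlt (G ⧸ zpowers z) rfl π q hqπ
      have hfact : ((Nat.card {g : G // Sq π q g}).factorization q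
            = (Nat.card G).factorization q) ↔
          ((Nat.card {h : G ⧸ zpowers z // Sq π q h}).factorization q
            = (Nat.card (G ⧸ zpowers z)).factorization q) := by
        have hSq : Nat.card {g : G // Sq π q g}
            = q * Nat.card {h : G ⧸ zpowers z // Sq π q h} :=
          card_sq_quot hqπ (zpowers z) (zpowers_le.mpr hzc) hNq
        haveI : Nonempty {h : G ⧸ zpowers z // Sq π q h} :=
          ⟨⟨1, sq_of_central ((piCenter π _).one_mem)⟩⟩
        have hs0 : Nat.card {h : G ⧸ zpowers z // Sq π q h} ≠ 0 := Nat.card_pos.ne'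
        have hg0 : Nat.card (G ⧸ zpowers z) ≠ 0 := Nat.card_pos.ne'
        rw [hSq, hGq, Nat.factorization_mul hq.ne_zero hs0,
          Nat.factorization_mul hg0 hq.ne_zero, Finsupp.add_apply, Finsupp.add_apply,
          Nat.Prime.factorization_self hq]
        constructor <;> intro h <;> omega
      obtain ⟨Qb, hQb⟩ := hquot.mpr (hfact.mp hR)
      obtain ⟨m, hm⟩ := (le_ucs_iSup_iff _).mp hQb
      have hPp : IsPGroup q (comap (mk' (zpowers z)) (Qb : Subgroup _)) := by
        refine Qb.isPGroup'.comap_of_ker_isPGroup _ ?_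
        rw [QuotientGroup.ker_mk']
        exact IsPGroup.of_card (by rw [Nat.card_zpowers, hzo, pow_one])
      have hPidx : ¬ q ∣ (comap (mk' (zpowers z)) (Qb : Subgroup _)).index := by
        rw [Subgroup.index_comap_of_surjective _ (QuotientGroup.mk'_surjective _)]
        exact sylow_index_not_dvd Qb
      refine ⟨hPp.toSylow hPidx, ?_⟩
      show comap (mk' (zpowers z)) (Qb : Subgroup _) ≤ ⨆ n : ℕ, Subgroup.upperCentralSeries G n
      refine (le_ucs_iSup_iff _).mpr ⟨m + 1, ?_⟩
      exact le_trans (Subgroup.comap_mono hm) (comap_ucs _ (zpowers_le.mpr hzc) m)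
  · -- q does not divide |G|
    have ha : (Nat.card G).factorization q = 0 := Nat.factorization_eq_zero_of_not_dvd hq0
    have hLHS : ∃ Q : Sylow q G, (Q : Subgroup G) ≤ ⨆ n : ℕ, Subgroup.upperCentralSeries G n := by
      obtain ⟨Q⟩ := (Sylow.nonempty : Nonempty (Sylow q G))
      refine ⟨Q, ?_⟩
      have hb : (Q : Subgroup G) = ⊥ := by
        refine Subgroup.eq_bot_of_card_eq _ ?_
        rw [Q.card_eq_multiplicity, ha, pow_zero]
      rw [hb]
      exact bot_le
    have hS : Nat.card {g : G // Sq π q g} = Nat.card (piCenter π G) := by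
      refine Nat.card_congr (Equiv.subtypeEquivRight fun g => ?_)
      constructor
      · intro hg
        refine central_of_sq_of_not_dvd (fun hd => hq0 ?_) hg
        exact hd.trans (Subgroup.index_dvd_card _)
      · exact sq_of_central
    have hnd : ¬ q ∣ Nat.card (piCenter π G) := fun hd =>
      hq0 (hd.trans ((piCenter π G).card_subgroup_dvd_card))
    rw [hS, ha, Nat.factorization_eq_zero_of_not_dvd hnd]
    exact iff_of_true hLHS rfl

end Main

/-- A Sylow q-subgroup of `G` is contained in the hypercentre iff the q-part of
`|S_q(G_π)|` equals `|G|_q`, for any prime `q ∈ π`. -/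
theorem stmt9 {G : Type*} [Group G] [Finite G] (π : Set ℕ) (q : ℕ)
    [Fact q.Prime] (hqπ : q ∈ π) :
    (∃ Q : Sylow q G, (Q : Subgroup G) ≤ ⨆ n : ℕ, upperCentralSeries G n) ↔
      (Nat.card {g : G // IsPiElement π g ∧
          ∃ k : ℕ, (Subgroup.centralizer {g}).index = q ^ k}).factorization q
        = (Nat.card G).factorization q := by
  exact Stmt9Aux.main (Nat.card G) G rfl π q hqπ
end

section
/- Let G be a finite group and q a prime. G has a central Sylow q-subgroup as a direct factor (equivalently, a Sylow q-subgroup of G is contained in Z_∞(G)) if and only if the number of q-elements of G whose conjugacy class size is a power of q has q-part equal to |G|_q. -/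
section MainSec

open Subgroup Pointwise

set_option linter.unusedSectionVars false
set_option maxHeartbeats 1000000

namespace Stmt10


variable {G : Type*} [Group G] {q : ℕ} [Fact q.Prime]

/-- the predicate: q-element with class size a power of q -/
def pred (q : ℕ) {G : Type*} [Group G] (g : G) : Prop :=
  (∃ m : ℕ, orderOf g = q ^ m) ∧ ∃ k : ℕ, (Subgroup.centralizer {g}).index = q ^ k

lemma centralizer_one : Subgroup.centralizer ({1} : Set G) = ⊤ := by
  rw [eq_top_iff]
  intro x _
  rw [Subgroup.mem_centralizer_iff]
  rintro y ⟨rfl⟩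
  simp

lemma pred_one : pred q (1 : G) :=
  ⟨⟨0, by simp⟩, ⟨0, by rw [centralizer_one, Subgroup.index_top, pow_zero]⟩⟩

section Quot

variable (Z : Subgroup G) [Z.Normal] (hZle : Z ≤ Subgroup.center G) (hZp : IsPGroup q Z)

include hZp in
lemma ord_iff (g : G) :
    (∃ m : ℕ, orderOf g = q ^ m) ↔ (∃ m : ℕ, orderOf (QuotientGroup.mk' Z g) = q ^ m) := by
  constructor
  · rintro ⟨m, hm⟩
    have h := orderOf_map_dvd (QuotientGroup.mk' Z) g
    rw [hm] at h
    obtain ⟨i, _, hi⟩ := (Nat.dvd_prime_pow Fact.out).mp h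
    exact ⟨i, hi⟩
  · rintro ⟨m, hm⟩
    have h1 : (QuotientGroup.mk' Z) (g ^ q ^ m) = 1 := by
      rw [map_pow, ← hm, pow_orderOf_eq_one]
    have h2 : g ^ q ^ m ∈ Z := by rwa [← QuotientGroup.ker_mk' Z]
    obtain ⟨j, hj⟩ := hZp ⟨g ^ q ^ m, h2⟩
    have h3 : g ^ (q ^ m * q ^ j) = 1 := by
      have := congrArg (Subtype.val) hj
      push_cast at this
      rwa [pow_mul]
    rw [← pow_add] at h3
    obtain ⟨i, _, hi⟩ := (Nat.dvd_prime_pow Fact.out).mp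
      ((orderOf_dvd_iff_pow_eq_one).mpr h3)
    exact ⟨i, hi⟩

end Quot



variable {G : Type*} [Group G] [Finite G] {q : ℕ} [Fact q.Prime]

section Quot

variable (Z : Subgroup G) [Z.Normal] (hZle : Z ≤ Subgroup.center G) (hZp : IsPGroup q Z)

include hZle hZp in
lemma index_iff (g : G) :
    (∃ k : ℕ, (Subgroup.centralizer {g}).index = q ^ k) ↔
      (∃ k : ℕ, (Subgroup.centralizer {QuotientGroup.mk' Z g}).index = q ^ k) := by
  set φ := QuotientGroup.mk' Z with hφ
  set H := (Subgroup.centralizer {φ g}).comap φ with hHdef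
  have hmem : ∀ h : G, h ∈ H ↔ g⁻¹ * h⁻¹ * g * h ∈ Z := by
    intro h
    rw [hHdef, Subgroup.mem_comap, mem_centralizer_singleton_iff, ← map_mul, ← map_mul]
    simp only [hφ, QuotientGroup.mk'_apply]
    rw [QuotientGroup.eq]
    constructor
    · intro hh
      convert hh using 1
      group
    · intro hh
      convert hh using 1
      group
  have hle : Subgroup.centralizer {g} ≤ H := by
    intro c hc
    rw [hmem]
    have hc' := mem_centralizer_singleton_iff.mp hc
    have : g⁻¹ * c⁻¹ * g * c = 1 := by
      rw [show g⁻¹ * c⁻¹ * g * c = (c * g)⁻¹ * (g * c) by group, inv_mul_eq_one, hc']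
    rw [this]; exact Z.one_mem
  -- the commutator homomorphism H →* Z
  have hcen : ∀ h : H, g⁻¹ * (h : G)⁻¹ * g * (h : G) ∈ Subgroup.center G :=
    fun h => hZle ((hmem h).mp h.2)
  let f : H →* Z :=
    { toFun := fun h => ⟨g⁻¹ * (h : G)⁻¹ * g * (h : G), (hmem h).mp h.2⟩
      map_one' := by
        ext; simp
      map_mul' := by
        intro h₁ h₂
        ext
        push_cast
        have hc : ∀ w : G, (g⁻¹ * (h₁ : G)⁻¹ * g * (h₁ : G)) * w
            = w * (g⁻¹ * (h₁ : G)⁻¹ * g * (h₁ : G)) :=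
          fun w => ((Subgroup.mem_center_iff.mp (hcen h₁)) w).symm
        calc g⁻¹ * ((h₁ : G) * (h₂ : G))⁻¹ * g * ((h₁ : G) * (h₂ : G))
            = (g⁻¹ * (h₂ : G)⁻¹ * g) * ((g⁻¹ * (h₁ : G)⁻¹ * g * (h₁ : G)) * (h₂ : G)) := by
              group
          _ = (g⁻¹ * (h₂ : G)⁻¹ * g) * ((h₂ : G) * (g⁻¹ * (h₁ : G)⁻¹ * g * (h₁ : G))) := by
              rw [hc]
          _ = (g⁻¹ * (h₂ : G)⁻¹ * g * (h₂ : G)) * (g⁻¹ * (h₁ : G)⁻¹ * g * (h₁ : G)) := by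
              group
          _ = (g⁻¹ * (h₁ : G)⁻¹ * g * (h₁ : G)) * (g⁻¹ * (h₂ : G)⁻¹ * g * (h₂ : G)) :=
              (hc _).symm }
  have hker : f.ker = (Subgroup.centralizer {g}).subgroupOf H := by
    ext h
    rw [MonoidHom.mem_ker, Subgroup.mem_subgroupOf, mem_centralizer_singleton_iff]
    rw [Subtype.ext_iff]
    show g⁻¹ * (h : G)⁻¹ * g * (h : G) = 1 ↔ _
    rw [show g⁻¹ * (h : G)⁻¹ * g * (h : G) = ((h : G) * g)⁻¹ * (g * (h : G)) by group,
      inv_mul_eq_one]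
  have hrel : (Subgroup.centralizer {g}).relIndex H ∣ Nat.card Z := by
    rw [Subgroup.relIndex, ← hker, Subgroup.index_ker]
    exact Subgroup.card_subgroup_dvd_card f.range
  have hkey := Subgroup.relIndex_mul_index hle
  have hHidx : H.index = (Subgroup.centralizer {φ g}).index :=
    Subgroup.index_comap_of_surjective _ (QuotientGroup.mk'_surjective Z)
  obtain ⟨b, hb⟩ := hZp.exists_card_eq
  constructor
  · rintro ⟨k, hk⟩
    have hdvd : H.index ∣ q ^ k := by
      rw [← hk, ← hkey]; exact Dvd.intro_left _ rfl
    obtain ⟨i, _, hi⟩ := (Nat.dvd_prime_pow Fact.out).mp hdvd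
    exact ⟨i, by rw [← hHidx, hi]⟩
  · rintro ⟨k, hk⟩
    obtain ⟨j, _, hj⟩ := (Nat.dvd_prime_pow Fact.out).mp (hb ▸ hrel)
    exact ⟨j + k, by rw [← hkey, hj, hHidx, hk, pow_add]⟩

end Quot



variable {G : Type*} [Group G] [Finite G] {q : ℕ} [Fact q.Prime]

section Quot

variable (Z : Subgroup G) [Z.Normal]

lemma card_preimage (p : G ⧸ Z → Prop) :
    Nat.card {g : G // p (QuotientGroup.mk' Z g)} =
      Nat.card Z * Nat.card {x : G ⧸ Z // p x} := by
  have e : {g : G // p (QuotientGroup.mk' Z g)} ≃ {x : G ⧸ Z // p x} × Z :=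
    { toFun := fun g => ⟨⟨QuotientGroup.mk' Z g.1, g.2⟩,
        ⟨(Quotient.out (QuotientGroup.mk' Z g.1 : G ⧸ Z))⁻¹ * g.1, by
          apply (QuotientGroup.eq_one_iff _).mp
          simp [QuotientGroup.mk_mul, QuotientGroup.out_eq']⟩⟩
      invFun := fun xz => ⟨(Quotient.out (xz.1.1 : G ⧸ Z)) * xz.2.1, by
        have h1 : QuotientGroup.mk' Z xz.2.1 = 1 :=
          (QuotientGroup.eq_one_iff _).mpr xz.2.2
        rw [map_mul, h1, mul_one]
        simpa [QuotientGroup.mk'_apply, QuotientGroup.out_eq'] using xz.1.2⟩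
      left_inv := by
        rintro ⟨g, hg⟩
        simp
      right_inv := by
        rintro ⟨⟨x, hx⟩, ⟨z, hz⟩⟩
        have h1 : QuotientGroup.mk' Z z = 1 :=
          (QuotientGroup.eq_one_iff _).mpr hz
        have h2 : QuotientGroup.mk' Z (Quotient.out x * z) = x := by
          rw [map_mul, h1, mul_one]
          simp [QuotientGroup.mk'_apply, QuotientGroup.out_eq']
        ext
        · simp [h2]
        · simp [h2] }
  rw [Nat.card_congr e, Nat.card_prod, mul_comm]

end Quot



variable {G : Type*} [Group G] [Finite G] {q : ℕ} [Fact q.Prime]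

lemma index_centralizer_conj (c g : G) :
    (Subgroup.centralizer {c * g * c⁻¹}).index = (Subgroup.centralizer {g}).index := by
  have hcomap : Subgroup.centralizer {c * g * c⁻¹} =
      (Subgroup.centralizer {g}).comap (MulAut.conj c⁻¹).toMonoidHom := by
    ext x
    rw [Subgroup.mem_comap, mem_centralizer_singleton_iff, mem_centralizer_singleton_iff]
    simp only [MulEquiv.coe_toMonoidHom, MulAut.conj_apply, inv_inv]
    constructor
    · intro h
      have := congrArg (fun t => c⁻¹ * t * c) h
      simp only [mul_assoc, inv_mul_cancel_left, inv_mul_cancel, mul_one] at this ⊢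
      convert this using 1 <;> group
    · intro h
      have := congrArg (fun t => c * t * c⁻¹) h
      simp only [mul_assoc] at this ⊢
      convert this using 1 <;> group
  rw [hcomap]
  exact Subgroup.index_comap_of_surjective _ (MulAut.conj c⁻¹).surjective

lemma pred_conj {g : G} (c : G) (hg : pred q g) : pred q (c * g * c⁻¹) := by
  obtain ⟨⟨m, hm⟩, ⟨k, hk⟩⟩ := hg
  constructor
  · refine ⟨m, ?_⟩
    rw [← hm]
    exact (SemiconjBy.orderOf_eq c (show c * g = (c * g * c⁻¹) * c by group)).symm
  · exact ⟨k, by rw [index_centralizer_conj, hk]⟩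

lemma exists_central_qelement
    (hdvd : q ∣ Nat.card {g : G // pred q g}) :
    ∃ x : G, x ∈ Subgroup.center G ∧ x ≠ 1 ∧ ∃ m : ℕ, orderOf x = q ^ m := by
  obtain ⟨P⟩ : Nonempty (Sylow q G) := Sylow.nonempty
  letI inst1 : SMul ↥(P : Subgroup G) {g : G // pred q g} :=
    ⟨fun p a => ⟨(p : G) * a.1 * (p : G)⁻¹, pred_conj _ a.2⟩⟩
  have hsmul : ∀ (p : ↥(P : Subgroup G)) (a : {g : G // pred q g}),
      (p • a).1 = (p : G) * a.1 * (p : G)⁻¹ := fun _ _ => rfl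
  letI : MulAction ↥(P : Subgroup G) {g : G // pred q g} :=
    { one_smul := fun a => by
        ext; rw [hsmul]; simp
      mul_smul := fun p₁ p₂ a => by
        ext
        rw [hsmul, hsmul, hsmul]
        push_cast
        simp [mul_assoc] }
  have hmod := P.2.card_modEq_card_fixedPoints {g : G // pred q g}
  have hfixdvd : q ∣ Nat.card (MulAction.fixedPoints ↥(P : Subgroup G) {g : G // pred q g}) :=
    (Nat.modEq_zero_iff_dvd).mp ((hmod.symm.trans (Nat.modEq_zero_iff_dvd.mpr hdvd)))
  have hone : (⟨1, pred_one⟩ : {g : G // pred q g}) ∈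
      MulAction.fixedPoints ↥(P : Subgroup G) {g : G // pred q g} := by
    intro p
    ext
    show (p : G) * 1 * (p : G)⁻¹ = 1
    simp
  have hpos : 0 < Nat.card (MulAction.fixedPoints ↥(P : Subgroup G) {g : G // pred q g}) :=
    Nat.card_pos_iff.mpr ⟨⟨⟨_, hone⟩⟩, Set.Finite.to_subtype (Set.toFinite _)⟩
  have h2 : 1 < Nat.card (MulAction.fixedPoints ↥(P : Subgroup G) {g : G // pred q g}) := by
    have hq2 : 2 ≤ q := (Fact.out : q.Prime).two_le
    have := Nat.le_of_dvd hpos hfixdvd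
    omega
  rw [Finite.one_lt_card_iff_nontrivial] at h2
  obtain ⟨b, hb⟩ := exists_ne (⟨⟨1, pred_one⟩, hone⟩ :
    MulAction.fixedPoints ↥(P : Subgroup G) {g : G // pred q g})
  set x : G := b.1.1 with hx
  have hx1 : x ≠ 1 := by
    intro h
    apply hb
    ext1
    ext1
    exact h
  have hPle : (P : Subgroup G) ≤ Subgroup.centralizer {x} := by
    intro p hp
    rw [mem_centralizer_singleton_iff]
    have := b.2 ⟨p, hp⟩
    have h4 := congrArg Subtype.val this
    rw [hsmul] at h4
    calc p * x = (p * x * p⁻¹) * p := by group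
      _ = x * p := by rw [h4]
  obtain ⟨k, hk⟩ := b.1.2.2
  have hdvd2 : (Subgroup.centralizer {x}).index ∣ (P : Subgroup G).index :=
    Subgroup.index_dvd_of_le hPle
  have hk0 : k = 0 := by
    by_contra hk0
    apply P.not_dvd_index
    calc (q : ℕ) ∣ q ^ k := dvd_pow_self q hk0
      _ ∣ _ := hk ▸ hdvd2
  have hcent : Subgroup.centralizer {x} = ⊤ := by
    apply Subgroup.index_eq_one.mp
    rw [hk, hk0, pow_zero]
  refine ⟨x, ?_, hx1, b.1.2.1⟩
  rw [Subgroup.mem_center_iff]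
  intro g
  exact mem_centralizer_singleton_iff.mp (hcent ▸ Subgroup.mem_top g : g ∈ Subgroup.centralizer {x})



variable {G : Type*} [Group G] [Finite G] {q : ℕ} [Fact q.Prime]

lemma ucs_le_normalizer (P : Sylow q G) :
    ∀ n, Subgroup.upperCentralSeries G n ≤ Subgroup.normalizer (P : Set G) := by
  intro n
  induction n with
  | zero => rw [Subgroup.upperCentralSeries_zero]; exact bot_le
  | succ n ih =>
    intro x hx
    rw [← Sylow.smul_eq_iff_mem_normalizer]
    have hsub : ((x • P : Sylow q G) : Subgroup G) ≤ Subgroup.normalizer (P : Set G) := by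
      intro y hy
      have hy' : y ∈ MulAut.conj x • ((P : Subgroup G) : Set G) := hy
      obtain ⟨p, hp, rfl⟩ := Set.mem_smul_set.mp hy'
      have h1 : MulAut.conj x • p = (x * p * x⁻¹ * p⁻¹) * p := by
        rw [MulAut.smul_def, MulAut.conj_apply]; group
      rw [h1]
      exact Subgroup.mul_mem _
        (ih (Subgroup.mem_upperCentralSeries_succ_iff.mp hx p))
        (Subgroup.le_normalizer hp)
    have hq : IsPGroup q ↥(((x • P : Sylow q G) : Subgroup G) ⊔ (P : Subgroup G)) :=
      IsPGroup.to_sup_of_normal_right' (x • P).2 P.2 hsub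
    have heq : ((x • P : Sylow q G) : Subgroup G) ⊔ (P : Subgroup G) = (P : Subgroup G) :=
      P.3 hq le_sup_right
    have hle : ((x • P : Sylow q G) : Subgroup G) ≤ (P : Subgroup G) :=
      le_sup_left.trans heq.le
    exact Sylow.ext ((x • P).3 P.2 hle).symm

lemma exists_ucs_eq (G : Type*) [Group G] [Finite G] :
    ∃ N, (⨆ n, Subgroup.upperCentralSeries G n) = Subgroup.upperCentralSeries G N ∧
      ∀ m, Subgroup.upperCentralSeries G m ≤ Subgroup.upperCentralSeries G N := by
  set c : ℕ → ℕ := fun n => Nat.card (Subgroup.upperCentralSeries G n) with hc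
  have hbdd : BddAbove (Set.range c) := by
    refine ⟨Nat.card G, ?_⟩
    rintro _ ⟨n, rfl⟩
    exact Subgroup.card_le_card_group _
  have hne : (Set.range c).Nonempty := ⟨c 0, ⟨0, rfl⟩⟩
  obtain ⟨N, hN⟩ := Nat.sSup_mem hne hbdd
  have hall : ∀ m, Subgroup.upperCentralSeries G m ≤ Subgroup.upperCentralSeries G N := by
    intro m
    rcases le_total m N with h | h
    · exact Subgroup.upperCentralSeries_mono G h
    · have h1 : Subgroup.upperCentralSeries G N ≤ Subgroup.upperCentralSeries G m :=
        Subgroup.upperCentralSeries_mono G h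
      have h2 : c m ≤ c N := by rw [hN]; exact le_csSup hbdd ⟨m, rfl⟩
      exact (Subgroup.eq_of_le_of_card_ge h1 h2).ge
  exact ⟨N, le_antisymm (iSup_le hall) (le_iSup _ N), hall⟩

lemma exists_central_qelement_of_sylow (P : Sylow q G)
    (hP : (P : Subgroup G) ≤ ⨆ n, Subgroup.upperCentralSeries G n) (hq : q ∣ Nat.card G) :
    ∃ x : G, x ∈ Subgroup.center G ∧ x ≠ 1 ∧ ∃ m : ℕ, orderOf x = q ^ m := by
  obtain ⟨N, hN, hall⟩ := exists_ucs_eq G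
  have hPN : (P : Subgroup G) ≤ Subgroup.upperCentralSeries G N := hN ▸ hP
  have hnorm : (P : Subgroup G).Normal := by
    rw [← Subgroup.normalizer_eq_top_iff]
    have htop := Sylow.normalizer_sup_eq_top' P hPN
    rwa [sup_of_le_left (ucs_le_normalizer P N)] at htop
  have hcard : Nat.card (P : Subgroup G) = q ^ (Nat.card G).factorization q :=
    P.card_eq_multiplicity
  have hfac : (Nat.card G).factorization q ≠ 0 := by
    have : 0 < (Nat.card G).factorization q :=
      (Fact.out : q.Prime).factorization_pos_of_dvd Nat.card_pos.ne' hq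
    omega
  have hPbot : (P : Subgroup G) ≠ ⊥ := by
    intro h
    have h1 : Nat.card (P : Subgroup G) = 1 := by rw [h]; exact Subgroup.card_bot
    have h2 : 1 < q ^ (Nat.card G).factorization q :=
      Nat.one_lt_pow hfac (Nat.Prime.one_lt (Fact.out : q.Prime))
    rw [hcard] at h1
    omega
  classical
  have hex : ∃ n, Subgroup.upperCentralSeries G n ⊓ (P : Subgroup G) ≠ ⊥ := by
    refine ⟨N, ?_⟩
    rw [inf_eq_right.mpr hPN]
    exact hPbot
  set n₀ := Nat.find hex with hn₀def
  have hn₀ : Subgroup.upperCentralSeries G n₀ ⊓ (P : Subgroup G) ≠ ⊥ := Nat.find_spec hex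
  have hn₀pos : n₀ ≠ 0 := by
    intro h
    apply hn₀
    rw [h, Subgroup.upperCentralSeries_zero, bot_inf_eq]
  obtain ⟨n₁, hn₁⟩ : ∃ n₁, n₀ = n₁ + 1 := ⟨n₀ - 1, by omega⟩
  have hmin : Subgroup.upperCentralSeries G n₁ ⊓ (P : Subgroup G) = ⊥ := by
    by_contra h
    exact Nat.find_min hex (by omega) h
  obtain ⟨x, hx, hx1⟩ : ∃ x ∈ Subgroup.upperCentralSeries G n₀ ⊓ (P : Subgroup G), x ≠ 1 := by
    by_contra h
    push_neg at h
    exact hn₀ ((Subgroup.eq_bot_iff_forall _).mpr h)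
  obtain ⟨hxZ, hxP⟩ := Subgroup.mem_inf.mp hx
  refine ⟨x, ?_, hx1, ?_⟩
  · rw [Subgroup.mem_center_iff]
    intro g
    have h1 : x * g * x⁻¹ * g⁻¹ ∈ Subgroup.upperCentralSeries G n₁ :=
      Subgroup.mem_upperCentralSeries_succ_iff.mp (hn₁ ▸ hxZ) g
    have h2 : x * g * x⁻¹ * g⁻¹ ∈ (P : Subgroup G) := by
      have ha : g * x⁻¹ * g⁻¹ ∈ (P : Subgroup G) :=
        hnorm.conj_mem x⁻¹ (Subgroup.inv_mem _ hxP) g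
      have hb := Subgroup.mul_mem _ hxP ha
      have hc : x * (g * x⁻¹ * g⁻¹) = x * g * x⁻¹ * g⁻¹ := by group
      rwa [hc] at hb
    have h3 : x * g * x⁻¹ * g⁻¹ = 1 := by
      have := hmin ▸ Subgroup.mem_inf.mpr ⟨h1, h2⟩
      exact Subgroup.mem_bot.mp this
    have h4 : x * g = g * x := by
      have h5 : x * g * x⁻¹ * g⁻¹ = (x * g) * (g * x)⁻¹ := by group
      rw [h5, mul_inv_eq_one] at h3
      exact h3
    exact h4.symm
  · have h6 : orderOf (⟨x, hxP⟩ : ↥(P : Subgroup G)) ∣ Nat.card ↥(P : Subgroup G) :=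
      orderOf_dvd_natCard _
    rw [hcard, Subgroup.orderOf_mk] at h6
    obtain ⟨i, _, hi⟩ := (Nat.dvd_prime_pow Fact.out).mp h6
    exact ⟨i, hi⟩



variable {G : Type*} [Group G] [Finite G] {q : ℕ} [Fact q.Prime]

section Quot

variable (Z : Subgroup G) [Z.Normal] (hZle : Z ≤ Subgroup.center G)

include hZle in
lemma comap_ucs : ∀ n : ℕ,
    (Subgroup.upperCentralSeries (G ⧸ Z) n).comap (QuotientGroup.mk' Z) ≤ Subgroup.upperCentralSeries G (n + 1) := by
  intro n
  induction n with
  | zero =>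
    intro g hg
    rw [Subgroup.mem_comap, Subgroup.upperCentralSeries_zero, Subgroup.mem_bot,
      QuotientGroup.mk'_apply, QuotientGroup.eq_one_iff] at hg
    rw [show (0 : ℕ) + 1 = 1 by rfl, Subgroup.upperCentralSeries_one]
    exact hZle hg
  | succ n ih =>
    intro g hg
    rw [Subgroup.mem_comap] at hg
    rw [Subgroup.mem_upperCentralSeries_succ_iff]
    intro y
    apply ih
    rw [Subgroup.mem_comap]
    have := Subgroup.mem_upperCentralSeries_succ_iff.mp hg (QuotientGroup.mk' Z y)
    simpa using this

include hZle in
lemma lhs_iff :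
    (∃ P : Sylow q G, (P : Subgroup G) ≤ ⨆ n, Subgroup.upperCentralSeries G n) ↔
      (∃ Q : Sylow q (G ⧸ Z), (Q : Subgroup (G ⧸ Z)) ≤ ⨆ n, Subgroup.upperCentralSeries (G ⧸ Z) n) := by
  constructor
  · rintro ⟨P, hP⟩
    obtain ⟨N, hN, -⟩ := exists_ucs_eq G
    refine ⟨P.mapSurjective (QuotientGroup.mk'_surjective Z), ?_⟩
    rw [Sylow.coe_mapSurjective]
    calc Subgroup.map (QuotientGroup.mk' Z) (P : Subgroup G)
        ≤ Subgroup.map (QuotientGroup.mk' Z) (Subgroup.upperCentralSeries G N) :=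
          Subgroup.map_mono (hN ▸ hP)
      _ ≤ Subgroup.upperCentralSeries (G ⧸ Z) N :=
          Subgroup.upperCentralSeries.map (QuotientGroup.mk'_surjective Z) N
      _ ≤ ⨆ n, Subgroup.upperCentralSeries (G ⧸ Z) n := le_iSup _ N
  · rintro ⟨Q, hQ⟩
    obtain ⟨M, hM, -⟩ := exists_ucs_eq (G ⧸ Z)
    obtain ⟨P⟩ : Nonempty (Sylow q G) := Sylow.nonempty
    refine ⟨P, ?_⟩
    have h1 : IsPGroup q (Subgroup.map (QuotientGroup.mk' Z) (P : Subgroup G)) :=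
      P.2.map _
    obtain ⟨Q', hQ'⟩ := h1.exists_le_sylow
    obtain ⟨c, hc⟩ := MulAction.exists_smul_eq (G ⧸ Z) Q Q'
    have hQM : (Q : Subgroup (G ⧸ Z)) ≤ Subgroup.upperCentralSeries (G ⧸ Z) M := hM ▸ hQ
    have hQ'M : (Q' : Subgroup (G ⧸ Z)) ≤ Subgroup.upperCentralSeries (G ⧸ Z) M := by
      rw [← hc]
      intro y hy
      have hy' : y ∈ MulAut.conj c • ((Q : Subgroup (G ⧸ Z)) : Set (G ⧸ Z)) := hy
      obtain ⟨p, hp, rfl⟩ := Set.mem_smul_set.mp hy'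
      have : MulAut.conj c • p = c * p * c⁻¹ := rfl
      rw [this]
      exact (inferInstance : (Subgroup.upperCentralSeries (G ⧸ Z) M).Normal).conj_mem p (hQM hp) c
    have h2 : (P : Subgroup G) ≤
        (Subgroup.upperCentralSeries (G ⧸ Z) M).comap (QuotientGroup.mk' Z) := by
      intro g hg
      rw [Subgroup.mem_comap]
      exact hQ'M (hQ' (Subgroup.mem_map_of_mem _ hg))
    calc (P : Subgroup G) ≤ Subgroup.upperCentralSeries G (M + 1) := h2.trans (comap_ucs Z hZle M)
      _ ≤ ⨆ n, Subgroup.upperCentralSeries G n := le_iSup _ (M + 1)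

end Quot

lemma q_center (x : G) (hxc : x ∈ Subgroup.center G) (hx1 : x ≠ 1)
    (hxo : ∃ m : ℕ, orderOf x = q ^ m) :
    ∃ Z : Subgroup G, Z.Normal ∧ Z ≤ Subgroup.center G ∧ IsPGroup q Z ∧ 1 < Nat.card Z := by
  obtain ⟨Q0⟩ : Nonempty (Sylow q ↥(Subgroup.center G)) := Sylow.nonempty
  set Z : Subgroup G := (Q0 : Subgroup ↥(Subgroup.center G)).map (Subgroup.center G).subtype
    with hZ
  have hle : Z ≤ Subgroup.center G := Subgroup.map_subtype_le _
  have hnormal : Z.Normal := by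
    constructor
    intro n hn g
    have hcomm : g * n * g⁻¹ = n := by
      have h0 : n * g⁻¹ = g⁻¹ * n := (Subgroup.mem_center_iff.mp (hle hn) g⁻¹).symm
      rw [mul_assoc, h0, ← mul_assoc, mul_inv_cancel, one_mul]
    rwa [hcomm]
  refine ⟨Z, hnormal, hle, Q0.2.map _, ?_⟩
  -- x ∈ Z
  obtain ⟨m, hm⟩ := hxo
  set x' : ↥(Subgroup.center G) := ⟨x, hxc⟩ with hx'
  have hpx : IsPGroup q (Subgroup.zpowers x') :=
    IsPGroup.of_card (by rw [Nat.card_zpowers, Subgroup.orderOf_mk, hm])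
  obtain ⟨Q1, hQ1⟩ := hpx.exists_le_sylow
  obtain ⟨c, hc⟩ := MulAction.exists_smul_eq ↥(Subgroup.center G) Q1 Q0
  have hx'Q1 : x' ∈ Q1 := hQ1 (Subgroup.mem_zpowers x')
  have hx'Q0 : x' ∈ Q0 := by
    have h3 : MulAut.conj c • x' ∈ ((c • Q1 : Sylow q ↥(Subgroup.center G)) :
        Set ↥(Subgroup.center G)) := Set.smul_mem_smul_set hx'Q1
    rw [hc] at h3
    have h4 : MulAut.conj c • x' = x' := by
      show c * x' * c⁻¹ = x'
      rw [show c * x' = x' * c from Subtype.ext (Subgroup.mem_center_iff.mp hxc (c : G)), mul_assoc, mul_inv_cancel, mul_one]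
    rwa [h4] at h3
  have hxZ : x ∈ Z := ⟨x', hx'Q0, rfl⟩
  rw [Subgroup.one_lt_card_iff_ne_bot]
  intro h
  rw [h, Subgroup.mem_bot] at hxZ
  exact hx1 hxZ

lemma fact_qpow_mul (b m : ℕ) (hm : m ≠ 0) :
    (q ^ b * m).factorization q = b + m.factorization q := by
  rw [Nat.factorization_mul (pow_ne_zero b (Fact.out : q.Prime).ne_zero) hm]
  rw [Nat.Prime.factorization_pow (Fact.out : q.Prime)]
  simp


end Stmt10

namespace Stmt10

variable {G : Type*} [Group G] [Finite G] {q : ℕ} [Fact q.Prime]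

lemma pred_iff (Z : Subgroup G) [Z.Normal] (hZle : Z ≤ Subgroup.center G)
    (hZp : IsPGroup q Z) (g : G) :
    pred q g ↔ pred q (QuotientGroup.mk' Z g) :=
  and_congr (ord_iff Z hZp g) (index_iff Z hZle hZp g)

lemma reduce (Z : Subgroup G) [Z.Normal] (hZle : Z ≤ Subgroup.center G)
    (hZp : IsPGroup q Z) (hZcard : 1 < Nat.card Z) :
    ((Nat.card {g : G // pred q g}).factorization q = (Nat.card G).factorization q ↔
      (Nat.card {x : G ⧸ Z // pred q x}).factorization q
        = (Nat.card (G ⧸ Z)).factorization q) := by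
  obtain ⟨b, hb⟩ := hZp.exists_card_eq
  have hb0 : b ≠ 0 := by
    rintro rfl
    rw [hb, pow_zero] at hZcard
    omega
  have hS : Nat.card {g : G // pred q g} = q ^ b * Nat.card {x : G ⧸ Z // pred q x} := by
    rw [← hb, ← card_preimage Z (pred q)]
    exact Nat.card_congr (Equiv.subtypeEquivRight (fun g => pred_iff Z hZle hZp g))
  have hG : Nat.card G = q ^ b * Nat.card (G ⧸ Z) := by
    rw [← hb, Subgroup.card_eq_card_quotient_mul_card_subgroup Z, mul_comm]
  haveI : Nonempty {x : G ⧸ Z // pred q x} := ⟨⟨1, pred_one⟩⟩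
  have hS0 : Nat.card {x : G ⧸ Z // pred q x} ≠ 0 := Nat.card_pos.ne'
  have hQ0 : Nat.card (G ⧸ Z) ≠ 0 := Nat.card_pos.ne'
  rw [hS, hG, fact_qpow_mul b _ hS0, fact_qpow_mul b _ hQ0]
  constructor <;> omega

end Stmt10

theorem stmt10_main {q : ℕ} [Fact q.Prime] : ∀ (n : ℕ) (G : Type u) [Group G] [Finite G],
    Nat.card G ≤ n →
    ((∃ P : Sylow q G, (P : Subgroup G) ≤ ⨆ k, Subgroup.upperCentralSeries G k) ↔
      (Nat.card {g : G // Stmt10.pred q g}).factorization q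
        = (Nat.card G).factorization q) := by
  open Stmt10 in
  intro n
  induction n with
  | zero =>
    intro G _ _ h
    have := Nat.card_pos (α := G)
    omega
  | succ n ih =>
    intro G _ _ hle
    by_cases hq : q ∣ Nat.card G
    · constructor
      · intro hL
        obtain ⟨P, hP⟩ := hL
        obtain ⟨x, hxc, hx1, hxo⟩ := exists_central_qelement_of_sylow P hP hq
        obtain ⟨Z, hZn, hZle, hZp, hZcard⟩ := q_center x hxc hx1 hxo
        haveI := hZn
        have hcard : Nat.card (G ⧸ Z) ≤ n := by
          have h1 : Nat.card G = Nat.card (G ⧸ Z) * Nat.card Z :=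
            Subgroup.card_eq_card_quotient_mul_card_subgroup Z
          have h2 : Nat.card (G ⧸ Z) * 2 ≤ Nat.card (G ⧸ Z) * Nat.card Z :=
            Nat.mul_le_mul_left _ hZcard
          have h3 : 0 < Nat.card (G ⧸ Z) := Nat.card_pos
          omega
        rw [reduce Z hZle hZp hZcard]
        exact (ih (G ⧸ Z) hcard).mp ((lhs_iff Z hZle).mp ⟨P, hP⟩)
      · intro hR
        have hfac : (Nat.card G).factorization q ≠ 0 := by
          have := (Fact.out : q.Prime).factorization_pos_of_dvd Nat.card_pos.ne' hq
          omega
        haveI : Nonempty {g : G // pred q g} := ⟨⟨1, pred_one⟩⟩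
        have hSdvd : q ∣ Nat.card {g : G // pred q g} := by
          apply Nat.dvd_of_factorization_pos
          rw [hR]
          exact hfac
        obtain ⟨x, hxc, hx1, hxo⟩ := exists_central_qelement hSdvd
        obtain ⟨Z, hZn, hZle, hZp, hZcard⟩ := q_center x hxc hx1 hxo
        haveI := hZn
        have hcard : Nat.card (G ⧸ Z) ≤ n := by
          have h1 : Nat.card G = Nat.card (G ⧸ Z) * Nat.card Z :=
            Subgroup.card_eq_card_quotient_mul_card_subgroup Z
          have h2 : Nat.card (G ⧸ Z) * 2 ≤ Nat.card (G ⧸ Z) * Nat.card Z :=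
            Nat.mul_le_mul_left _ hZcard
          have h3 : 0 < Nat.card (G ⧸ Z) := Nat.card_pos
          omega
        exact (lhs_iff Z hZle).mpr
          ((ih (G ⧸ Z) hcard).mpr ((reduce Z hZle hZp hZcard).mp hR))
    · apply iff_of_true
      · obtain ⟨P⟩ : Nonempty (Sylow q G) := Sylow.nonempty
        have hbot : (P : Subgroup G) = ⊥ := by
          have h1 : Nat.card (P : Subgroup G) = 1 := by
            rw [P.card_eq_multiplicity, Nat.factorization_eq_zero_of_not_dvd hq, pow_zero]
          exact Subgroup.eq_bot_of_card_eq _ h1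
        exact ⟨P, hbot ▸ bot_le⟩
      · have huniq : ∀ a : {g : G // pred q g}, a = ⟨1, pred_one⟩ := by
          rintro ⟨g, ⟨⟨m, hm⟩, hg2⟩⟩
          have hdvd : orderOf g ∣ Nat.card G := orderOf_dvd_natCard g
          have hm0 : m = 0 := by
            by_contra h
            exact hq (dvd_trans (dvd_pow_self q h) (hm ▸ hdvd))
          have : g = 1 := orderOf_eq_one_iff.mp (by rw [hm, hm0, pow_zero])
          simp [this]
        have hcard1 : Nat.card {g : G // pred q g} = 1 := by
          rw [Nat.card_eq_one_iff_unique]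
          exact ⟨⟨fun a b => (huniq a).trans (huniq b).symm⟩, ⟨⟨1, pred_one⟩⟩⟩
        rw [hcard1, Nat.factorization_eq_zero_of_not_dvd hq]
        simp

end MainSec

/-- `G` is q-decomposable (a Sylow q-subgroup lies in the hypercentre) iff the q-part of
the number of q-elements of `G` whose class size is a power of `q` equals `|G|_q`. -/
theorem stmt10 {G : Type*} [Group G] [Finite G] (q : ℕ) [Fact q.Prime] :
    (∃ Q : Sylow q G, (Q : Subgroup G) ≤ ⨆ n : ℕ, upperCentralSeries G n) ↔
      (Nat.card {g : G // (∃ m : ℕ, orderOf g = q ^ m) ∧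
          ∃ k : ℕ, (Subgroup.centralizer {g}).index = q ^ k}).factorization q
        = (Nat.card G).factorization q := by
  exact stmt10_main (Nat.card G) G le_rfl
end

section
/- Let G be a finite group, π a set of primes, and q ∈ π. Let S_{q'}(G_π) denote the set of π-elements of G whose conjugacy class size is not divisible by q. Then S_{q'}(G_π) is a union of cosets of Z := Z(G) ∩ Q, where Q is a Sylow q-subgroup of G; in particular |Z(G)|_q divides |S_{q'}(G_π)|. -/
/-- `S_{q'}(G_π)` is a union of cosets of `Z = Z(G) ⊓ Q`; in particular `|Z(G)|_q`
divides `|S_{q'}(G_π)|`. -/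
theorem stmt14 {G : Type*} [Group G] [Finite G] (π : Set ℕ) (q : ℕ)
    [Fact q.Prime] (hqπ : q ∈ π) (Q : Sylow q G) :
    (∀ g : G, (IsPiElement π g ∧ ¬ q ∣ (Subgroup.centralizer {g}).index) →
      ∀ z ∈ Subgroup.center G ⊓ (Q : Subgroup G),
        IsPiElement π (g * z) ∧ ¬ q ∣ (Subgroup.centralizer {g * z}).index) ∧
    q ^ ((Nat.card (Subgroup.center G)).factorization q) ∣
      Nat.card {g : G // IsPiElement π g ∧ ¬ q ∣ (Subgroup.centralizer {g}).index} := by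
  -- the closure property
  have part1 : ∀ g : G, (IsPiElement π g ∧ ¬ q ∣ (Subgroup.centralizer {g}).index) →
      ∀ z ∈ Subgroup.center G ⊓ (Q : Subgroup G),
        IsPiElement π (g * z) ∧ ¬ q ∣ (Subgroup.centralizer {g * z}).index := by
    rintro g ⟨hπg, hqg⟩ z hz
    obtain ⟨hzc, hzQ⟩ := hz
    have hzcomm : ∀ a : G, a * z = z * a := Subgroup.mem_center_iff.mp hzc
    have hc : Subgroup.centralizer {g * z} = Subgroup.centralizer {g} := by
      ext x
      simp only [Subgroup.mem_centralizer_iff, Set.mem_singleton_iff, forall_eq]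
      constructor
      · intro h
        have h' : g * x * z = x * g * z := by
          calc g * x * z = g * (x * z) := by rw [mul_assoc]
          _ = g * (z * x) := by rw [hzcomm x]
          _ = g * z * x := by rw [mul_assoc]
          _ = x * (g * z) := h
          _ = x * g * z := by rw [mul_assoc]
        exact mul_right_cancel h'
      · intro h
        calc g * z * x = g * (z * x) := by rw [mul_assoc]
        _ = g * (x * z) := by rw [hzcomm x]
        _ = (g * x) * z := by rw [mul_assoc]
        _ = (x * g) * z := by rw [h]
        _ = x * (g * z) := by rw [mul_assoc]
    constructor
    · intro p hp hpd
      have hcomm : Commute g z := (hzcomm g)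
      have hdvd : orderOf (g * z) ∣ Nat.lcm (orderOf g) (orderOf z) :=
        hcomm.orderOf_mul_dvd_lcm
      have : p ∣ orderOf g * orderOf z :=
        (hpd.trans hdvd).trans (Nat.lcm_dvd_mul _ _)
      rcases hp.dvd_mul.mp this with h | h
      · exact hπg p hp h
      · obtain ⟨k, hk⟩ := Q.isPGroup' ⟨z, hzQ⟩
        have hzo : orderOf z ∣ q ^ k := by
          have := orderOf_dvd_of_pow_eq_one hk
          rwa [Subgroup.orderOf_mk] at this
        have : p ∣ q := hp.dvd_of_dvd_pow (h.trans hzo)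
        rwa [(Nat.prime_dvd_prime_iff_eq hp Fact.out).mp this]
    · rw [hc]; exact hqg
  refine ⟨part1, ?_⟩
  -- Z := center ⊓ Q
  set Z : Subgroup G := Subgroup.center G ⊓ (Q : Subgroup G) with hZ
  -- the Sylow q-subgroup of the center embeds into Z
  obtain ⟨R⟩ : Nonempty (Sylow q (Subgroup.center G)) := inferInstance
  set R' : Subgroup G := (R : Subgroup (Subgroup.center G)).map (Subgroup.center G).subtype
    with hR'
  have hR'le_center : R' ≤ Subgroup.center G := by
    rintro x ⟨y, _, rfl⟩; exact y.2
  have hR'normal : R'.Normal := by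
    constructor
    intro n hn g
    have h1 := Subgroup.mem_center_iff.mp (hR'le_center hn) g⁻¹
    have : g * n * g⁻¹ = n := by
      rw [mul_assoc, ← h1, ← mul_assoc, mul_inv_cancel, one_mul]
    rwa [this]
  have hR'p : IsPGroup q R' := R.isPGroup'.map _
  have hsupp : IsPGroup q (R' ⊔ (Q : Subgroup G) : Subgroup G) :=
    hR'p.to_sup_of_normal_left Q.isPGroup'
  have hR'Q : R' ≤ (Q : Subgroup G) :=
    le_sup_left.trans (le_of_eq (Q.3 hsupp le_sup_right))
  have hR'Z : R' ≤ Z := le_inf hR'le_center hR'Q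
  have hcardR' : Nat.card R' = q ^ ((Nat.card (Subgroup.center G)).factorization q) := by
    rw [hR', Nat.card_congr
      (Subgroup.equivMapOfInjective _ _ (Subgroup.subtype_injective _)).symm.toEquiv]
    exact R.card_eq_multiplicity
  have hdvdZ : q ^ ((Nat.card (Subgroup.center G)).factorization q) ∣ Nat.card Z :=
    hcardR' ▸ Subgroup.card_dvd_of_le hR'Z
  -- the set S is a union of cosets of Z
  set S : Set G := {g : G | IsPiElement π g ∧ ¬ q ∣ (Subgroup.centralizer {g}).index} with hS
  have hpre : ((QuotientGroup.mk : G → G ⧸ Z) ⁻¹' ((QuotientGroup.mk : G → G ⧸ Z) '' S)) = S := by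
    ext x
    constructor
    · rintro ⟨g, hg, hgx⟩
      have : g⁻¹ * x ∈ Z := (QuotientGroup.eq (s := Z)).mp hgx
      have hx : x = g * (g⁻¹ * x) := by group
      rw [hS, Set.mem_setOf_eq, hx]
      exact part1 g hg _ this
    · intro hx
      exact ⟨x, hx, rfl⟩
  have hcardS : Nat.card S = Nat.card Z * Nat.card ((QuotientGroup.mk : G → G ⧸ Z) '' S) := by
    conv_lhs => rw [← hpre]
    exact QuotientGroup.card_preimage_mk Z _
  have : Nat.card {g : G // IsPiElement π g ∧ ¬ q ∣ (Subgroup.centralizer {g}).index}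
      = Nat.card S := rfl
  rw [this, hcardS]
  exact hdvdZ.mul_right _
end

section
/- Let G be a finite group, π a set of primes, q ∈ π, and Z = Z(G) ∩ Q for Q a Sylow q-subgroup. If g is a π-element of G whose conjugacy class size is not divisible by q, then the centralizer of gZ in G/Z equals C_G(g)/Z, i.e., the preimage of C_{G/Z}(gZ) in G is exactly C_G(g). -/
/-- For `Z = Z(G) ⊓ Q` and a π-element `g` with class size prime to `q`, the preimage in
`G` of `C_{G/Z}(gZ)` is exactly `C_G(g)`. -/
theorem stmt15 {G : Type*} [Group G] [Finite G] (π : Set ℕ) (q : ℕ)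
    [Fact q.Prime] (hqπ : q ∈ π) (Q : Sylow q G)
    (Z : Subgroup G) [Z.Normal] (hZ : Z = Subgroup.center G ⊓ (Q : Subgroup G))
    (g : G) (hg : IsPiElement π g) (hcs : ¬ q ∣ (Subgroup.centralizer {g}).index) :
    Subgroup.comap (QuotientGroup.mk' Z) (Subgroup.centralizer {(g : G ⧸ Z)})
      = Subgroup.centralizer {g} := by
  set c := Subgroup.centralizer {g} with hc
  set C := Subgroup.comap (QuotientGroup.mk' Z) (Subgroup.centralizer {(g : G ⧸ Z)}) with hC
  have hZc : ∀ z ∈ Z, ∀ a : G, z * a = a * z := by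
    intro z hz a
    rw [hZ] at hz
    exact (Subgroup.mem_center_iff.mp hz.1 a).symm
  have hmem : ∀ x : G, x ∈ C ↔ g⁻¹ * x⁻¹ * g * x ∈ Z := by
    intro x
    rw [hC, Subgroup.mem_comap]
    rw [Subgroup.mem_centralizer_iff]
    constructor
    · intro h
      have h1 : ((g : G ⧸ Z)) * (x : G ⧸ Z) = (x : G ⧸ Z) * (g : G ⧸ Z) :=
        h _ (Set.mem_singleton _)
      have h2 : ((g * x : G) : G ⧸ Z) = ((x * g : G) : G ⧸ Z) := by
        simpa using h1
      have h3 := (QuotientGroup.eq).mp h2.symm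
      have h4 : (x * g)⁻¹ * (g * x) = g⁻¹ * x⁻¹ * g * x := by group
      rwa [h4] at h3
    · intro h y hy
      rw [Set.mem_singleton_iff] at hy
      subst hy
      show ((g * x : G) : G ⧸ Z) = ((x * g : G) : G ⧸ Z)
      refine (QuotientGroup.eq).mpr ?_
      have h5 := Z.inv_mem h
      have h4 : (g⁻¹ * x⁻¹ * g * x)⁻¹ = (g * x)⁻¹ * (x * g) := by group
      rwa [h4] at h5
  have hle : c ≤ C := by
    intro x hx
    rw [hmem]
    have hx' : g * x = x * g := Subgroup.mem_centralizer_iff.mp hx g (Set.mem_singleton _)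
    have h1 : g⁻¹ * x⁻¹ * g * x = 1 := by
      calc g⁻¹ * x⁻¹ * g * x = g⁻¹ * x⁻¹ * (g * x) := by group
        _ = g⁻¹ * x⁻¹ * (x * g) := by rw [hx']
        _ = 1 := by group
    rw [h1]; exact Z.one_mem
  -- the commutator homomorphism
  let φ : C →* Z :=
    { toFun := fun x => ⟨g⁻¹ * (x : G)⁻¹ * g * (x : G), (hmem x).mp x.2⟩
      map_one' := by ext; simp
      map_mul' := by
        intro x y
        ext
        show g⁻¹ * ((x : G) * y)⁻¹ * g * ((x : G) * y)
          = (g⁻¹ * (x : G)⁻¹ * g * x) * (g⁻¹ * (y : G)⁻¹ * g * y)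
        set u : G := g⁻¹ * (x : G)⁻¹ * g * x with hu
        have humem : u ∈ Z := (hmem x).mp x.2
        have hgu : (x : G)⁻¹ * g * x = g * u := by rw [hu]; group
        calc g⁻¹ * ((x : G) * y)⁻¹ * g * ((x : G) * y)
            = g⁻¹ * (y : G)⁻¹ * ((x : G)⁻¹ * g * x) * y := by group
          _ = g⁻¹ * (y : G)⁻¹ * (g * u) * y := by rw [hgu]
          _ = g⁻¹ * (y : G)⁻¹ * g * (u * y) := by group
          _ = g⁻¹ * (y : G)⁻¹ * g * (y * u) := by rw [hZc u humem y]
          _ = (g⁻¹ * (y : G)⁻¹ * g * (y : G)) * u := by group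
          _ = u * (g⁻¹ * (y : G)⁻¹ * g * (y : G)) :=
              (hZc u humem (g⁻¹ * (y : G)⁻¹ * g * (y : G))).symm }
  have hker : φ.ker = c.subgroupOf C := by
    ext x
    simp only [MonoidHom.mem_ker, Subgroup.mem_subgroupOf]
    constructor
    · intro h
      have h' : g⁻¹ * (x : G)⁻¹ * g * (x : G) = 1 := congrArg Subtype.val h
      rw [hc, Subgroup.mem_centralizer_iff]
      intro y hy
      rw [Set.mem_singleton_iff] at hy
      rw [hy]
      calc g * (x : G) = (x : G) * g * (g⁻¹ * (x:G)⁻¹ * g * (x:G)) := by group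
        _ = (x : G) * g * 1 := by rw [h']
        _ = (x : G) * g := by group
    · intro h
      have h' : g * (x : G) = (x : G) * g :=
        Subgroup.mem_centralizer_iff.mp h g (Set.mem_singleton _)
      ext
      show g⁻¹ * (x : G)⁻¹ * g * (x : G) = 1
      calc g⁻¹ * (x:G)⁻¹ * g * (x:G) = g⁻¹ * (x:G)⁻¹ * (g * (x:G)) := by group
        _ = g⁻¹ * (x:G)⁻¹ * ((x:G) * g) := by rw [h']
        _ = 1 := by group
  have hrel : c.relIndex C = φ.ker.index := by
    rw [hker]; rfl
  have hdvdZ : c.relIndex C ∣ Nat.card Z := by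
    rw [hrel, Subgroup.index_ker]
    exact Subgroup.card_subgroup_dvd_card φ.range
  have hZQ : Nat.card Z ∣ Nat.card Q := by
    apply Subgroup.card_dvd_of_le
    rw [hZ]; exact inf_le_right
  obtain ⟨n, hn⟩ := IsPGroup.iff_card.mp Q.isPGroup'
  have hdvdq : c.relIndex C ∣ q ^ n := by
    rw [← hn]; exact hdvdZ.trans hZQ
  have hndvd : ¬ q ∣ c.relIndex C := by
    intro hq
    exact hcs (hq.trans ⟨C.index, (Subgroup.relIndex_mul_index hle).symm⟩)
  have hcop : Nat.Coprime (c.relIndex C) (q ^ n) :=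
    Nat.Coprime.pow_right n
      (((Nat.Prime.coprime_iff_not_dvd (Fact.out)).mpr hndvd).symm)
  have h1 : c.relIndex C = 1 := Nat.Coprime.eq_one_of_dvd hcop hdvdq
  exact le_antisymm (Subgroup.relIndex_eq_one.mp h1) hle
end

section
/- Let G be a finite group, π a set of primes, and q ∈ π. If the q-part of |S_{q'}(G_π)| equals |Z(G)|_q, then Z(Q) ≤ Z(G) for Q a Sylow q-subgroup of G. -/
section Aux

variable {G : Type*} [Group G]

/-- equal subgroups from le + card le -/
lemma mySubgroup.eq_of_le_of_card_le [Finite G] {H K : Subgroup G} (hle : H ≤ K)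
    (hc : Nat.card K ≤ Nat.card H) : H = K := by
  have e := (Subgroup.subgroupOfEquivOfLe hle).toEquiv
  have hcard : Nat.card (H.subgroupOf K) = Nat.card K := by
    rw [Nat.card_congr e]
    exact le_antisymm (Subgroup.card_le_of_le hle) hc
  have htop := Subgroup.eq_top_of_card_eq (H.subgroupOf K) hcard
  exact le_antisymm hle (by rwa [Subgroup.subgroupOf_eq_top] at htop)

/-- Sylow subgroups of `G` inside a subgroup `H` of `q'`-index are counted by the Sylow
subgroups of `H`. -/
lemma mySylow_count [Finite G] {q : ℕ} [Fact q.Prime] (H : Subgroup G) (hH : ¬ q ∣ H.index) :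
    Nat.card {P : Sylow q G // ↑P ≤ H} = Nat.card (Sylow q H) := by
  have hfac : (Nat.card H).factorization q = (Nat.card G).factorization q := by
    have hmul := H.card_mul_index
    have h1 : (Nat.card H : ℕ) ≠ 0 := Nat.card_pos.ne'
    have h2 : H.index ≠ 0 := Subgroup.index_ne_zero_of_finite
    have h3 : (Nat.card H * H.index).factorization q = (Nat.card G).factorization q := by
      rw [hmul]
    rwa [Nat.factorization_mul h1 h2, Finsupp.add_apply,
      Nat.factorization_eq_zero_of_not_dvd hH, add_zero] at h3
  refine Nat.card_eq_of_bijective (fun P => P.1.subtype P.2) ⟨?_, ?_⟩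
  · rintro ⟨P, hP⟩ ⟨P', hP'⟩ hPP'
    exact Subtype.ext (Sylow.subtype_injective hPP')
  · intro R
    have hR' : IsPGroup q ((R : Subgroup H).map H.subtype) := R.2.map H.subtype
    obtain ⟨P, hle⟩ := hR'.exists_le_sylow
    have hcardR : Nat.card ((R : Subgroup H).map H.subtype) = Nat.card R := by
      rw [Nat.card_congr (Subgroup.equivMapOfInjective _ H.subtype H.subtype_injective).toEquiv.symm]
    have hcardR' : Nat.card ((R : Subgroup H).map H.subtype) = Nat.card P := by
      rw [hcardR, R.card_eq_multiplicity, P.card_eq_multiplicity, hfac]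
    have hPeq : (R : Subgroup H).map H.subtype = ↑P :=
      mySubgroup.eq_of_le_of_card_le hle (le_of_eq hcardR'.symm)
    have hPH : ↑P ≤ H := hPeq ▸ Subgroup.map_subtype_le _
    refine ⟨⟨P, hPH⟩, ?_⟩
    apply Sylow.ext
    rw [Sylow.coe_subtype, ← hPeq, Subgroup.subgroupOf, Subgroup.comap_map_eq_self_of_injective
      H.subtype_injective]

/-- Sum over a set stable under right multiplication by a subgroup, of an invariant function
each of whose values is divisible by `d`, is divisible by `|M| * d`. -/
lemma myCoset_sum [Fintype G] (M : Subgroup G) (f : G → ℕ) (d : ℕ)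
    (hf : ∀ a : G, ∀ m ∈ M, f (a * m) = f a) :
    ∀ A : Finset G, (∀ a ∈ A, ∀ m ∈ M, a * m ∈ A) → (∀ a ∈ A, d ∣ f a) →
      Nat.card M * d ∣ ∑ a ∈ A, f a := by
  classical
  intro A
  induction A using Finset.strongInduction with
  | _ A ih =>
    intro hA hd
    rcases A.eq_empty_or_nonempty with rfl | ⟨a, ha⟩
    · simp
    · set C : Finset G := (M : Set G).toFinset.image (a * ·) with hC
      have haC : a ∈ C := by
        simp only [hC, Finset.mem_image, Set.mem_toFinset]
        exact ⟨1, M.one_mem, mul_one a⟩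
      have hmemC : ∀ x, x ∈ C ↔ ∃ m ∈ M, a * m = x := by
        intro x
        simp only [hC, Finset.mem_image, Set.mem_toFinset]
        tauto
      have hCA : C ⊆ A := by
        intro x hx
        obtain ⟨m, hm, rfl⟩ := (hmemC x).mp hx
        exact hA a ha m hm
      have hCcard : C.card = Nat.card M := by
        rw [hC, Finset.card_image_of_injective _ (mul_right_injective a),
          Set.toFinset_card, Nat.card_eq_fintype_card]
        rfl
      have hfC : ∀ x ∈ C, f x = f a := by
        intro x hx
        obtain ⟨m, hm, rfl⟩ := (hmemC x).mp hx
        exact hf a m hm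
      have key : ∑ x ∈ C, f x = Nat.card M * f a := by
        rw [Finset.sum_congr rfl hfC, Finset.sum_const, hCcard, smul_eq_mul]
      have hsplit : A = C ∪ (A \ C) := (Finset.union_sdiff_of_subset hCA).symm
      rw [hsplit, Finset.sum_union Finset.disjoint_sdiff, key]
      refine dvd_add (mul_dvd_mul_left _ (hd a ha)) (ih _ (Finset.sdiff_ssubset hCA ⟨a, haC⟩) ?_ ?_)
      · intro b hb m hm
        rw [Finset.mem_sdiff] at hb ⊢
        refine ⟨hA b hb.1 m hm, fun hbm => hb.2 ?_⟩
        obtain ⟨m', hm', hmeq⟩ := (hmemC _).mp hbm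
        rw [hmemC]
        exact ⟨m' * m⁻¹, M.mul_mem hm' (M.inv_mem hm), by
          rw [← mul_assoc, hmeq, mul_assoc, mul_inv_cancel, mul_one]⟩
      · exact fun b hb => hd b (Finset.mem_sdiff.mp hb).1

lemma myCentralizer_mul {g n : G} (hn : ∀ u : G, n * u = u * n) :
    Subgroup.centralizer {g * n} = Subgroup.centralizer ({g} : Set G) := by
  ext u
  simp only [Subgroup.mem_centralizer_singleton_iff]
  rw [mul_assoc g n u, hn u, ← mul_assoc, ← mul_assoc, mul_left_inj]

lemma myIsPiElement_mul {π : Set ℕ} {q : ℕ} (hq : q.Prime) (hqπ : q ∈ π) {g m : G}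
    (hg : IsPiElement π g) (hc : Commute g m) (hm : ∃ k, orderOf m ∣ q ^ k) :
    IsPiElement π (g * m) := by
  intro p hp hdvd
  have h1 : orderOf (g * m) ∣ orderOf g * orderOf m :=
    dvd_trans hc.orderOf_mul_dvd_lcm (Nat.lcm_dvd_mul _ _)
  rcases (Nat.Prime.dvd_mul hp).mp (hdvd.trans h1) with h | h
  · exact hg p hp h
  · obtain ⟨k, hk⟩ := hm
    have : p ∣ q := hp.dvd_of_dvd_pow (h.trans hk)
    rwa [(Nat.prime_dvd_prime_iff_eq hp hq).mp this]

lemma myConj_orderOf (c g : G) : orderOf (c * g * c⁻¹) = orderOf g := by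
  have : c * g * c⁻¹ = (MulAut.conj c).toMonoidHom g := rfl
  rw [this, orderOf_injective _ (MulAut.conj c).injective]

lemma myConj_mul (c v g : G) : (c * v * c⁻¹) * (c * g * c⁻¹) = c * (v * g) * c⁻¹ := by
  group

lemma myIsPiElement_conj {π : Set ℕ} {g : G} (c : G) (hg : IsPiElement π g) :
    IsPiElement π (c * g * c⁻¹) := by
  intro p hp hdvd
  rw [myConj_orderOf] at hdvd
  exact hg p hp hdvd

end Aux

/-- If the q-part of `|S_{q'}(G_π)|` equals `|Z(G)|_q`, then `Z(Q) ≤ Z(G)` for a Sylow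
q-subgroup `Q` of `G`. -/
theorem stmt16 {G : Type*} [Group G] [Finite G] (π : Set ℕ) (q : ℕ)
    [Fact q.Prime] (hqπ : q ∈ π) (Q : Sylow q G)
    (h : (Nat.card {g : G // IsPiElement π g ∧
            ¬ q ∣ (Subgroup.centralizer {g}).index}).factorization q
          = (Nat.card (Subgroup.center G)).factorization q) :
    ∀ x ∈ (Q : Subgroup G), (∀ y ∈ (Q : Subgroup G), x * y = y * x) →
      x ∈ Subgroup.center G := by
  classical
  intro x hxQ hxcomm
  by_contra hxZ
  letI : Fintype G := Fintype.ofFinite G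
  letI : Fintype (Sylow q G) := Fintype.ofFinite _
  have hq : q.Prime := Fact.out
  set a : ℕ := (Nat.card (Subgroup.center G)).factorization q with ha
  -- the Sylow q-subgroup of the center, as a subgroup of G
  obtain ⟨R⟩ : Nonempty (Sylow q (Subgroup.center G)) := inferInstance
  set N : Subgroup G := (R : Subgroup (Subgroup.center G)).map (Subgroup.center G).subtype with hN
  have hNle : N ≤ Subgroup.center G := Subgroup.map_subtype_le _
  have hNcard : Nat.card N = q ^ a := by
    rw [hN, ← Nat.card_congr (Subgroup.equivMapOfInjective _ _
      (Subgroup.center G).subtype_injective).toEquiv, R.card_eq_multiplicity]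
  have hNcomm : ∀ n ∈ N, ∀ u : G, n * u = u * n :=
    fun n hn u => (Subgroup.mem_center_iff.mp (hNle hn) u).symm
  have hNq : IsPGroup q N := R.2.map _
  haveI hNnormal : N.Normal := ⟨fun n hn g => by
    rw [← hNcomm n hn g, mul_assoc, mul_inv_cancel, mul_one]; exact hn⟩
  set M : Subgroup G := N ⊔ Subgroup.zpowers x with hM
  have hxq : IsPGroup q (Subgroup.zpowers x) := Q.2.to_le (Subgroup.zpowers_le.mpr hxQ)
  have hMq : IsPGroup q M := hNq.to_sup_of_normal_left hxq
  have hNM : N ≤ M := le_sup_left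
  have hzM : Subgroup.zpowers x ≤ M := le_sup_right
  have hxM : x ∈ M := hzM (Subgroup.mem_zpowers x)
  -- elements of M commute with Q
  have hMcomm : ∀ m ∈ M, ∀ u ∈ (Q : Subgroup G), m * u = u * m := by
    have hle : M ≤ Subgroup.centralizer ((Q : Subgroup G) : Set G) := by
      rw [hM, sup_le_iff]
      constructor
      · intro n hn
        rw [Subgroup.mem_centralizer_iff]
        intro u _
        exact (hNcomm n hn u).symm
      · rw [Subgroup.zpowers_le, Subgroup.mem_centralizer_iff]
        intro u hu
        exact (hxcomm u hu).symm
    intro m hm u hu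
    exact (Subgroup.mem_centralizer_iff.mp (hle hm) u hu).symm
  -- elements of M (and hence N) have q-power order
  have hMord : ∀ m ∈ M, ∃ k, orderOf m ∣ q ^ k := by
    intro m hm
    obtain ⟨k, hk⟩ := hMq ⟨m, hm⟩
    refine ⟨k, orderOf_dvd_of_pow_eq_one ?_⟩
    have := congrArg (M.subtype) hk
    simpa using this
  have hNord : ∀ n ∈ N, ∃ k, orderOf n ∣ q ^ k := fun n hn => hMord n (hNM hn)
  -- q^(a+1) divides |M|
  have hMcard : q ^ (a + 1) ∣ Nat.card M := by
    obtain ⟨k, hk⟩ := IsPGroup.iff_card.mp hMq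
    have hdvd1 : Nat.card N ∣ Nat.card M := Subgroup.card_dvd_of_le hNM
    rw [hNcard, hk] at hdvd1
    have hak : a ≤ k := (Nat.pow_dvd_pow_iff_le_right hq.one_lt).mp hdvd1
    rcases lt_or_eq_of_le hak with hlt | heq
    · rw [hk]; exact pow_dvd_pow q hlt
    · exfalso
      have : N = M := mySubgroup.eq_of_le_of_card_le hNM (by rw [hNcard, hk, heq])
      exact hxZ (hNle (this ▸ hxM))
  -- the finsets
  set S : Finset G := Finset.univ.filter
    (fun g => IsPiElement π g ∧ ¬ q ∣ (Subgroup.centralizer {g}).index) with hS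
  set T : Finset G := Finset.univ.filter
    (fun g => IsPiElement π g ∧ (Q : Subgroup G) ≤ Subgroup.centralizer {g}) with hT
  set ν : G → ℕ := fun g =>
    (Finset.univ.filter (fun P : Sylow q G => ↑P ≤ Subgroup.centralizer ({g} : Set G))).card
    with hν
  have hcard_S : Nat.card {g : G // IsPiElement π g ∧
      ¬ q ∣ (Subgroup.centralizer {g}).index} = S.card := by
    rw [Nat.card_eq_fintype_card, Fintype.card_subtype]
  -- centralizers containing a Sylow subgroup have q'-index
  have hPcent : ∀ (P : Sylow q G) (g : G),
      (↑P ≤ Subgroup.centralizer ({g} : Set G)) →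
      ¬ q ∣ (Subgroup.centralizer ({g} : Set G)).index := by
    intro P g hle hdvd
    exact P.not_dvd_index (hdvd.trans (Subgroup.index_dvd_of_le hle))
  -- 1 ∈ S
  have hSone : 1 ∈ S := by
    rw [hS, Finset.mem_filter]
    refine ⟨Finset.mem_univ _, fun p hp hdvd => absurd (Nat.dvd_one.mp
      (by rwa [orderOf_one] at hdvd)) hp.ne_one, ?_⟩
    have hcent : Subgroup.centralizer ({(1 : G)} : Set G) = ⊤ := by
      rw [eq_top_iff]
      intro u _
      rw [Subgroup.mem_centralizer_singleton_iff, one_mul, mul_one]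
    rw [hcent, Subgroup.index_top, Nat.dvd_one]
    exact hq.ne_one
  -- T is stable under right multiplication by M
  have hTstab : ∀ g ∈ T, ∀ m ∈ M, g * m ∈ T := by
    intro g hg m hm
    rw [hT, Finset.mem_filter] at hg
    obtain ⟨-, hgpi, hgc⟩ := hg
    have hMg : M ≤ Subgroup.centralizer ({g} : Set G) := by
      rw [hM, sup_le_iff]
      exact ⟨fun n hn => Subgroup.mem_centralizer_singleton_iff.mpr (hNcomm n hn g),
        Subgroup.zpowers_le.mpr (hgc hxQ)⟩
    have hgm : Commute g m := (Subgroup.mem_centralizer_singleton_iff.mp (hMg hm)).symm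
    rw [hT, Finset.mem_filter]
    refine ⟨Finset.mem_univ _, myIsPiElement_mul hq hqπ hgpi hgm (hMord m hm), ?_⟩
    intro u hu
    have h2 : u * g = g * u := Subgroup.mem_centralizer_singleton_iff.mp (hgc hu)
    have h3 : m * u = u * m := hMcomm m hm u hu
    rw [Subgroup.mem_centralizer_singleton_iff]
    calc u * (g * m) = (u * g) * m := (mul_assoc _ _ _).symm
      _ = (g * u) * m := by rw [h2]
      _ = g * (u * m) := mul_assoc _ _ _
      _ = g * (m * u) := by rw [← h3]
      _ = (g * m) * u := (mul_assoc _ _ _).symm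
  -- S is stable under right multiplication by N
  have hSstab : ∀ g ∈ S, ∀ n ∈ N, g * n ∈ S := by
    intro g hg n hn
    rw [hS, Finset.mem_filter] at hg ⊢
    obtain ⟨-, hgpi, hgind⟩ := hg
    have hgn : Commute g n := (hNcomm n hn g).symm
    refine ⟨Finset.mem_univ _, myIsPiElement_mul hq hqπ hgpi hgn (hNord n hn), ?_⟩
    rw [myCentralizer_mul (hNcomm n hn)]
    exact hgind
  -- ν is invariant under right multiplication by N
  have hνinv : ∀ g : G, ∀ n ∈ N, ν (g * n) = ν g := by
    intro g n hn
    simp only [hν, myCentralizer_mul (hNcomm n hn)]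
  -- ν ≡ 1 mod q on S
  have hνmod : ∀ g ∈ S, ν g ≡ 1 [MOD q] := by
    intro g hg
    have hgind : ¬ q ∣ (Subgroup.centralizer ({g} : Set G)).index :=
      (Finset.mem_filter.mp (hS ▸ hg)).2.2
    have hνeq : ν g = Nat.card (Sylow q (Subgroup.centralizer ({g} : Set G))) := by
      rw [← mySylow_count _ hgind, Nat.card_eq_fintype_card, Fintype.card_subtype]
    rw [hνeq]
    exact card_sylow_modEq_one q _
  have hνpos : ∀ g ∈ S, 1 ≤ ν g := by
    intro g hg
    by_contra hlt
    have h0 : ν g = 0 := by omega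
    have hmod := hνmod g hg
    rw [h0] at hmod
    have : q ∣ 1 := (Nat.modEq_iff_dvd' (Nat.zero_le 1)).mp hmod
    exact hq.ne_one (Nat.dvd_one.mp this)
  -- each Sylow subgroup sees |T| elements of S
  have hTP : ∀ P : Sylow q G,
      (S.filter fun g => ↑P ≤ Subgroup.centralizer ({g} : Set G)).card = T.card := by
    intro P
    have hfilter : S.filter (fun g => ↑P ≤ Subgroup.centralizer ({g} : Set G)) =
        Finset.univ.filter
          (fun g => IsPiElement π g ∧ ↑P ≤ Subgroup.centralizer ({g} : Set G)) := by
      ext g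
      simp only [hS, Finset.filter_filter, Finset.mem_filter, Finset.mem_univ, true_and]
      constructor
      · rintro ⟨⟨h1, _⟩, h3⟩; exact ⟨h1, h3⟩
      · rintro ⟨h1, h3⟩; exact ⟨⟨h1, hPcent P g h3⟩, h3⟩
    rw [hfilter]
    obtain ⟨c, hc⟩ := MulAction.exists_smul_eq G Q P
    have hmemP : ∀ u : G, u ∈ (P : Subgroup G) ↔
        ∃ v ∈ (Q : Subgroup G), c * v * c⁻¹ = u := by
      intro u
      rw [← hc]
      simp only [Sylow.coe_subgroup_smul, Subgroup.mem_smul_pointwise_iff_exists,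
        MulAut.smul_def, MulAut.conj_apply]
    refine (Finset.card_bij (fun g _ => c * g * c⁻¹) ?_ ?_ ?_).symm
    · intro g hg
      rw [hT, Finset.mem_filter] at hg
      rw [Finset.mem_filter]
      refine ⟨Finset.mem_univ _, myIsPiElement_conj c hg.2.1, ?_⟩
      intro u hu
      obtain ⟨v, hv, rfl⟩ := (hmemP u).mp hu
      rw [Subgroup.mem_centralizer_singleton_iff, myConj_mul, myConj_mul,
        Subgroup.mem_centralizer_singleton_iff.mp (hg.2.2 hv)]
    · intro g1 h1 g2 h2 heq
      exact mul_left_cancel (mul_right_cancel heq)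
    · intro g' hg'
      rw [Finset.mem_filter] at hg'
      refine ⟨c⁻¹ * g' * c, ?_, by group⟩
      rw [hT, Finset.mem_filter]
      refine ⟨Finset.mem_univ _, ?_, ?_⟩
      · have := myIsPiElement_conj c⁻¹ hg'.2.1
        rwa [inv_inv] at this
      · intro v hv
        have hu : c * v * c⁻¹ ∈ (P : Subgroup G) := (hmemP _).mpr ⟨v, hv, rfl⟩
        have hcomm := Subgroup.mem_centralizer_singleton_iff.mp (hg'.2.2 hu)
        rw [Subgroup.mem_centralizer_singleton_iff]
        have := congrArg (fun w => c⁻¹ * w * c) hcomm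
        simpa [mul_assoc] using this
  -- double counting
  have hswap : ∑ g ∈ S, ν g = (Fintype.card (Sylow q G)) * T.card := by
    calc ∑ g ∈ S, ν g
        = ∑ g ∈ S, ∑ P : Sylow q G,
            if (↑P ≤ Subgroup.centralizer ({g} : Set G)) then 1 else 0 := by
          refine Finset.sum_congr rfl (fun g _ => ?_)
          simp only [hν]
          rw [Finset.card_filter]
      _ = ∑ P : Sylow q G, ∑ g ∈ S,
            if (↑P ≤ Subgroup.centralizer ({g} : Set G)) then 1 else 0 := Finset.sum_comm
      _ = ∑ P : Sylow q G,
            (S.filter fun g => ↑P ≤ Subgroup.centralizer ({g} : Set G)).card := by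
          exact Finset.sum_congr rfl fun P _ => (Finset.card_filter _ _).symm
      _ = ∑ _P : Sylow q G, T.card := Finset.sum_congr rfl (fun P _ => hTP P)
      _ = (Fintype.card (Sylow q G)) * T.card := by
          rw [Finset.sum_const, smul_eq_mul, Finset.card_univ]
  -- q^(a+1) divides |T|
  have hTdvd : q ^ (a + 1) ∣ T.card := by
    have h1 := myCoset_sum M (fun _ => 1) 1 (fun _ _ _ => rfl) T hTstab (fun _ _ => dvd_rfl)
    rw [Finset.sum_const, smul_eq_mul, mul_one, mul_one] at h1
    exact hMcard.trans h1
  have hsum1 : q ^ (a + 1) ∣ ∑ g ∈ S, (ν g - 1) := by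
    have h2 := myCoset_sum N (fun g => ν g - 1) q
      (fun g m hm => by show ν (g * m) - 1 = ν g - 1; rw [hνinv g m hm]) S hSstab
      (fun g hg => (Nat.modEq_iff_dvd' (hνpos g hg)).mp (hνmod g hg).symm)
    rwa [hNcard, ← pow_succ] at h2
  have hYdvd : q ^ (a + 1) ∣ ∑ g ∈ S, ν g := by
    rw [hswap]
    exact Dvd.dvd.mul_left hTdvd _
  have hdecomp : ∑ g ∈ S, ν g = S.card + ∑ g ∈ S, (ν g - 1) := by
    calc ∑ g ∈ S, ν g = ∑ g ∈ S, (1 + (ν g - 1)) :=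
          Finset.sum_congr rfl (fun g hg => by have := hνpos g hg; omega)
      _ = S.card + ∑ g ∈ S, (ν g - 1) := by
          rw [Finset.sum_add_distrib, Finset.sum_const, smul_eq_mul, mul_one]
  have hSdvd : q ^ (a + 1) ∣ S.card := by
    have h3 := Nat.dvd_sub hYdvd hsum1
    rwa [hdecomp, Nat.add_sub_cancel] at h3
  have hSne : S.card ≠ 0 := Finset.card_ne_zero_of_mem hSone
  rw [hcard_S] at h
  have hle := (Nat.Prime.pow_dvd_iff_le_factorization hq hSne).mp hSdvd
  rw [h] at hle
  omega
end
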